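/- arXiv:1308.4437 — 2 statements merged into one kernel-verified Lean document; each statement's English description precedes it below -/
import Mathlib

section
/- For every integer k ≥ 2, every n ∈ ℕ^ℕ, and every ε > 0, there are infinitely many r ∈ ℕ such that the Hausdorff distance between F_{n,r} and the nested intersection ⋂_{s≥0} A_{n,s} (which equals Φ^{-1}(n)) is less than ε. -/
open Filter Topology
open scoped Classical

namespace BetaDF

/-- Digit sequences (elements of `Σ = {0,…,k−1}^ℕ` when all entries are `< k`). -/
abbrev Seq : Type := ℕ → ℕ

/-- Lexicographic (strict) order on digit sequences. -/
def seqLt (v w : Seq) : Prop := ∃ r, (∀ s, s < r → v s = w s) ∧ v r < w r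

/-- Lexicographic order on digit sequences. -/
def seqLe (v w : Seq) : Prop := seqLt v w ∨ v = w

/-- The shift map `σ`. -/
def shift (w : Seq) : Seq := fun r => w (r + 1)

/-- Membership in `Σ = {0,…,k−1}^ℕ`. -/
def InSigma (k : ℕ) (w : Seq) : Prop := ∀ r, w r < k

/-- A sequence is maximal if it is `≥` every element of its shift orbit. -/
def IsMaximal (w : Seq) : Prop := ∀ r, seqLe (shift^[r] w) w

/-- Number of occurrences of the digit `i` among the first `r` entries of `w`. -/
def digitCount (w : Seq) (i r : ℕ) : ℕ := ((Finset.range r).filter fun s => w s = i).card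

/-- The ambient Euclidean space `ℝ^k`. -/
abbrev E (k : ℕ) : Type := EuclideanSpace ℝ (Fin k)

/-- The `i`-th coordinate (with junk value `0` for `i ≥ k`). -/
def proj {k : ℕ} (α : E k) (i : ℕ) : ℝ := if h : i < k then α ⟨i, h⟩ else 0

/-- `w` has digit frequency vector `α`. -/
def HasDigitFreq (k : ℕ) (w : Seq) (α : E k) : Prop :=
  ∀ i, i < k →
    Tendsto (fun r => (digitCount w i r : ℝ) / (r : ℝ)) atTop (𝓝 (proj α i))

/-- The standard `(k−1)`-simplex `Δ`. -/
def simplex (k : ℕ) : Set (E k) := {α | (∀ i : Fin k, 0 ≤ α i) ∧ ∑ i, α i = 1}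

/-- The face `F = {α ∈ Δ : α_{k−1} = 0}`. -/
def faceF (k : ℕ) : Set (E k) := {α ∈ simplex k | proj α (k - 1) = 0}

/-- `Δ' = Δ ∖ F`. -/
def simplex' (k : ℕ) : Set (E k) := simplex k \ faceF k

/-- `J(α) = ⌊α₀/α_{k−1}⌋`. -/
noncomputable def Jfun {k : ℕ} (α : E k) : ℕ := ⌊proj α 0 / proj α (k - 1)⌋₊

/-- The map `K_n`. -/
noncomputable def Kmap {k : ℕ} (n : ℕ) (α : E k) : E k :=
  (WithLp.equiv 2 (Fin k → ℝ)).symm fun i =>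
    if (i : ℕ) + 2 < k then proj α ((i : ℕ) + 1) / (1 - proj α 0)
    else if (i : ℕ) + 2 = k then (proj α 0 - n * proj α (k - 1)) / (1 - proj α 0)
    else ((n + 1) * proj α (k - 1) - proj α 0) / (1 - proj α 0)

/-- The continued-fraction map `K : Δ' → Δ'`, `K(α) = K_{J(α)}(α)`. -/
noncomputable def Kstep {k : ℕ} (α : E k) : E k := Kmap (Jfun α) α

/-- The itinerary map `Φ(α)_r = J(K^r(α))`. -/
noncomputable def Phi {k : ℕ} (α : E k) : ℕ → ℕ := fun r => Jfun (Kstep^[r] α)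

/-- The projective embedding `K_n^{-1} : Δ → Δ`. -/
noncomputable def Kinv {k : ℕ} (n : ℕ) (α : E k) : E k :=
  (WithLp.equiv 2 (Fin k → ℝ)).symm fun i =>
    (if (i : ℕ) = 0 then (n + 1) * proj α (k - 2) + n * proj α (k - 1)
      else if (i : ℕ) + 1 = k then proj α (k - 2) + proj α (k - 1)
      else proj α ((i : ℕ) - 1)) /
      ((n + 1) * proj α (k - 2) + n * proj α (k - 1) + 1)

/-- `Υ_{n,r} = K_{n₀}^{-1} ∘ ⋯ ∘ K_{n_r}^{-1}`. -/
noncomputable def Ups {k : ℕ} (n : ℕ → ℕ) : ℕ → E k → E k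
  | 0 => Kinv (n 0)
  | r + 1 => fun α => Ups n r (Kinv (n (r + 1)) α)

/-- `A_{n,r} = Υ_{n,r}(Δ)`. -/
noncomputable def Anr (k : ℕ) (n : ℕ → ℕ) (r : ℕ) : Set (E k) := Ups n r '' simplex k

/-- `F_{n,r} = Υ_{n,r}(F)`. -/
noncomputable def Fnr (k : ℕ) (n : ℕ → ℕ) (r : ℕ) : Set (E k) := Ups n r '' faceF k

/-- Reverse-lexicographic strict order on `ℕ^ℕ`: `a < b` iff `a` exceeds `b`
at the first index where they differ. -/
def revLexLt (a b : ℕ → ℕ) : Prop := ∃ r, (∀ s, s < r → a s = b s) ∧ b r < a r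

/-- The word to which the substitution `Λ_n` sends the digit `i`. -/
def lamWord (k n i : ℕ) : List ℕ :=
  if i + 2 < k then [i + 1]
  else if i + 2 = k then (k - 1) :: List.replicate (n + 1) 0
  else (k - 1) :: List.replicate n 0

/-- The substitution `Λ_n : Σ → Σ`. -/
def lamSub (k n : ℕ) (w : Seq) : Seq := fun m =>
  (((List.range (m + 1)).map fun r => lamWord k n (w r)).flatten).getD m 0

/-- `Λ_{n,r} = Λ_{n₀} ∘ ⋯ ∘ Λ_{n_r}`. -/
def lamChain (k : ℕ) (n : ℕ → ℕ) : ℕ → Seq → Seq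
  | 0 => lamSub k (n 0)
  | r + 1 => fun w => lamChain k n r (lamSub k (n (r + 1)) w)

/-- `Λ_{n₀} ∘ ⋯ ∘ Λ_{n_{R−1}}` for a finite list of indices. -/
def lamList (k : ℕ) : List ℕ → Seq → Seq
  | [], w => w
  | a :: t, w => lamSub k a (lamList k t w)

/-- The constant sequence `(k−1)(k−1)(k−1)…`. -/
def topSeq (k : ℕ) : Seq := fun _ => k - 1

/-- The sequence `(k−1)000…`. -/
def baseSeq (k : ℕ) : Seq := fun m => if m = 0 then k - 1 else 0

/-- `S(n) = lim_{r→∞} Λ_{n,r}((k−1)(k−1)(k−1)…)` (limit in the product topology). -/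
noncomputable def Sseq (k : ℕ) (n : ℕ → ℕ) : Seq :=
  limUnder atTop fun r => lamChain k n r (topSeq k)

/-- The compactified itinerary space `N`: sequences with values in `ℕ∞` such that
all entries from the first `∞` onwards equal `∞`.  Elements with no `∞` entry
correspond to `ℕ^ℕ`; the others are the finite type elements `n₀…n_{R−1}∞`. -/
def NN : Type := {m : ℕ → ℕ∞ // ∀ r, m r = ⊤ → m (r + 1) = ⊤}

/-- Reverse-lexicographic strict order on `N` (`∞` counts as larger than every natural). -/
def nnLt (m n : NN) : Prop := ∃ r, (∀ s, s < r → m.1 s = n.1 s) ∧ n.1 r < m.1 r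

/-- Reverse-lexicographic order on `N`. -/
def nnLe (m n : NN) : Prop := nnLt m n ∨ m = n

/-- The element of `N` determined by an element of `ℕ^ℕ`. -/
def toNN (g : ℕ → ℕ) : NN := ⟨fun r => (g r : ℕ∞), fun r h => absurd h (by simp)⟩

/-- The itinerary `n₀ … n_{R−1} (n_R + 1) 0 0 0 …` (of rational type). -/
def ratSeq (f : ℕ → ℕ) (R : ℕ) : ℕ → ℕ := fun r =>
  if r < R then f r else if r = R then f R + 1 else 0

/-- The finite type element `n₀ … n_{R−1} n_R ∞` of `N`. -/
def finNN (f : ℕ → ℕ) (R : ℕ) : NN :=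
  ⟨fun r => if r ≤ R then (f r : ℕ∞) else ⊤, by
    intro r h
    show (if r + 1 ≤ R then ((f (r + 1) : ℕ∞)) else ⊤) = ⊤
    have h' : (if r ≤ R then ((f r : ℕ∞)) else ⊤) = ⊤ := h
    by_cases h1 : r ≤ R
    · rw [if_pos h1] at h'
      exact absurd h' (by simp)
    · rw [if_neg (by omega : ¬ r + 1 ≤ R)]⟩

/-- The extension of `S` to `N`. -/
noncomputable def SN (k : ℕ) (m : NN) : Seq :=
  if h : ∃ R, m.1 R = ⊤ then
    lamList k ((List.range (Nat.find h)).map fun r => (m.1 r).toNat) (baseSeq k)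
  else Sseq k fun r => (m.1 r).toNat

/-- The metric `d(m,n) = 2^{−X(m,n)}` on `N`, where
`X(m,n) = r + min(m₀+⋯+m_r, n₀+⋯+n_r)` and `r` is the first index where `m,n` differ. -/
noncomputable def dN (m n : NN) : ℝ :=
  if h : m = n then 0
  else
    have hex : ∃ r, m.1 r ≠ n.1 r := by
      by_contra hc
      push_neg at hc
      exact h (Subtype.ext (funext hc))
    (2 : ℝ) ^ (-(((Nat.find hex : ℕ) : ℤ) +
      ((min (∑ s ∈ Finset.range (Nat.find hex + 1), m.1 s)
            (∑ s ∈ Finset.range (Nat.find hex + 1), n.1 s)).toNat : ℤ)))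

/-- The symbolic β-shift `X(w)`. -/
def Xset (k : ℕ) (w : Seq) : Set Seq :=
  {v | InSigma k v ∧ ∀ r, seqLe (shift^[r] v) w}

/-- The digit frequency set `DF(w)` of the symbolic β-shift `X(w)`. -/
def DFw (k : ℕ) (w : Seq) : Set (E k) :=
  {α | α ∈ simplex k ∧ ∃ v ∈ Xset k w, HasDigitFreq k v α}

/-- `DF(n) = DF(S(n))` for `n ∈ ℕ^ℕ`. -/
noncomputable def DFn (k : ℕ) (n : ℕ → ℕ) : Set (E k) := DFw k (Sseq k n)

/-- `DF(n) = DF(S(n))` for `n ∈ N`. -/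
noncomputable def DFN (k : ℕ) (m : NN) : Set (E k) := DFw k (SN k m)

/-- The infimax map `I = S ∘ Φ` on `Δ'`, extended by `I(α) = (k−1)000…` on `F`. -/
noncomputable def Ifun (k : ℕ) (α : E k) : Seq :=
  if α ∈ simplex' k then Sseq k (Phi α) else baseSeq k

/-- The simplex `T_m = {α ∈ Δ : (m+1)α_{k−1} ≤ α₀}`. -/
def Tset (k m : ℕ) : Set (E k) :=
  {α ∈ simplex k | ((m : ℝ) + 1) * proj α (k - 1) ≤ proj α 0}

/-- The standard basis vector `e_i`. -/
noncomputable def evec (k i : ℕ) : E k :=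
  (WithLp.equiv 2 (Fin k → ℝ)).symm fun j => if (j : ℕ) = i then 1 else 0

/-- The rational extreme points
`FE(n) = {Υ_{n,s}(e_{k−2}) : n_{s+t} ≠ 0 for some 1 ≤ t ≤ k−2}`. -/
noncomputable def FEset (k : ℕ) (n : ℕ → ℕ) : Set (E k) :=
  {α | ∃ s, (∃ t, 1 ≤ t ∧ t ≤ k - 2 ∧ n (s + t) ≠ 0) ∧ α = Ups n s (evec k (k - 2))}

/-- The set `E(n)` of non-trivial extreme points of `DF(n)`:
extreme points other than `e₀,…,e_{k−2}`. -/
noncomputable def Eset (k : ℕ) (n : ℕ → ℕ) : Set (E k) :=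
  Set.extremePoints ℝ (DFn k n) \ {α | ∃ i, i ≤ k - 2 ∧ α = evec k i}

/-- The fiber `Φ^{-1}(n) ⊆ Δ'`. -/
noncomputable def PhiFiber (k : ℕ) (n : ℕ → ℕ) : Set (E k) :=
  {α ∈ simplex' k | Phi α = n}

/-- `f_β(x) = βx mod 1`. -/
noncomputable def fbeta (β x : ℝ) : ℝ := Int.fract (β * x)

/-- The digit sequence of the greedy β-expansion of `x`: `d_β(x)_r = ⌊β f_β^r(x)⌋`. -/
noncomputable def dbeta (β : ℝ) (x : ℝ) : Seq := fun r => ⌊β * (fbeta β)^[r] x⌋₊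

/-- The digit frequency set `DF(β)` of β-expansions of points of `[0,1]`. -/
noncomputable def DFbeta (k : ℕ) (β : ℝ) : Set (E k) :=
  {α | α ∈ simplex k ∧ ∃ x ∈ Set.Icc (0 : ℝ) 1, HasDigitFreq k (dbeta β x) α}

/-- The sequence `w_β`: if `d_β(1) = d₁…d_{r−1}d_r000…` with `d_r > 0` then `w_β`
is the infinite repetition of `d₁…d_{r−1}(d_r − 1)`; otherwise `w_β = d_β(1)`. -/
noncomputable def wbeta (β : ℝ) : Seq :=
  if h : ∃ r, dbeta β 1 r ≠ 0 ∧ ∀ s, r < s → dbeta β 1 s = 0 then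
    fun m =>
      if m % (Nat.find h + 1) = Nat.find h then dbeta β 1 (Nat.find h) - 1
      else dbeta β 1 (m % (Nat.find h + 1))
  else dbeta β 1

/-- `DF` extended to `[k−1,k]` by `DF(k−1) = F` and `DF(k) = Δ`. -/
noncomputable def DFext (k : ℕ) (β : ℝ) : Set (E k) :=
  if β ≤ (k : ℝ) - 1 then faceF k
  else if (k : ℝ) ≤ β then simplex k
  else DFbeta k β

/-- The mode-locking interval `I_{n₀…n_R}` determined by the word `f 0, …, f R`. -/
noncomputable def Iint (k : ℕ) (f : ℕ → ℕ) (R : ℕ) : Set ℝ :=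
  {β | (k : ℝ) - 1 < β ∧ β < k ∧
    seqLe (Sseq k (ratSeq f R)) (wbeta β) ∧ seqLe (wbeta β) (SN k (finNN f R))}

/-- The frequency vector of the first `s` digits of `w`. -/
noncomputable def freqVec (k : ℕ) (w : Seq) (s : ℕ) : E k :=
  (WithLp.equiv 2 (Fin k → ℝ)).symm fun i => (digitCount w (i : ℕ) s : ℝ) / (s : ℝ)


/-! ### Auxiliary development for stmt0 -/

section Stmt0Aux

open Finset

/-- Embed an `ℕ`-indexed family of reals as a point of `E k`. -/
noncomputable def vec2E (k : ℕ) (f : ℕ → ℝ) : E k :=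
  (WithLp.equiv 2 (Fin k → ℝ)).symm fun i => f i

lemma proj_vec2E (k : ℕ) (f : ℕ → ℝ) (i : ℕ) (h : i < k) :
    proj (vec2E k f) i = f i := by
  simp only [proj, h, dif_pos]
  rfl

lemma vec2E_apply (k : ℕ) (f : ℕ → ℝ) (i : Fin k) : vec2E k f i = f i := rfl

lemma proj_eq_apply {k : ℕ} (α : E k) (i : Fin k) : proj α (i : ℕ) = α i := by
  simp [proj, i.isLt]

lemma proj_junk {k : ℕ} (α : E k) (i : ℕ) (h : ¬ i < k) : proj α i = 0 := by
  simp [proj, h]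

lemma vec2E_ext {k : ℕ} (f g : ℕ → ℝ) (h : ∀ i < k, f i = g i) :
    vec2E k f = vec2E k g := by
  apply PiLp.ext
  intro i
  simpa [vec2E_apply] using h i i.isLt

lemma vec2E_congr (k : ℕ) {f g : ℕ → ℝ} (h : ∀ i, f i = g i) :
    vec2E k f = vec2E k g := by
  have : f = g := funext h
  rw [this]

lemma eq_vec2E_proj {k : ℕ} (α : E k) : α = vec2E k (proj α) := by
  apply PiLp.ext
  intro i
  rw [vec2E_apply, proj_eq_apply]

/-- Sum of coordinates via `proj`. -/
lemma sum_proj_eq {k : ℕ} (α : E k) : ∑ i ∈ range k, proj α i = ∑ i : Fin k, α i := by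
  rw [← Fin.sum_univ_eq_sum_range (fun i => proj α i) k]
  exact Finset.sum_congr rfl fun i _ => proj_eq_apply α i

lemma mem_simplex_iff {k : ℕ} (α : E k) :
    α ∈ simplex k ↔ (∀ i < k, 0 ≤ proj α i) ∧ ∑ i ∈ range k, proj α i = 1 := by
  constructor
  · rintro ⟨h1, h2⟩
    refine ⟨fun i hi => ?_, by rw [sum_proj_eq]; exact h2⟩
    have := h1 ⟨i, hi⟩
    rwa [← proj_eq_apply α ⟨i, hi⟩] at this
  · rintro ⟨h1, h2⟩
    refine ⟨fun i => ?_, by rw [← sum_proj_eq]; exact h2⟩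
    have := h1 i i.isLt
    rwa [proj_eq_apply α i] at this

lemma proj_nonneg {k : ℕ} {α : E k} (hα : α ∈ simplex k) (i : ℕ) : 0 ≤ proj α i := by
  by_cases h : i < k
  · exact ((mem_simplex_iff α).1 hα).1 i h
  · rw [proj_junk α i h]

/-! #### Columns -/

/-- Identity columns. -/
def dcol : ℕ → ℕ → ℝ := fun j i => if i = j then 1 else 0

/-- One step of the column recursion (`k = K + 2`). -/
def cstep (K m : ℕ) (c : ℕ → ℕ → ℝ) : ℕ → ℕ → ℝ := fun j i =>
  if j < K then c (j + 1) i
  else if j = K then ((m : ℝ) + 1) * c 0 i + c (K + 1) i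
  else (m : ℝ) * c 0 i + c (K + 1) i

/-- Columns of the matrix `B_r = M_{n 0} ⋯ M_{n r}`. -/
def cols (K : ℕ) (n : ℕ → ℕ) : ℕ → ℕ → ℕ → ℝ
  | 0 => cstep K (n 0) dcol
  | (r + 1) => cstep K (n (r + 1)) (cols K n r)

/-- Column sums. -/
def csum (K : ℕ) (c : ℕ → ℕ → ℝ) (j : ℕ) : ℝ := ∑ i ∈ range (K + 2), c j i

lemma dcol_nonneg (j i : ℕ) : 0 ≤ dcol j i := by
  unfold dcol; split <;> norm_num

lemma cstep_nonneg (K m : ℕ) (c : ℕ → ℕ → ℝ) (hc : ∀ j i, 0 ≤ c j i) (j i : ℕ) :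
    0 ≤ cstep K m c j i := by
  unfold cstep
  split
  · exact hc _ _
  · split <;>
    exact add_nonneg (mul_nonneg (by positivity) (hc 0 i)) (hc (K + 1) i)

lemma cols_nonneg (K : ℕ) (n : ℕ → ℕ) (r j i : ℕ) : 0 ≤ cols K n r j i := by
  induction r generalizing j i with
  | zero => exact cstep_nonneg _ _ _ dcol_nonneg j i
  | succ r ih => exact cstep_nonneg _ _ _ ih j i

lemma csum_nonneg (K : ℕ) {c : ℕ → ℕ → ℝ} (hc : ∀ j i, 0 ≤ c j i) (j : ℕ) :
    0 ≤ csum K c j :=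
  Finset.sum_nonneg fun i _ => hc j i

lemma csum_dcol (K : ℕ) (j : ℕ) (hj : j < K + 2) : csum K dcol j = 1 := by
  unfold csum dcol
  rw [Finset.sum_ite_eq' (range (K + 2)) j (fun _ => (1:ℝ))]
  simp [hj]

lemma csum_cstep (K m : ℕ) (c : ℕ → ℕ → ℝ) (j : ℕ) :
    csum K (cstep K m c) j =
      if j < K then csum K c (j + 1)
      else if j = K then ((m : ℝ) + 1) * csum K c 0 + csum K c (K + 1)
      else (m : ℝ) * csum K c 0 + csum K c (K + 1) := by
  unfold csum cstep
  split
  · rfl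
  · split
    · rw [Finset.sum_add_distrib, ← Finset.mul_sum]
    · rw [Finset.sum_add_distrib, ← Finset.mul_sum]

lemma csum_cols_ge_one (K : ℕ) (n : ℕ → ℕ) (r j : ℕ) (hj : j < K + 2) :
    1 ≤ csum K (cols K n r) j := by
  induction r generalizing j hj with
  | zero =>
    show 1 ≤ csum K (cstep K (n 0) dcol) j
    rw [csum_cstep]
    split
    · rw [csum_dcol K _ (by omega)]
    · split
      · rw [csum_dcol K 0 (by omega), csum_dcol K (K+1) (by omega)]
        have : (0:ℝ) ≤ (n 0 : ℝ) := Nat.cast_nonneg _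
        nlinarith
      · rw [csum_dcol K 0 (by omega), csum_dcol K (K+1) (by omega)]
        have : (0:ℝ) ≤ (n 0 : ℝ) := Nat.cast_nonneg _
        nlinarith
  | succ r ih =>
    show 1 ≤ csum K (cstep K (n (r+1)) (cols K n r)) j
    rw [csum_cstep]
    have h0 : 1 ≤ csum K (cols K n r) 0 := ih 0 (by omega)
    have h1 : 1 ≤ csum K (cols K n r) (K + 1) := ih (K+1) (by omega)
    have hm : (0:ℝ) ≤ (n (r+1) : ℝ) := Nat.cast_nonneg _
    split
    · exact ih _ (by omega)
    · split <;> nlinarith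

lemma csum_cols_pos (K : ℕ) (n : ℕ → ℕ) (r j : ℕ) (hj : j < K + 2) :
    0 < csum K (cols K n r) j :=
  lt_of_lt_of_le one_pos (csum_cols_ge_one K n r j hj)

/-! #### Sum picking helpers -/

lemma sum_ind_mul (N a : ℕ) (ha : a < N) (c : ℕ → ℝ) :
    ∑ u ∈ range N, (if u = a then (1:ℝ) else 0) * c u = c a := by
  have : ∀ u ∈ range N, (if u = a then (1:ℝ) else 0) * c u
      = if u = a then c u else 0 := by
    intro u _; split <;> simp
  rw [Finset.sum_congr rfl this, Finset.sum_ite_eq' (range N) a c]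
  simp [ha]

lemma cstep_dcol (K m j u : ℕ) :
    cstep K m dcol j u =
      if j < K then (if u = j + 1 then (1:ℝ) else 0)
      else ((if j = K then ((m:ℝ) + 1) else (m:ℝ)) * (if u = 0 then (1:ℝ) else 0)
        + (if u = K + 1 then (1:ℝ) else 0)) := by
  unfold cstep dcol
  by_cases h1 : j < K
  · simp [h1]
  · by_cases h2 : j = K <;> simp [h1, h2]

/-- `cstep` acts on any columns as the matrix whose columns are `cstep _ _ dcol`. -/
lemma cstep_funct (K m : ℕ) (c : ℕ → ℕ → ℝ) (j i : ℕ) :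
    cstep K m c j i = ∑ u ∈ range (K + 2), cstep K m dcol j u * c u i := by
  have expand : ∀ u ∈ range (K+2), cstep K m dcol j u * c u i
      = (if j < K then (if u = j + 1 then (1:ℝ) else 0) * c u i
        else ((if j = K then ((m:ℝ) + 1) else (m:ℝ)) * ((if u = 0 then (1:ℝ) else 0) * c u i)
          + (if u = K + 1 then (1:ℝ) else 0) * c u i)) := by
    intro u _
    rw [cstep_dcol]
    split <;> ring
  rw [Finset.sum_congr rfl expand]
  unfold cstep
  by_cases h1 : j < K
  · simp only [if_pos h1]
    rw [sum_ind_mul (K+2) (j+1) (by omega) (fun u => c u i)]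
  · simp only [if_neg h1]
    rw [Finset.sum_add_distrib, ← Finset.mul_sum,
      sum_ind_mul (K+2) 0 (by omega) (fun u => c u i),
      sum_ind_mul (K+2) (K+1) (by omega) (fun u => c u i)]
    by_cases h2 : j = K <;> simp [h2]

/-! #### Weights, numerators, denominators -/

/-- Push weights one step. -/
def pushW (K m : ℕ) (p : ℕ → ℝ) : ℕ → ℝ := fun u =>
  ∑ j ∈ range (K + 2), p j * cstep K m dcol j u

def numf (K : ℕ) (n : ℕ → ℕ) (p : ℕ → ℝ) (r i : ℕ) : ℝ :=
  ∑ j ∈ range (K + 2), p j * cols K n r j i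

def denf (K : ℕ) (n : ℕ → ℕ) (p : ℕ → ℝ) (r : ℕ) : ℝ :=
  ∑ j ∈ range (K + 2), p j * csum K (cols K n r) j

noncomputable def mixE (K : ℕ) (n : ℕ → ℕ) (p : ℕ → ℝ) (r : ℕ) : E (K + 2) :=
  vec2E (K + 2) fun i => (denf K n p r)⁻¹ * numf K n p r i

lemma pushW_nonneg (K m : ℕ) {p : ℕ → ℝ} (hp : ∀ j, 0 ≤ p j) (u : ℕ) :
    0 ≤ pushW K m p u :=
  Finset.sum_nonneg fun j _ => mul_nonneg (hp j) (cstep_nonneg K m dcol dcol_nonneg j u)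

lemma pushW_zero (K m : ℕ) (p : ℕ → ℝ) :
    pushW K m p 0 = ((m:ℝ) + 1) * p K + (m:ℝ) * p (K + 1) := by
  unfold pushW
  rw [Finset.sum_range_succ, Finset.sum_range_succ]
  have h1 : ∑ j ∈ range K, p j * cstep K m dcol j 0 = 0 := by
    apply Finset.sum_eq_zero
    intro j hj
    rw [Finset.mem_range] at hj
    rw [cstep_dcol, if_pos hj, if_neg (by omega), mul_zero]
  rw [h1, cstep_dcol, cstep_dcol, if_neg (by omega : ¬ K < K),
    if_neg (by omega : ¬ K + 1 < K), if_pos rfl, if_neg (by omega : ¬ K + 1 = K)]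
  simp only [if_neg (show ¬ (0:ℕ) = K + 1 by omega), if_pos (rfl : (0:ℕ) = 0), if_true]
  norm_num
  ring

lemma pushW_last (K m : ℕ) (p : ℕ → ℝ) :
    pushW K m p (K + 1) = p K + p (K + 1) := by
  unfold pushW
  rw [Finset.sum_range_succ, Finset.sum_range_succ]
  have h1 : ∑ j ∈ range K, p j * cstep K m dcol j (K+1) = 0 := by
    apply Finset.sum_eq_zero
    intro j hj
    rw [Finset.mem_range] at hj
    rw [cstep_dcol, if_pos hj, if_neg (by omega), mul_zero]
  rw [h1, cstep_dcol, cstep_dcol, if_neg (by omega : ¬ K < K),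
    if_neg (by omega : ¬ K + 1 < K), if_pos rfl, if_neg (by omega : ¬ K + 1 = K)]
  simp only [if_neg (show ¬ K + 1 = 0 by omega), if_pos (rfl : K + 1 = K + 1), if_true]
  norm_num

lemma pushW_mid (K m : ℕ) (p : ℕ → ℝ) (u : ℕ) (h1 : 1 ≤ u) (h2 : u ≤ K) :
    pushW K m p u = p (u - 1) := by
  unfold pushW
  rw [Finset.sum_range_succ, Finset.sum_range_succ]
  have e1 : cstep K m dcol K u = 0 := by
    rw [cstep_dcol, if_neg (by omega : ¬ K < K), if_pos rfl,
      if_neg (by omega : ¬ u = 0), if_neg (by omega : ¬ u = K + 1)]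
    ring
  have e2 : cstep K m dcol (K+1) u = 0 := by
    rw [cstep_dcol, if_neg (by omega : ¬ K + 1 < K), if_neg (by omega : ¬ K + 1 = K),
      if_neg (by omega : ¬ u = 0), if_neg (by omega : ¬ u = K + 1)]
    ring
  rw [e1, e2, mul_zero, mul_zero, add_zero, add_zero]
  rw [Finset.sum_eq_single_of_mem (u - 1) (Finset.mem_range.2 (by omega))]
  · rw [cstep_dcol, if_pos (by omega : u - 1 < K), if_pos (by omega), mul_one]
  · intro j hj hne
    rw [Finset.mem_range] at hj
    rw [cstep_dcol, if_pos hj, if_neg (by omega), mul_zero]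

lemma pushW_junk (K m : ℕ) (p : ℕ → ℝ) (u : ℕ) (h : K + 2 ≤ u) :
    pushW K m p u = 0 := by
  unfold pushW
  apply Finset.sum_eq_zero
  intro j hj
  rw [Finset.mem_range] at hj
  rw [cstep_dcol]
  by_cases h1 : j < K
  · rw [if_pos h1, if_neg (by omega), mul_zero]
  · rw [if_neg h1, if_neg (by omega : ¬ u = 0), if_neg (by omega : ¬ u = K + 1)]
    ring

/-- Sum of pushed weights. -/
lemma sum_pushW (K m : ℕ) (p : ℕ → ℝ) :
    ∑ u ∈ range (K + 2), pushW K m p u =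
      (∑ j ∈ range (K + 2), p j) + ((m:ℝ) + 1) * p K + (m:ℝ) * p (K + 1) := by
  unfold pushW
  rw [Finset.sum_comm]
  have : ∀ j ∈ range (K+2), ∑ u ∈ range (K+2), p j * cstep K m dcol j u
      = p j * csum K (cstep K m dcol) j := by
    intro j _
    rw [← Finset.mul_sum]; rfl
  rw [Finset.sum_congr rfl this, Finset.sum_range_succ, Finset.sum_range_succ]
  have hc : ∀ j ∈ range K, p j * csum K (cstep K m dcol) j = p j := by
    intro j hj
    rw [Finset.mem_range] at hj
    rw [csum_cstep, if_pos hj, csum_dcol K (j+1) (by omega), mul_one]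
  rw [Finset.sum_congr rfl hc, csum_cstep, csum_cstep,
    if_neg (by omega : ¬ K < K), if_pos rfl,
    if_neg (by omega : ¬ K + 1 < K), if_neg (by omega : ¬ K + 1 = K),
    csum_dcol K 0 (by omega), csum_dcol K (K+1) (by omega)]
  rw [Finset.sum_range_succ, Finset.sum_range_succ]
  ring

/-! #### Step and representation lemmas -/

lemma num_step (K : ℕ) (n : ℕ → ℕ) (p : ℕ → ℝ) (r i : ℕ) :
    numf K n p (r + 1) i = numf K n (pushW K (n (r + 1)) p) r i := by
  unfold numf
  have : ∀ j ∈ range (K+2), p j * cols K n (r+1) j i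
      = ∑ u ∈ range (K+2), p j * cstep K (n (r+1)) dcol j u * cols K n r u i := by
    intro j _
    show p j * cstep K (n (r+1)) (cols K n r) j i = _
    rw [cstep_funct, Finset.mul_sum]
    exact Finset.sum_congr rfl fun u _ => by ring
  rw [Finset.sum_congr rfl this, Finset.sum_comm]
  apply Finset.sum_congr rfl
  intro u _
  unfold pushW
  rw [Finset.sum_mul]

lemma den_eq_sum_num (K : ℕ) (n : ℕ → ℕ) (p : ℕ → ℝ) (r : ℕ) :
    denf K n p r = ∑ i ∈ range (K + 2), numf K n p r i := by
  unfold denf numf csum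
  rw [Finset.sum_comm]
  exact Finset.sum_congr rfl fun j _ => by rw [Finset.mul_sum]

lemma den_step (K : ℕ) (n : ℕ → ℕ) (p : ℕ → ℝ) (r : ℕ) :
    denf K n p (r + 1) = denf K n (pushW K (n (r + 1)) p) r := by
  rw [den_eq_sum_num, den_eq_sum_num]
  exact Finset.sum_congr rfl fun i _ => num_step K n p r i

lemma mixE_step (K : ℕ) (n : ℕ → ℕ) (p : ℕ → ℝ) (r : ℕ) :
    mixE K n p (r + 1) = mixE K n (pushW K (n (r + 1)) p) r := by
  unfold mixE
  apply vec2E_congr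
  intro i
  rw [num_step, den_step]

lemma mixE_congr (K : ℕ) (n : ℕ → ℕ) {p q : ℕ → ℝ} (r : ℕ)
    (h : ∀ j < K + 2, p j = q j) : mixE K n p r = mixE K n q r := by
  have hn : ∀ i, numf K n p r i = numf K n q r i := by
    intro i
    exact Finset.sum_congr rfl fun j hj => by rw [h j (Finset.mem_range.1 hj)]
  have hd : denf K n p r = denf K n q r :=
    Finset.sum_congr rfl fun j hj => by rw [h j (Finset.mem_range.1 hj)]
  unfold mixE
  apply vec2E_congr
  intro i
  rw [hn, hd]

lemma mixE_smul (K : ℕ) (n : ℕ → ℕ) (p : ℕ → ℝ) (r : ℕ) {c : ℝ} (hc : c ≠ 0) :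
    mixE K n (fun j => c * p j) r = mixE K n p r := by
  have hn : ∀ i, numf K n (fun j => c * p j) r i = c * numf K n p r i := by
    intro i
    unfold numf
    rw [Finset.mul_sum]
    exact Finset.sum_congr rfl fun j _ => by ring
  have hd : denf K n (fun j => c * p j) r = c * denf K n p r := by
    unfold denf
    rw [Finset.mul_sum]
    exact Finset.sum_congr rfl fun j _ => by ring
  unfold mixE
  apply vec2E_congr
  intro i
  rw [hn, hd, mul_inv]
  rw [show c⁻¹ * (denf K n p r)⁻¹ * (c * numf K n p r i)
      = (c⁻¹ * c) * ((denf K n p r)⁻¹ * numf K n p r i) by ring,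
    inv_mul_cancel₀ hc, one_mul]

/-! #### `Kinv` in terms of `pushW` -/

lemma kinv_eq (K : ℕ) (m : ℕ) (α : E (K + 2)) :
    Kinv m α = vec2E (K + 2) fun i =>
      (((m:ℝ) + 1) * proj α K + (m:ℝ) * proj α (K + 1) + 1)⁻¹
        * pushW K m (fun j => proj α j) i := by
  apply PiLp.ext
  intro i
  show (if (i : ℕ) = 0 then ((m:ℝ) + 1) * proj α (K + 2 - 2) + (m:ℝ) * proj α (K + 2 - 1)
      else if (i : ℕ) + 1 = K + 2 then proj α (K + 2 - 2) + proj α (K + 2 - 1)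
      else proj α ((i : ℕ) - 1)) /
      (((m:ℝ) + 1) * proj α (K + 2 - 2) + (m:ℝ) * proj α (K + 2 - 1) + 1) = _
  rw [vec2E_apply]
  have h2 : K + 2 - 2 = K := by omega
  have h1 : K + 2 - 1 = K + 1 := by omega
  rw [h2, h1]
  rw [div_eq_inv_mul]
  congr 1
  have hi : (i : ℕ) < K + 2 := i.isLt
  by_cases hi0 : (i : ℕ) = 0
  · rw [if_pos hi0, hi0, pushW_zero]
  · rw [if_neg hi0]
    by_cases hil : (i : ℕ) + 1 = K + 2
    · rw [if_pos hil]
      have : (i : ℕ) = K + 1 := by omega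
      rw [this, pushW_last]
    · rw [if_neg hil, pushW_mid K m _ (i : ℕ) (by omega) (by omega)]

lemma sum_pushW_proj (K : ℕ) (m : ℕ) (α : E (K + 2)) (hα : α ∈ simplex (K + 2)) :
    ∑ u ∈ range (K + 2), pushW K m (fun j => proj α j) u =
      ((m:ℝ) + 1) * proj α K + (m:ℝ) * proj α (K + 1) + 1 := by
  rw [sum_pushW, ((mem_simplex_iff α).1 hα).2]
  ring

lemma kinv_den_pos (K : ℕ) (m : ℕ) (α : E (K + 2)) (hα : α ∈ simplex (K + 2)) :
    0 < ((m:ℝ) + 1) * proj α K + (m:ℝ) * proj α (K + 1) + 1 := by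
  have h1 := proj_nonneg hα K
  have h2 := proj_nonneg hα (K + 1)
  have : (0:ℝ) ≤ (m:ℝ) := Nat.cast_nonneg _
  nlinarith

lemma kinv_mem (K : ℕ) (m : ℕ) (α : E (K + 2)) (hα : α ∈ simplex (K + 2)) :
    Kinv m α ∈ simplex (K + 2) := by
  rw [kinv_eq, mem_simplex_iff]
  set D := ((m:ℝ) + 1) * proj α K + (m:ℝ) * proj α (K + 1) + 1 with hD
  have hDpos := kinv_den_pos K m α hα
  constructor
  · intro i hi
    rw [proj_vec2E _ _ _ hi]
    exact mul_nonneg (inv_nonneg.2 hDpos.le)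
      (pushW_nonneg K m (fun j => proj_nonneg hα j) i)
  · have : ∀ i ∈ range (K+2), proj (vec2E (K+2) fun i => D⁻¹ * pushW K m (fun j => proj α j) i) i
        = D⁻¹ * pushW K m (fun j => proj α j) i := by
      intro i hi
      exact proj_vec2E _ _ _ (Finset.mem_range.1 hi)
    rw [Finset.sum_congr rfl this, ← Finset.mul_sum, sum_pushW_proj K m α hα, ← hD]
    exact inv_mul_cancel₀ hDpos.ne'

lemma proj_kinv (K : ℕ) (m : ℕ) (α : E (K + 2)) (i : ℕ) (hi : i < K + 2) :
    proj (Kinv m α) i =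
      (((m:ℝ) + 1) * proj α K + (m:ℝ) * proj α (K + 1) + 1)⁻¹
        * pushW K m (fun j => proj α j) i := by
  rw [kinv_eq, proj_vec2E _ _ _ hi]

/-- The key representation: `Ups n r` is given by the column mix. -/
lemma ups_rep (K : ℕ) (n : ℕ → ℕ) :
    ∀ (r : ℕ) (α : E (K + 2)), α ∈ simplex (K + 2) →
      Ups n r α = mixE K n (fun j => proj α j) r := by
  intro r
  induction r with
  | zero =>
    intro α hα
    show Kinv (n 0) α = _
    rw [kinv_eq]
    unfold mixE
    apply vec2E_congr
    intro i
    have hnum : numf K n (fun j => proj α j) 0 i = pushW K (n 0) (fun j => proj α j) i := rfl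
    have hden : denf K n (fun j => proj α j) 0
        = ((n 0 : ℝ) + 1) * proj α K + (n 0 : ℝ) * proj α (K + 1) + 1 := by
      rw [den_eq_sum_num, ← sum_pushW_proj K (n 0) α hα]
      rfl
    rw [hnum, hden]
  | succ r ih =>
    intro α hα
    show Ups n r (Kinv (n (r+1)) α) = _
    rw [ih (Kinv (n (r+1)) α) (kinv_mem K (n (r+1)) α hα)]
    set D := ((n (r+1) : ℝ) + 1) * proj α K + (n (r+1) : ℝ) * proj α (K + 1) + 1 with hD
    have hDpos := kinv_den_pos K (n (r+1)) α hα
    have step1 : mixE K n (fun j => proj (Kinv (n (r+1)) α) j) r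
        = mixE K n (fun j => D⁻¹ * pushW K (n (r+1)) (fun u => proj α u) j) r := by
      apply mixE_congr
      intro j hj
      exact proj_kinv K (n (r+1)) α j hj
    rw [step1, mixE_smul K n _ r (inv_ne_zero hDpos.ne'), mixE_step]


/-! #### Membership lemmas -/

lemma vec2E_sub (k : ℕ) (f g : ℕ → ℝ) :
    vec2E k f - vec2E k g = vec2E k (fun i => f i - g i) := rfl

lemma vec2E_smul (k : ℕ) (t : ℝ) (f : ℕ → ℝ) :
    t • vec2E k f = vec2E k (fun i => t * f i) := rfl

lemma dist_vec2E_eq (k : ℕ) (f g : ℕ → ℝ) :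
    dist (vec2E k f) (vec2E k g) = ‖vec2E k (fun i => f i - g i)‖ := by
  rw [dist_eq_norm, vec2E_sub]

lemma numf_nonneg (K : ℕ) (n : ℕ → ℕ) {p : ℕ → ℝ} (hp : ∀ j, 0 ≤ p j) (r i : ℕ) :
    0 ≤ numf K n p r i :=
  Finset.sum_nonneg fun j _ => mul_nonneg (hp j) (cols_nonneg K n r j i)

lemma denf_ge_sum (K : ℕ) (n : ℕ → ℕ) {p : ℕ → ℝ} (hp : ∀ j, 0 ≤ p j) (r : ℕ) :
    ∑ j ∈ range (K + 2), p j ≤ denf K n p r := by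
  unfold denf
  apply Finset.sum_le_sum
  intro j hj
  rw [Finset.mem_range] at hj
  calc p j = p j * 1 := (mul_one _).symm
  _ ≤ p j * csum K (cols K n r) j :=
      mul_le_mul_of_nonneg_left (csum_cols_ge_one K n r j hj) (hp j)

lemma denf_pos (K : ℕ) (n : ℕ → ℕ) {p : ℕ → ℝ} (hp : ∀ j, 0 ≤ p j)
    (hs : 0 < ∑ j ∈ range (K + 2), p j) (r : ℕ) : 0 < denf K n p r :=
  lt_of_lt_of_le hs (denf_ge_sum K n hp r)

lemma denf_ge_term (K : ℕ) (n : ℕ → ℕ) {p : ℕ → ℝ} (hp : ∀ j, 0 ≤ p j) (r : ℕ)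
    (j : ℕ) (hj : j < K + 2) :
    p j * csum K (cols K n r) j ≤ denf K n p r := by
  unfold denf
  apply Finset.single_le_sum (fun u _ => ?_) (Finset.mem_range.2 hj)
  exact mul_nonneg (hp u) (csum_nonneg K (cols_nonneg K n r) u)

lemma mixE_mem_simplex (K : ℕ) (n : ℕ → ℕ) {p : ℕ → ℝ} (hp : ∀ j, 0 ≤ p j)
    (hs : 0 < ∑ j ∈ range (K + 2), p j) (r : ℕ) :
    mixE K n p r ∈ simplex (K + 2) := by
  have hd := denf_pos K n hp hs r
  rw [mem_simplex_iff]
  constructor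
  · intro i hi
    rw [mixE, proj_vec2E _ _ _ hi]
    exact mul_nonneg (inv_nonneg.2 hd.le) (numf_nonneg K n hp r i)
  · have : ∀ i ∈ range (K + 2), proj (mixE K n p r) i = (denf K n p r)⁻¹ * numf K n p r i := by
      intro i hi
      rw [mixE, proj_vec2E _ _ _ (Finset.mem_range.1 hi)]
    rw [Finset.sum_congr rfl this, ← Finset.mul_sum, ← den_eq_sum_num]
    exact inv_mul_cancel₀ hd.ne'

lemma mixE_eq_ups (K : ℕ) (n : ℕ → ℕ) {p : ℕ → ℝ} (hp : ∀ j, 0 ≤ p j)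
    (hs : 0 < ∑ j ∈ range (K + 2), p j) (r : ℕ) :
    ∃ α ∈ simplex (K + 2), Ups n r α = mixE K n p r ∧
      (∀ j < K + 2, proj α j = (∑ u ∈ range (K + 2), p u)⁻¹ * p j) := by
  set S := ∑ u ∈ range (K + 2), p u with hS
  refine ⟨vec2E (K + 2) (fun j => S⁻¹ * p j), ?_, ?_, ?_⟩
  · rw [mem_simplex_iff]
    constructor
    · intro i hi
      rw [proj_vec2E _ _ _ hi]
      exact mul_nonneg (inv_nonneg.2 hs.le) (hp i)
    · have : ∀ i ∈ range (K + 2),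
          proj (vec2E (K + 2) fun j => S⁻¹ * p j) i = S⁻¹ * p i := by
        intro i hi
        exact proj_vec2E _ _ _ (Finset.mem_range.1 hi)
      rw [Finset.sum_congr rfl this, ← Finset.mul_sum, ← hS]
      exact inv_mul_cancel₀ hs.ne'
  · rw [ups_rep K n r _ (by
      rw [mem_simplex_iff]
      constructor
      · intro i hi
        rw [proj_vec2E _ _ _ hi]
        exact mul_nonneg (inv_nonneg.2 hs.le) (hp i)
      · have : ∀ i ∈ range (K + 2),
            proj (vec2E (K + 2) fun j => S⁻¹ * p j) i = S⁻¹ * p i := by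
          intro i hi
          exact proj_vec2E _ _ _ (Finset.mem_range.1 hi)
        rw [Finset.sum_congr rfl this, ← Finset.mul_sum, ← hS]
        exact inv_mul_cancel₀ hs.ne')]
    rw [mixE_congr K n r (fun j hj => proj_vec2E _ _ _ hj)]
    exact mixE_smul K n p r (inv_ne_zero hs.ne')
  · intro j hj
    exact proj_vec2E _ _ _ hj

lemma mixE_mem_Anr (K : ℕ) (n : ℕ → ℕ) {p : ℕ → ℝ} (hp : ∀ j, 0 ≤ p j)
    (hs : 0 < ∑ j ∈ range (K + 2), p j) (r : ℕ) :
    mixE K n p r ∈ Anr (K + 2) n r := by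
  obtain ⟨α, hα, he, -⟩ := mixE_eq_ups K n hp hs r
  exact ⟨α, hα, he⟩

lemma mixE_mem_Fnr (K : ℕ) (n : ℕ → ℕ) {p : ℕ → ℝ} (hp : ∀ j, 0 ≤ p j)
    (hs : 0 < ∑ j ∈ range (K + 2), p j) (hlast : p (K + 1) = 0) (r : ℕ) :
    mixE K n p r ∈ Fnr (K + 2) n r := by
  obtain ⟨α, hα, he, hco⟩ := mixE_eq_ups K n hp hs r
  refine ⟨α, ⟨hα, ?_⟩, he⟩
  have : K + 2 - 1 = K + 1 := by omega
  rw [this, hco (K + 1) (by omega), hlast, mul_zero]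

lemma anr_rep (K : ℕ) (n : ℕ → ℕ) (r : ℕ) {x : E (K + 2)} (hx : x ∈ Anr (K + 2) n r) :
    ∃ p : ℕ → ℝ, (∀ j, 0 ≤ p j) ∧ (∑ j ∈ range (K + 2), p j = 1) ∧ x = mixE K n p r := by
  obtain ⟨α, hα, he⟩ := hx
  exact ⟨fun j => proj α j, fun j => proj_nonneg hα j,
    ((mem_simplex_iff α).1 hα).2, by rw [← he, ups_rep K n r α hα]⟩

lemma anr_sub_simplex (K : ℕ) (n : ℕ → ℕ) (r : ℕ) :
    Anr (K + 2) n r ⊆ simplex (K + 2) := by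
  intro x hx
  obtain ⟨p, hp, hs, he⟩ := anr_rep K n r hx
  rw [he]
  exact mixE_mem_simplex K n hp (by rw [hs]; norm_num) r

/-! #### Vertices -/

noncomputable def Vv (K : ℕ) (n : ℕ → ℕ) (r j : ℕ) : E (K + 2) :=
  mixE K n (fun u => if u = j then 1 else 0) r

lemma ind_nonneg (j u : ℕ) : (0:ℝ) ≤ if u = j then 1 else 0 := by positivity

lemma sum_ind (N j : ℕ) (hj : j < N) :
    ∑ u ∈ range N, (if u = j then (1:ℝ) else 0) = 1 := by
  rw [Finset.sum_ite_eq' (range N) j (fun _ => (1:ℝ))]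
  simp [hj]

lemma numf_ind (K : ℕ) (n : ℕ → ℕ) (r i j : ℕ) (hj : j < K + 2) :
    numf K n (fun u => if u = j then 1 else 0) r i = cols K n r j i :=
  sum_ind_mul (K + 2) j hj (fun u => cols K n r u i)

lemma denf_ind (K : ℕ) (n : ℕ → ℕ) (r j : ℕ) (hj : j < K + 2) :
    denf K n (fun u => if u = j then 1 else 0) r = csum K (cols K n r) j :=
  sum_ind_mul (K + 2) j hj (fun u => csum K (cols K n r) u)

lemma Vv_eq (K : ℕ) (n : ℕ → ℕ) (r j : ℕ) (hj : j < K + 2) :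
    Vv K n r j = vec2E (K + 2)
      (fun i => (csum K (cols K n r) j)⁻¹ * cols K n r j i) := by
  unfold Vv mixE
  apply vec2E_congr
  intro i
  rw [numf_ind K n r i j hj, denf_ind K n r j hj]

lemma Vv_mem_simplex (K : ℕ) (n : ℕ → ℕ) (r j : ℕ) (hj : j < K + 2) :
    Vv K n r j ∈ simplex (K + 2) :=
  mixE_mem_simplex K n (ind_nonneg j) (by rw [sum_ind (K + 2) j hj]; norm_num) r

lemma Vv_mem_Anr (K : ℕ) (n : ℕ → ℕ) (r j : ℕ) (hj : j < K + 2) :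
    Vv K n r j ∈ Anr (K + 2) n r :=
  mixE_mem_Anr K n (ind_nonneg j) (by rw [sum_ind (K + 2) j hj]; norm_num) r

/-! #### Simplex diameter -/

lemma dist_le_sqrt_two {k : ℕ} {x y : E k} (hx : x ∈ simplex k) (hy : y ∈ simplex k) :
    dist x y ≤ Real.sqrt 2 := by
  rw [EuclideanSpace.dist_eq]
  apply Real.sqrt_le_sqrt
  have hx1 : ∀ i : Fin k, x i ≤ 1 := by
    intro i
    rw [← hx.2]
    exact Finset.single_le_sum (fun j _ => hx.1 j) (Finset.mem_univ i)
  have hy1 : ∀ i : Fin k, y i ≤ 1 := by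
    intro i
    rw [← hy.2]
    exact Finset.single_le_sum (fun j _ => hy.1 j) (Finset.mem_univ i)
  calc ∑ i, dist (x i) (y i) ^ 2 ≤ ∑ i, (x i + y i) := by
        apply Finset.sum_le_sum
        intro i _
        rw [Real.dist_eq, sq_abs]
        have := hx.1 i; have := hy.1 i; have := hx1 i; have := hy1 i
        nlinarith
  _ = 2 := by rw [Finset.sum_add_distrib, hx.2, hy.2]; norm_num


/-! #### The basic projection-to-face tool -/

lemma tool_U1 (K : ℕ) (n : ℕ → ℕ) (r : ℕ) {p : ℕ → ℝ} (hp : ∀ j, 0 ≤ p j)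
    (hs : 0 < ∑ j ∈ range (K + 2), p j) :
    ∃ y ∈ Fnr (K + 2) n r,
      dist (mixE K n p r) y =
        (p (K + 1) * csum K (cols K n r) (K + 1) / denf K n p r)
          * dist (Vv K n r K) (Vv K n r (K + 1)) := by
  set sK := csum K (cols K n r) K with hsK
  set sL := csum K (cols K n r) (K + 1) with hsL
  have hsK1 : 1 ≤ sK := csum_cols_ge_one K n r K (by omega)
  have hsL1 : 1 ≤ sL := csum_cols_ge_one K n r (K + 1) (by omega)
  have hden := denf_pos K n hp hs r
  set q : ℕ → ℝ := fun j => if j = K + 1 then 0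
    else if j = K then p K + p (K + 1) * sL / sK else p j with hq
  have hsK0 : (0:ℝ) < sK := lt_of_lt_of_le one_pos hsK1
  have hsL0 : (0:ℝ) < sL := lt_of_lt_of_le one_pos hsL1
  have hq0 : ∀ j, 0 ≤ q j := by
    intro j
    rw [hq]
    dsimp only
    split
    · norm_num
    split
    · exact add_nonneg (hp K)
        (div_nonneg (mul_nonneg (hp (K + 1)) hsL0.le) hsK0.le)
    · exact hp j
  have hqs : 0 < ∑ j ∈ range (K + 2), q j := by
    by_cases hpl : p (K + 1) = 0
    · have : ∀ j ∈ range (K + 2), p j ≤ q j := by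
        intro j _
        rw [hq]
        dsimp only
        split
        · rename_i h; rw [h, hpl]
        split
        · rename_i h h'
          rw [h']
          exact le_add_of_nonneg_right
            (div_nonneg (mul_nonneg (hp (K + 1)) hsL0.le) hsK0.le)
        · exact le_refl _
      calc 0 < ∑ j ∈ range (K+2), p j := hs
      _ ≤ ∑ j ∈ range (K+2), q j := Finset.sum_le_sum this
    · have hql : 0 < q K := by
        rw [hq]
        dsimp only
        rw [if_neg (by omega), if_pos rfl]
        have h1 := hp K
        have h2 := lt_of_le_of_ne (hp (K+1)) (Ne.symm hpl)
        have : 0 < p (K + 1) * sL / sK := by positivity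
        linarith
      calc (0:ℝ) < q K := hql
      _ ≤ ∑ j ∈ range (K+2), q j :=
          Finset.single_le_sum (fun j _ => hq0 j) (Finset.mem_range.2 (by omega))
  -- denominators agree
  have split_sum : ∀ w : ℕ → ℝ, ∑ j ∈ range (K + 2), w j
      = (∑ j ∈ range K, w j) + w K + w (K + 1) := by
    intro w
    rw [Finset.sum_range_succ, Finset.sum_range_succ]
  have hqp_front : ∀ j < K, q j = p j := by
    intro j hj
    rw [hq]
    dsimp only
    rw [if_neg (by omega), if_neg (by omega)]
  have hden_q : denf K n q r = denf K n p r := by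
    unfold denf
    rw [split_sum, split_sum (fun j => p j * csum K (cols K n r) j)]
    have e1 : ∑ j ∈ range K, q j * csum K (cols K n r) j
        = ∑ j ∈ range K, p j * csum K (cols K n r) j := by
      apply Finset.sum_congr rfl
      intro j hj
      rw [hqp_front j (Finset.mem_range.1 hj)]
    rw [e1]
    have eK : q K = p K + p (K + 1) * sL / sK := by
      rw [hq]; dsimp only; rw [if_neg (by omega), if_pos rfl]
    have eL : q (K + 1) = 0 := by rw [hq]; dsimp only; rw [if_pos rfl]
    rw [eK, eL, ← hsK, ← hsL]
    field_simp
    ring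
  have hnum_q : ∀ i, numf K n q r i
      = numf K n p r i - p (K + 1) * cols K n r (K + 1) i
        + p (K + 1) * sL / sK * cols K n r K i := by
    intro i
    unfold numf
    rw [split_sum, split_sum (fun j => p j * cols K n r j i)]
    have e1 : ∑ j ∈ range K, q j * cols K n r j i
        = ∑ j ∈ range K, p j * cols K n r j i := by
      apply Finset.sum_congr rfl
      intro j hj
      rw [hqp_front j (Finset.mem_range.1 hj)]
    have eK : q K = p K + p (K + 1) * sL / sK := by
      rw [hq]; dsimp only; rw [if_neg (by omega), if_pos rfl]
    have eL : q (K + 1) = 0 := by rw [hq]; dsimp only; rw [if_pos rfl]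
    rw [e1, eK, eL]
    ring
  refine ⟨mixE K n q r, mixE_mem_Fnr K n hq0 hqs (by rw [hq]; dsimp only; rw [if_pos rfl]) r, ?_⟩
  -- the distance identity
  set t := p (K + 1) * sL / denf K n p r with ht
  have key : mixE K n p r - mixE K n q r
      = t • (Vv K n r (K + 1) - Vv K n r K) := by
    rw [Vv_eq K n r K (by omega), Vv_eq K n r (K + 1) (by omega)]
    unfold mixE
    rw [vec2E_sub, vec2E_sub, vec2E_smul]
    apply vec2E_congr
    intro i
    rw [hnum_q i, hden_q, ht]
    have h1 : sK ≠ 0 := by positivity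
    have h2 : sL ≠ 0 := by positivity
    have h3 : denf K n p r ≠ 0 := hden.ne'
    rw [← hsK, ← hsL]
    field_simp
    ring
  have tnn : 0 ≤ t := by
    rw [ht]
    exact div_nonneg (mul_nonneg (hp (K + 1)) hsL0.le) hden.le
  rw [dist_eq_norm, key, norm_smul, Real.norm_eq_abs, abs_of_nonneg tnn,
    ← dist_eq_norm, dist_comm]

/-! #### Tools II and III : distance from points of `⋂ Anr` to `Fnr r` -/

lemma tool_II (K : ℕ) (n : ℕ → ℕ) (r : ℕ) {a : E (K + 2)}
    (ha : a ∈ Anr (K + 2) n r) :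
    ∃ y ∈ Fnr (K + 2) n r, dist a y ≤ dist (Vv K n r K) (Vv K n r (K + 1)) := by
  obtain ⟨p, hp, hs1, he⟩ := anr_rep K n r ha
  have hs : 0 < ∑ j ∈ range (K + 2), p j := by rw [hs1]; norm_num
  obtain ⟨y, hy, hd⟩ := tool_U1 K n r hp hs
  refine ⟨y, hy, ?_⟩
  rw [he, hd]
  have hden := denf_pos K n hp hs r
  have hterm := denf_ge_term K n hp r (K + 1) (by omega)
  have ht1 : p (K + 1) * csum K (cols K n r) (K + 1) / denf K n p r ≤ 1 := by
    rw [div_le_one hden]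
    exact hterm
  have ht0 : 0 ≤ p (K + 1) * csum K (cols K n r) (K + 1) / denf K n p r :=
    div_nonneg (mul_nonneg (hp (K + 1))
      (csum_nonneg K (cols_nonneg K n r) (K + 1))) hden.le
  exact mul_le_of_le_one_left dist_nonneg ht1

lemma tool_III (K : ℕ) (n : ℕ → ℕ) (r : ℕ) {a : E (K + 2)}
    (ha : a ∈ Anr (K + 2) n (r + 1)) :
    ∃ y ∈ Fnr (K + 2) n r,
      dist a y ≤ Real.sqrt 2 * (csum K (cols K n r) (K + 1)
        / ((n (r + 1) : ℝ) * csum K (cols K n r) 0 + csum K (cols K n r) (K + 1))) := by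
  obtain ⟨p, hp, hs1, he⟩ := anr_rep K n (r + 1) ha
  have hs : 0 < ∑ j ∈ range (K + 2), p j := by rw [hs1]; norm_num
  set m := n (r + 1) with hm
  set p' := pushW K m p with hp'
  have hp'0 : ∀ j, 0 ≤ p' j := pushW_nonneg K m hp
  have hs' : 0 < ∑ j ∈ range (K + 2), p' j := by
    rw [hp', sum_pushW, hs1]
    have := hp K; have := hp (K + 1)
    have : (0:ℝ) ≤ (m:ℝ) := Nat.cast_nonneg _
    nlinarith [hp K, hp (K+1)]
  obtain ⟨y, hy, hd⟩ := tool_U1 K n r hp'0 hs'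
  refine ⟨y, hy, ?_⟩
  set τ := csum K (cols K n r) 0 with hτ
  set σ := csum K (cols K n r) (K + 1) with hσ
  have hτ1 : 1 ≤ τ := csum_cols_ge_one K n r 0 (by omega)
  have hσ1 : 1 ≤ σ := csum_cols_ge_one K n r (K + 1) (by omega)
  have hmn : (0:ℝ) ≤ (m:ℝ) := Nat.cast_nonneg _
  have hB : 0 < (m:ℝ) * τ + σ := by nlinarith
  have hmix : a = mixE K n p' r := by rw [he, mixE_step]
  rw [hmix, hd]
  -- bound the factor
  have hpl' : p' (K + 1) = p K + p (K + 1) := by rw [hp', pushW_last]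
  have hden'_eq : denf K n p' r = denf K n p (r + 1) := (den_step K n p r).symm
  have hden' := denf_pos K n hp'0 hs' r
  have hW2 : dist (Vv K n r K) (Vv K n r (K + 1)) ≤ Real.sqrt 2 :=
    dist_le_sqrt_two (Vv_mem_simplex K n r K (by omega)) (Vv_mem_simplex K n r (K + 1) (by omega))
  have hfac : p' (K + 1) * σ / denf K n p' r ≤ σ / ((m:ℝ) * τ + σ) := by
    have hterm : (p K + p (K + 1)) * ((m:ℝ) * τ + σ) ≤ denf K n p' r := by
      rw [hden'_eq]
      have t1 : p K * csum K (cols K n (r+1)) K ≤ denf K n p (r + 1) + - (p (K+1) * csum K (cols K n (r+1)) (K+1)) := by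
        have hsum2 : p K * csum K (cols K n (r+1)) K + p (K+1) * csum K (cols K n (r+1)) (K+1)
            ≤ denf K n p (r + 1) := by
          unfold denf
          rw [Finset.sum_range_succ, Finset.sum_range_succ]
          have : 0 ≤ ∑ j ∈ range K, p j * csum K (cols K n (r+1)) j :=
            Finset.sum_nonneg fun j _ => mul_nonneg (hp j)
              (csum_nonneg K (cols_nonneg K n (r+1)) j)
          linarith
        linarith
      have hcK : csum K (cols K n (r + 1)) K = ((m:ℝ) + 1) * τ + σ := by
        show csum K (cstep K (n (r+1)) (cols K n r)) K = _
        rw [csum_cstep, if_neg (by omega : ¬ K < K), if_pos rfl, ← hm, ← hτ, ← hσ]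
      have hcL : csum K (cols K n (r + 1)) (K + 1) = (m:ℝ) * τ + σ := by
        show csum K (cstep K (n (r+1)) (cols K n r)) (K + 1) = _
        rw [csum_cstep, if_neg (by omega : ¬ K + 1 < K), if_neg (by omega : ¬ K + 1 = K),
          ← hm, ← hτ, ← hσ]
      have hsum2 : p K * (((m:ℝ) + 1) * τ + σ) + p (K+1) * ((m:ℝ) * τ + σ)
          ≤ denf K n p (r + 1) := by
        unfold denf
        rw [Finset.sum_range_succ, Finset.sum_range_succ, hcK, hcL]
        have : 0 ≤ ∑ j ∈ range K, p j * csum K (cols K n (r+1)) j :=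
          Finset.sum_nonneg fun j _ => mul_nonneg (hp j)
            (csum_nonneg K (cols_nonneg K n (r+1)) j)
        linarith
      nlinarith [hp K, hp (K + 1)]
    by_cases hA : p K + p (K + 1) = 0
    · rw [hpl', hA]
      have : (0:ℝ) ≤ σ / ((m:ℝ) * τ + σ) := by positivity
      simpa using this
    · have hApos : 0 < p K + p (K + 1) :=
        lt_of_le_of_ne (by have := hp K; have := hp (K+1); linarith) (Ne.symm hA)
      rw [hpl', div_le_div_iff₀ hden' hB]
      calc (p K + p (K + 1)) * σ * ((m:ℝ) * τ + σ)
          = σ * ((p K + p (K + 1)) * ((m:ℝ) * τ + σ)) := by ring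
        _ ≤ σ * denf K n p' r := by
            apply mul_le_mul_of_nonneg_left hterm (by linarith)
        _ = σ * denf K n p' r := rfl
  have hfac0 : 0 ≤ p' (K + 1) * σ / denf K n p' r :=
    div_nonneg (mul_nonneg (hp'0 (K + 1)) (by linarith)) hden'.le
  calc p' (K + 1) * σ / denf K n p' r * dist (Vv K n r K) (Vv K n r (K + 1))
      ≤ (σ / ((m:ℝ) * τ + σ)) * Real.sqrt 2 :=
        mul_le_mul hfac hW2 dist_nonneg (by positivity)
    _ = Real.sqrt 2 * (σ / ((m:ℝ) * τ + σ)) := by ring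


/-! #### Width recursion -/

lemma pushW_indK (K m : ℕ) (u : ℕ) (hu : u < K + 2) :
    pushW K m (fun v => if v = K then 1 else 0) u
      = ((m:ℝ) + 1) * (if u = 0 then 1 else 0) + 1 * (if u = K + 1 then 1 else 0) := by
  by_cases h0 : u = 0
  · rw [h0, pushW_zero, if_pos rfl, if_neg (by omega : ¬ K + 1 = K),
      if_pos rfl, if_neg (by omega : ¬ (0:ℕ) = K + 1)]
    ring
  · by_cases hl : u = K + 1
    · rw [hl, pushW_last]
      simp only [if_pos (rfl : K = K), if_neg (show ¬ K + 1 = K by omega),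
        if_neg (show ¬ K + 1 = 0 by omega), if_pos (rfl : K + 1 = K + 1)]
      ring
    · rw [pushW_mid K m _ u (by omega) (by omega), if_neg (by omega : ¬ u - 1 = K),
        if_neg h0, if_neg hl]
      ring

lemma pushW_indL (K m : ℕ) (u : ℕ) (hu : u < K + 2) :
    pushW K m (fun v => if v = K + 1 then 1 else 0) u
      = (m:ℝ) * (if u = 0 then 1 else 0) + 1 * (if u = K + 1 then 1 else 0) := by
  by_cases h0 : u = 0
  · rw [h0, pushW_zero, if_neg (by omega : ¬ K = K + 1), if_pos rfl,
      if_pos rfl, if_neg (by omega : ¬ (0:ℕ) = K + 1)]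
    ring
  · by_cases hl : u = K + 1
    · rw [hl, pushW_last]
      simp only [if_neg (show ¬ K = K + 1 by omega), if_pos (rfl : K + 1 = K + 1),
        if_neg (show ¬ K + 1 = 0 by omega)]
      ring
    · rw [pushW_mid K m _ u (by omega) (by omega), if_neg (by omega : ¬ u - 1 = K + 1),
        if_neg h0, if_neg hl]
      ring

lemma numf_pair (K : ℕ) (n : ℕ → ℕ) (r i : ℕ) (a b : ℝ) :
    numf K n (fun u => a * (if u = 0 then (1:ℝ) else 0)
        + b * (if u = K + 1 then (1:ℝ) else 0)) r i
      = a * cols K n r 0 i + b * cols K n r (K + 1) i := by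
  unfold numf
  have : ∀ j ∈ range (K + 2),
      (a * (if j = 0 then (1:ℝ) else 0) + b * (if j = K + 1 then (1:ℝ) else 0)) * cols K n r j i
      = a * ((if j = 0 then (1:ℝ) else 0) * cols K n r j i)
        + b * ((if j = K + 1 then (1:ℝ) else 0) * cols K n r j i) := by
    intro j _; ring
  rw [Finset.sum_congr rfl this, Finset.sum_add_distrib, ← Finset.mul_sum, ← Finset.mul_sum,
    sum_ind_mul (K + 2) 0 (by omega) (fun u => cols K n r u i),
    sum_ind_mul (K + 2) (K + 1) (by omega) (fun u => cols K n r u i)]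

lemma denf_pair (K : ℕ) (n : ℕ → ℕ) (r : ℕ) (a b : ℝ) :
    denf K n (fun u => a * (if u = 0 then (1:ℝ) else 0)
        + b * (if u = K + 1 then (1:ℝ) else 0)) r
      = a * csum K (cols K n r) 0 + b * csum K (cols K n r) (K + 1) := by
  unfold denf
  have : ∀ j ∈ range (K + 2),
      (a * (if j = 0 then (1:ℝ) else 0) + b * (if j = K + 1 then (1:ℝ) else 0))
        * csum K (cols K n r) j
      = a * ((if j = 0 then (1:ℝ) else 0) * csum K (cols K n r) j)
        + b * ((if j = K + 1 then (1:ℝ) else 0) * csum K (cols K n r) j) := by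
    intro j _; ring
  rw [Finset.sum_congr rfl this, Finset.sum_add_distrib, ← Finset.mul_sum, ← Finset.mul_sum,
    sum_ind_mul (K + 2) 0 (by omega) (fun u => csum K (cols K n r) u),
    sum_ind_mul (K + 2) (K + 1) (by omega) (fun u => csum K (cols K n r) u)]

/-- The width recursion: at the next level, the distance between the last two vertices
is a contraction (factor at most `τ/(τ+σ)`) of the distance between vertex `0` and the
last vertex. -/
lemma width_succ (K : ℕ) (n : ℕ → ℕ) (r : ℕ) :
    ∃ f : ℝ, 0 ≤ f ∧
      f ≤ csum K (cols K n r) 0 / (csum K (cols K n r) 0 + csum K (cols K n r) (K + 1)) ∧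
      dist (Vv K n (r + 1) K) (Vv K n (r + 1) (K + 1))
        = f * dist (Vv K n r 0) (Vv K n r (K + 1)) := by
  set m := n (r + 1) with hm
  set τ := csum K (cols K n r) 0 with hτ
  set σ := csum K (cols K n r) (K + 1) with hσ
  have hτ1 : 1 ≤ τ := csum_cols_ge_one K n r 0 (by omega)
  have hσ1 : 1 ≤ σ := csum_cols_ge_one K n r (K + 1) (by omega)
  have hmn : (0:ℝ) ≤ (m:ℝ) := Nat.cast_nonneg _
  have hA : (0:ℝ) < ((m:ℝ) + 1) * τ + σ := by nlinarith
  have hB : (0:ℝ) < (m:ℝ) * τ + σ := by nlinarith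
  refine ⟨σ * τ / ((((m:ℝ) + 1) * τ + σ) * ((m:ℝ) * τ + σ)), by positivity, ?_, ?_⟩
  · rw [div_le_div_iff₀ (by positivity) (by positivity)]
    nlinarith [mul_nonneg (mul_nonneg hmn (by linarith : (0:ℝ) ≤ τ)) (by linarith : (0:ℝ) ≤ σ),
      mul_nonneg (mul_nonneg (mul_nonneg hmn (by nlinarith : (0:ℝ) ≤ (m:ℝ)+1)) (by linarith : (0:ℝ) ≤ τ)) (by linarith : (0:ℝ) ≤ τ)]
  · have eK : Vv K n (r + 1) K = vec2E (K + 2) (fun i =>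
        (((m:ℝ) + 1) * τ + σ)⁻¹ * (((m:ℝ) + 1) * cols K n r 0 i + 1 * cols K n r (K + 1) i)) := by
      unfold Vv
      rw [mixE_step, ← hm]
      rw [mixE_congr K n r (fun j hj => pushW_indK K m j hj)]
      unfold mixE
      apply vec2E_congr
      intro i
      rw [numf_pair, denf_pair, ← hτ, ← hσ]
      norm_num
    have eL : Vv K n (r + 1) (K + 1) = vec2E (K + 2) (fun i =>
        ((m:ℝ) * τ + σ)⁻¹ * ((m:ℝ) * cols K n r 0 i + 1 * cols K n r (K + 1) i)) := by
      unfold Vv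
      rw [mixE_step, ← hm]
      rw [mixE_congr K n r (fun j hj => pushW_indL K m j hj)]
      unfold mixE
      apply vec2E_congr
      intro i
      rw [numf_pair, denf_pair, ← hτ, ← hσ]
      norm_num
    have key : Vv K n (r + 1) K - Vv K n (r + 1) (K + 1)
        = (σ * τ / ((((m:ℝ) + 1) * τ + σ) * ((m:ℝ) * τ + σ)))
            • (Vv K n r 0 - Vv K n r (K + 1)) := by
      rw [eK, eL, Vv_eq K n r 0 (by omega), Vv_eq K n r (K + 1) (by omega),
        vec2E_sub, vec2E_sub, vec2E_smul]
      apply vec2E_congr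
      intro i
      rw [← hτ, ← hσ]
      field_simp
      ring
    rw [dist_eq_norm, key, norm_smul, Real.norm_eq_abs,
      abs_of_nonneg (by positivity), ← dist_eq_norm]

/-! #### Convexity tools -/

lemma vec2E_add (k : ℕ) (f g : ℕ → ℝ) :
    vec2E k f + vec2E k g = vec2E k (fun i => f i + g i) := rfl

lemma vec2E_zero (k : ℕ) : (0 : E k) = vec2E k (fun _ => 0) := rfl

lemma vec2E_finsum (k : ℕ) (s : Finset ℕ) (g : ℕ → ℕ → ℝ) :
    (∑ u ∈ s, vec2E k (g u)) = vec2E k (fun i => ∑ u ∈ s, g u i) := by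
  induction s using Finset.induction_on with
  | empty => simp [← vec2E_zero]
  | insert a s' hx ih =>
    rw [Finset.sum_insert hx, ih, vec2E_add]
    apply vec2E_congr
    intro i
    rw [Finset.sum_insert hx]

/-- A `mixE` point is a convex combination of the vertices. -/
lemma mixE_eq_comb (K : ℕ) (n : ℕ → ℕ) (r : ℕ) {p : ℕ → ℝ} (hp : ∀ j, 0 ≤ p j)
    (hs : 0 < ∑ j ∈ range (K + 2), p j) :
    mixE K n p r = ∑ u ∈ range (K + 2),
      (p u * csum K (cols K n r) u / denf K n p r) • Vv K n r u := by
  have hden := denf_pos K n hp hs r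
  have : ∀ u ∈ range (K + 2),
      (p u * csum K (cols K n r) u / denf K n p r) • Vv K n r u
      = vec2E (K + 2) (fun i =>
          (p u * csum K (cols K n r) u / denf K n p r)
            * ((csum K (cols K n r) u)⁻¹ * cols K n r u i)) := by
    intro u hu
    rw [Vv_eq K n r u (Finset.mem_range.1 hu), vec2E_smul]
  rw [Finset.sum_congr rfl this, vec2E_finsum]
  unfold mixE
  apply vec2E_congr
  intro i
  have term : ∀ u ∈ range (K + 2),
      (p u * csum K (cols K n r) u / denf K n p r)
        * ((csum K (cols K n r) u)⁻¹ * cols K n r u i)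
      = (denf K n p r)⁻¹ * (p u * cols K n r u i) := by
    intro u hu
    have hcs : csum K (cols K n r) u ≠ 0 :=
      (csum_cols_pos K n r u (Finset.mem_range.1 hu)).ne'
    field_simp
  rw [Finset.sum_congr rfl term, ← Finset.mul_sum]
  rfl

/-- Distance from any point to a `mixE` combination is controlled by distances
to the vertices. -/
lemma hull_dist (K : ℕ) (n : ℕ → ℕ) (r : ℕ) {p : ℕ → ℝ} (hp : ∀ j, 0 ≤ p j)
    (hs : 0 < ∑ j ∈ range (K + 2), p j) {z : E (K + 2)} {d : ℝ}
    (hz : ∀ u < K + 2, dist z (Vv K n r u) ≤ d) :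
    dist z (mixE K n p r) ≤ d := by
  have hden := denf_pos K n hp hs r
  set w : ℕ → ℝ := fun u => p u * csum K (cols K n r) u / denf K n p r with hw
  have hw0 : ∀ u, 0 ≤ w u := by
    intro u
    exact div_nonneg (mul_nonneg (hp u) (csum_nonneg K (cols_nonneg K n r) u)) hden.le
  have hw1 : ∑ u ∈ range (K + 2), w u = 1 := by
    rw [hw]
    rw [← Finset.sum_div]
    exact div_self hden.ne'
  have key : z - mixE K n p r = ∑ u ∈ range (K + 2), w u • (z - Vv K n r u) := by
    rw [mixE_eq_comb K n r hp hs]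
    have : ∀ u ∈ range (K + 2), w u • (z - Vv K n r u)
        = w u • z - w u • Vv K n r u := fun u _ => smul_sub _ _ _
    rw [Finset.sum_congr rfl this, Finset.sum_sub_distrib, ← Finset.sum_smul, hw1, one_smul]
  rw [dist_eq_norm, key]
  calc ‖∑ u ∈ range (K + 2), w u • (z - Vv K n r u)‖
      ≤ ∑ u ∈ range (K + 2), ‖w u • (z - Vv K n r u)‖ := norm_sum_le _ _
  _ ≤ ∑ u ∈ range (K + 2), w u * d := by
      apply Finset.sum_le_sum
      intro u hu
      rw [norm_smul, Real.norm_eq_abs, abs_of_nonneg (hw0 u), ← dist_eq_norm]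
      exact mul_le_mul_of_nonneg_left (hz u (Finset.mem_range.1 hu)) (hw0 u)
  _ = d := by rw [← Finset.sum_mul, hw1, one_mul]

/-- Contraction of distances for points with a common convex part. -/
lemma conv_contract {k : ℕ} {P x' y' : E k} {lam mu c d : ℝ}
    (hcl : c ≤ lam) (hl1 : lam ≤ 1) (hcm : c ≤ mu) (hm1 : mu ≤ 1)
    (hPx : dist P x' ≤ d) (hPy : dist P y' ≤ d) (hxy : dist x' y' ≤ d) (hd : 0 ≤ d) :
    dist (lam • P + (1 - lam) • x') (mu • P + (1 - mu) • y') ≤ (1 - c) * d := by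
  have main : ∀ (x' y' : E k) (lam mu : ℝ), c ≤ lam → lam ≤ 1 → c ≤ mu → mu ≤ lam →
      dist P y' ≤ d → dist x' y' ≤ d →
      dist (lam • P + (1 - lam) • x') (mu • P + (1 - mu) • y') ≤ (1 - c) * d := by
    intro x' y' lam mu hcl hl1 hcm hml hPy hxy
    have key : (lam • P + (1 - lam) • x') - (mu • P + (1 - mu) • y')
        = (lam - mu) • (P - y') + (1 - lam) • (x' - y') := by
      simp only [smul_sub, sub_smul, one_smul]
      abel
    rw [dist_eq_norm, key]
    calc ‖(lam - mu) • (P - y') + (1 - lam) • (x' - y')‖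
        ≤ ‖(lam - mu) • (P - y')‖ + ‖(1 - lam) • (x' - y')‖ := norm_add_le _ _
    _ = (lam - mu) * ‖P - y'‖ + (1 - lam) * ‖x' - y'‖ := by
        rw [norm_smul, norm_smul, Real.norm_eq_abs, Real.norm_eq_abs,
          abs_of_nonneg (by linarith), abs_of_nonneg (by linarith)]
    _ ≤ (lam - mu) * d + (1 - lam) * d := by
        have h1 : ‖P - y'‖ ≤ d := by rwa [dist_eq_norm] at hPy
        have h2 : ‖x' - y'‖ ≤ d := by rwa [dist_eq_norm] at hxy
        have := mul_le_mul_of_nonneg_left h1 (by linarith : (0:ℝ) ≤ lam - mu)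
        have := mul_le_mul_of_nonneg_left h2 (by linarith : (0:ℝ) ≤ 1 - lam)
        linarith
    _ = (1 - mu) * d := by ring
    _ ≤ (1 - c) * d := by nlinarith
  rcases le_total mu lam with h | h
  · exact main x' y' lam mu hcl hl1 hcm h hPy hxy
  · rw [dist_comm]
    exact main y' x' mu lam hcm hm1 hcl h hPx (by rwa [dist_comm])


/-! #### Chained weights over a window -/

def chainW (K : ℕ) (n : ℕ → ℕ) (t : ℕ) : ℕ → (ℕ → ℝ) → (ℕ → ℝ)
  | 0, p => p
  | (L + 1), p => chainW K n t L (pushW K (n (t + L + 1)) p)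

lemma mixE_chainW (K : ℕ) (n : ℕ → ℕ) (t : ℕ) :
    ∀ (L : ℕ) (p : ℕ → ℝ), mixE K n p (t + L) = mixE K n (chainW K n t L p) t := by
  intro L
  induction L with
  | zero => intro p; rfl
  | succ L ih =>
    intro p
    show mixE K n p ((t + L) + 1) = _
    rw [mixE_step]
    have he : t + L + 1 = t + (L + 1) := by omega
    rw [he] at *
    exact ih _

lemma chainW_nonneg (K : ℕ) (n : ℕ → ℕ) (t : ℕ) :
    ∀ (L : ℕ) (p : ℕ → ℝ), (∀ j, 0 ≤ p j) → ∀ u, 0 ≤ chainW K n t L p u := by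
  intro L
  induction L with
  | zero => intro p hp u; exact hp u
  | succ L ih =>
    intro p hp u
    exact ih _ (pushW_nonneg K _ hp) u

/-- Mass at a slot travels up to the last slot and sticks there. -/
lemma chainW_last_ge (K : ℕ) (n : ℕ → ℕ) (t : ℕ) :
    ∀ (L : ℕ) (a : ℕ) (p : ℕ → ℝ), a < K + 2 → (∀ j, 0 ≤ p j) → 1 ≤ p a →
      K + 1 - a ≤ L → 1 ≤ chainW K n t L p (K + 1) := by
  intro L
  induction L with
  | zero =>
    intro a p ha hp hpa hL
    have : a = K + 1 := by omega
    rw [← this]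
    exact hpa
  | succ L ih =>
    intro a p ha hp hpa hL
    set m := n (t + L + 1)
    show 1 ≤ chainW K n t L (pushW K m p) (K + 1)
    by_cases haK : a < K
    · apply ih (a + 1) (pushW K m p) (by omega) (pushW_nonneg K m hp) ?_ (by omega)
      rw [pushW_mid K m p (a + 1) (by omega) (by omega)]
      simpa using hpa
    · by_cases haK' : a = K
      · apply ih (K + 1) (pushW K m p) (by omega) (pushW_nonneg K m hp) ?_ (by omega)
        rw [pushW_last]
        have := hp (K + 1)
        rw [haK'] at hpa
        linarith
      · have haL : a = K + 1 := by omega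
        apply ih (K + 1) (pushW K m p) (by omega) (pushW_nonneg K m hp) ?_ (by omega)
        rw [pushW_last]
        have := hp K
        rw [haL] at hpa
        linarith

lemma chainW_sum_le (K : ℕ) (n : ℕ → ℕ) (t : ℕ) (M : ℝ) (hM0 : 0 ≤ M)
    (hM : ∀ u, t ≤ u → (n (u + 1) : ℝ) ≤ M) :
    ∀ (L : ℕ) (p : ℕ → ℝ), (∀ j, 0 ≤ p j) →
      ∑ u ∈ range (K + 2), chainW K n t L p u
        ≤ (M + 2) ^ L * ∑ u ∈ range (K + 2), p u := by
  intro L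
  induction L with
  | zero =>
    intro p hp
    rw [pow_zero, one_mul]
    exact le_of_eq rfl
  | succ L ih =>
    intro p hp
    show ∑ u ∈ range (K + 2), chainW K n t L (pushW K (n (t + L + 1)) p) u ≤ _
    calc ∑ u ∈ range (K + 2), chainW K n t L (pushW K (n (t + L + 1)) p) u
        ≤ (M + 2) ^ L * ∑ u ∈ range (K + 2), pushW K (n (t + L + 1)) p u :=
          ih _ (pushW_nonneg K _ hp)
    _ ≤ (M + 2) ^ L * ((M + 2) * ∑ u ∈ range (K + 2), p u) := by
        apply mul_le_mul_of_nonneg_left ?_ (by positivity)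
        rw [sum_pushW]
        have hK : p K ≤ ∑ u ∈ range (K + 2), p u :=
          Finset.single_le_sum (fun j _ => hp j) (Finset.mem_range.2 (by omega))
        have hL : p (K + 1) ≤ ∑ u ∈ range (K + 2), p u :=
          Finset.single_le_sum (fun j _ => hp j) (Finset.mem_range.2 (by omega))
        have hm : (n (t + L + 1) : ℝ) ≤ M := by
          have he : t + L + 1 = (t + L) + 1 := by omega
          rw [he]
          exact hM (t + L) (by omega)
        have h0 : (0:ℝ) ≤ (n (t + L + 1) : ℝ) := Nat.cast_nonneg _
        have hps : 0 ≤ ∑ u ∈ range (K + 2), p u :=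
          Finset.sum_nonneg fun j _ => hp j
        have hKL : p K + p (K + 1) ≤ ∑ u ∈ range (K + 2), p u := by
          rw [Finset.sum_range_succ, Finset.sum_range_succ]
          have : 0 ≤ ∑ u ∈ range K, p u := Finset.sum_nonneg fun j _ => hp j
          linarith
        nlinarith [hp K, hp (K + 1)]
    _ = (M + 2) ^ (L + 1) * ∑ u ∈ range (K + 2), p u := by ring

/-! #### The contraction step -/

lemma contract_step (K : ℕ) (n : ℕ → ℕ) (t : ℕ) (M C : ℝ) (hM0 : 0 ≤ M) (hC0 : 1 ≤ C)
    (hM : ∀ u, t ≤ u → (n (u + 1) : ℝ) ≤ M)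
    (hC : ∀ j, j < K + 2 → csum K (cols K n t) j ≤ C * csum K (cols K n t) (K + 1))
    {d : ℝ} (hd : 0 ≤ d)
    (hpw : ∀ a < K + 2, ∀ b < K + 2, dist (Vv K n t a) (Vv K n t b) ≤ d) :
    ∀ a < K + 2, ∀ b < K + 2,
      dist (Vv K n (t + (K + 2)) a) (Vv K n (t + (K + 2)) b)
        ≤ (1 - 1 / ((M + 2) ^ (K + 2) * C)) * d := by
  set σ := csum K (cols K n t) (K + 1) with hσ
  have hσ1 : 1 ≤ σ := csum_cols_ge_one K n t (K + 1) (by omega)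
  have hMC : (0:ℝ) < (M + 2) ^ (K + 2) * C := by positivity
  set c : ℝ := 1 / ((M + 2) ^ (K + 2) * C) with hc
  have hc0 : 0 < c := by rw [hc]; positivity
  have analyze : ∀ a, a < K + 2 → ∃ (lam : ℝ) (x' : E (K + 2)),
      c ≤ lam ∧ lam ≤ 1 ∧
      (∀ z : E (K + 2), (∀ u < K + 2, dist z (Vv K n t u) ≤ d) → dist z x' ≤ d) ∧
      Vv K n (t + (K + 2)) a = lam • Vv K n t (K + 1) + (1 - lam) • x' := by
    intro a ha
    set q : ℕ → ℝ := chainW K n t (K + 2) (fun u => if u = a then 1 else 0) with hq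
    have hq0 : ∀ u, 0 ≤ q u :=
      chainW_nonneg K n t (K + 2) _ (ind_nonneg a)
    have hqlast : 1 ≤ q (K + 1) :=
      chainW_last_ge K n t (K + 2) a _ ha (ind_nonneg a) (by simp) (by omega)
    have hqsum : ∑ u ∈ range (K + 2), q u ≤ (M + 2) ^ (K + 2) := by
      have h := chainW_sum_le K n t M hM0 hM (K + 2) _ (ind_nonneg a)
      rwa [sum_ind (K + 2) a ha, mul_one] at h
    have hqs : 0 < ∑ u ∈ range (K + 2), q u :=
      lt_of_lt_of_le one_pos (le_trans hqlast
        (Finset.single_le_sum (fun j _ => hq0 j) (Finset.mem_range.2 (by omega))))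
    have hVa : Vv K n (t + (K + 2)) a = mixE K n q t := by
      unfold Vv
      rw [mixE_chainW K n t (K + 2)]
    have hdq := denf_pos K n hq0 hqs t
    have hden_le : denf K n q t ≤ (M + 2) ^ (K + 2) * C * σ := by
      unfold denf
      calc ∑ j ∈ range (K + 2), q j * csum K (cols K n t) j
          ≤ ∑ j ∈ range (K + 2), q j * (C * σ) := by
            apply Finset.sum_le_sum
            intro j hj
            exact mul_le_mul_of_nonneg_left (hC j (Finset.mem_range.1 hj)) (hq0 j)
      _ = (∑ j ∈ range (K + 2), q j) * (C * σ) := by rw [← Finset.sum_mul]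
      _ ≤ (M + 2) ^ (K + 2) * (C * σ) :=
          mul_le_mul_of_nonneg_right hqsum (by positivity)
      _ = (M + 2) ^ (K + 2) * C * σ := by ring
    have hden_ge : σ ≤ denf K n q t := by
      have h := denf_ge_term K n hq0 t (K + 1) (by omega)
      rw [← hσ] at h
      nlinarith
    have hlamc : c ≤ σ / denf K n q t := by
      rw [hc, div_le_div_iff₀ hMC hdq]
      nlinarith
    have hlam1 : σ / denf K n q t ≤ 1 := by
      rw [div_le_one hdq]
      exact hden_ge
    set q' : ℕ → ℝ := fun u => q u - (if u = K + 1 then 1 else 0) with hq'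
    have hq'0 : ∀ u, 0 ≤ q' u := by
      intro u
      rw [hq']
      dsimp only
      split
      · rename_i h; rw [h]; linarith
      · simpa using hq0 u
    have hq'den : denf K n q' t = denf K n q t - σ := by
      unfold denf
      have expand : ∀ j ∈ range (K + 2), q' j * csum K (cols K n t) j
          = q j * csum K (cols K n t) j
            - (if j = K + 1 then (1:ℝ) else 0) * csum K (cols K n t) j := by
        intro j _
        rw [hq']
        ring
      rw [Finset.sum_congr rfl expand, Finset.sum_sub_distrib,
        sum_ind_mul (K + 2) (K + 1) (by omega) (fun u => csum K (cols K n t) u)]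
    have hq'num : ∀ i, numf K n q' t i = numf K n q t i - cols K n t (K + 1) i := by
      intro i
      unfold numf
      have expand : ∀ j ∈ range (K + 2), q' j * cols K n t j i
          = q j * cols K n t j i
            - (if j = K + 1 then (1:ℝ) else 0) * cols K n t j i := by
        intro j _
        rw [hq']
        ring
      rw [Finset.sum_congr rfl expand, Finset.sum_sub_distrib,
        sum_ind_mul (K + 2) (K + 1) (by omega) (fun u => cols K n t u i)]
    by_cases h' : 0 < denf K n q' t
    · -- nondegenerate case
      have hq's : 0 < ∑ u ∈ range (K + 2), q' u := by
        by_contra hcon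
        push_neg at hcon
        have hz : ∑ u ∈ range (K + 2), q' u = 0 :=
          le_antisymm hcon (Finset.sum_nonneg fun u _ => hq'0 u)
        have hall : ∀ u ∈ range (K + 2), q' u = 0 :=
          (Finset.sum_eq_zero_iff_of_nonneg fun u _ => hq'0 u).1 hz
        have : denf K n q' t = 0 := by
          unfold denf
          apply Finset.sum_eq_zero
          intro j hj
          rw [hall j hj, zero_mul]
        linarith
      refine ⟨σ / denf K n q t, mixE K n q' t, hlamc, hlam1,
        fun z hz => hull_dist K n t hq'0 hq's hz, ?_⟩
      rw [hVa, Vv_eq K n t (K + 1) (by omega)]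
      unfold mixE
      rw [vec2E_smul, vec2E_smul, vec2E_add]
      apply vec2E_congr
      intro i
      rw [hq'num i, hq'den]
      have h1 : σ ≠ 0 := by linarith
      have h2 : denf K n q t ≠ 0 := hdq.ne'
      have h3 : denf K n q t - σ ≠ 0 := by rw [← hq'den]; exact h'.ne'
      rw [← hσ]
      field_simp
      ring
    · -- degenerate case : the new vertex IS the last old vertex
      have hden0 : denf K n q' t = 0 := by
        have hnn : 0 ≤ denf K n q' t :=
          Finset.sum_nonneg fun j _ =>
            mul_nonneg (hq'0 j) (csum_nonneg K (cols_nonneg K n t) j)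
        linarith [not_lt.1 h']
      have hdenq : denf K n q t = σ := by
        have h := hq'den
        rw [hden0] at h
        linarith
      have hq'zero : ∀ u ∈ range (K + 2), q' u = 0 := by
        apply (Finset.sum_eq_zero_iff_of_nonneg fun u _ => hq'0 u).1
        have h1 : ∑ u ∈ range (K + 2), q' u ≤ denf K n q' t := by
          have hterm : ∀ u ∈ range (K + 2), q' u ≤ q' u * csum K (cols K n t) u := by
            intro u hu
            nth_rewrite 1 [← mul_one (q' u)]
            exact mul_le_mul_of_nonneg_left
              (csum_cols_ge_one K n t u (Finset.mem_range.1 hu)) (hq'0 u)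
          exact Finset.sum_le_sum hterm
        have h2 : 0 ≤ ∑ u ∈ range (K + 2), q' u :=
          Finset.sum_nonneg fun u _ => hq'0 u
        rw [hden0] at h1
        linarith
      have hnum0 : ∀ i, numf K n q' t i = 0 := by
        intro i
        unfold numf
        apply Finset.sum_eq_zero
        intro j hj
        rw [hq'zero j hj, zero_mul]
      refine ⟨σ / denf K n q t, Vv K n t (K + 1), hlamc, hlam1,
        fun z hz => hz (K + 1) (by omega), ?_⟩
      have hVeq : mixE K n q t = Vv K n t (K + 1) := by
        rw [Vv_eq K n t (K + 1) (by omega)]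
        unfold mixE
        apply vec2E_congr
        intro i
        have h := hq'num i
        rw [hnum0 i] at h
        have hni : numf K n q t i = cols K n t (K + 1) i := by linarith
        rw [hni, hdenq, ← hσ]
      rw [hVa, hVeq, hdenq, div_self (by linarith : σ ≠ 0)]
      simp
  -- now combine
  intro a ha b hb
  obtain ⟨la, xa, hca, hla1, hXa, hea⟩ := analyze a ha
  obtain ⟨lb, xb, hcb, hlb1, hXb, heb⟩ := analyze b hb
  have hVx : ∀ u < K + 2, ∀ (x' : E (K + 2)),
      (∀ z : E (K + 2), (∀ w < K + 2, dist z (Vv K n t w) ≤ d) → dist z x' ≤ d) →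
      dist (Vv K n t u) x' ≤ d := by
    intro u hu x' hX
    exact hX (Vv K n t u) (fun w hw => hpw u hu w hw)
  have hPxa : dist (Vv K n t (K + 1)) xa ≤ d := hVx (K + 1) (by omega) xa hXa
  have hPxb : dist (Vv K n t (K + 1)) xb ≤ d := hVx (K + 1) (by omega) xb hXb
  have hxab : dist xa xb ≤ d := by
    apply hXb xa
    intro w hw
    rw [dist_comm]
    exact hVx w hw xa hXa
  rw [hea, heb]
  exact conv_contract hca hla1 hcb hlb1 hPxa hPxb hxab hd


/-! #### Scalar dynamics of the column sums -/

lemma sig_step (K : ℕ) (n : ℕ → ℕ) (t : ℕ) :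
    csum K (cols K n (t + 1)) (K + 1)
      = (n (t + 1) : ℝ) * csum K (cols K n t) 0 + csum K (cols K n t) (K + 1) := by
  show csum K (cstep K (n (t+1)) (cols K n t)) (K + 1) = _
  rw [csum_cstep, if_neg (by omega : ¬ K + 1 < K), if_neg (by omega : ¬ K + 1 = K)]

lemma sK_step (K : ℕ) (n : ℕ → ℕ) (t : ℕ) :
    csum K (cols K n (t + 1)) K
      = ((n (t + 1) : ℝ) + 1) * csum K (cols K n t) 0 + csum K (cols K n t) (K + 1) := by
  show csum K (cstep K (n (t+1)) (cols K n t)) K = _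
  rw [csum_cstep, if_neg (by omega : ¬ K < K), if_pos rfl]

lemma s_shift (K : ℕ) (n : ℕ → ℕ) (t j : ℕ) (hj : j < K) :
    csum K (cols K n (t + 1)) j = csum K (cols K n t) (j + 1) := by
  show csum K (cstep K (n (t+1)) (cols K n t)) j = _
  rw [csum_cstep, if_pos hj]

lemma sig_mono (K : ℕ) (n : ℕ → ℕ) {t t' : ℕ} (h : t ≤ t') :
    csum K (cols K n t) (K + 1) ≤ csum K (cols K n t') (K + 1) := by
  induction t' with
  | zero =>
    have : t = 0 := by omega
    rw [this]
  | succ t' ih =>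
    rcases Nat.lt_or_ge t (t' + 1) with h' | h'
    · have hle := ih (by omega)
      rw [sig_step]
      have h1 : 0 ≤ (n (t' + 1) : ℝ) := Nat.cast_nonneg _
      have h2 : 0 ≤ csum K (cols K n t') 0 := csum_nonneg K (cols_nonneg K n t') 0
      nlinarith
    · have : t = t' + 1 := by omega
      rw [this]

lemma s_mid (K : ℕ) (n : ℕ → ℕ) : ∀ (j : ℕ), j ≤ K → ∀ t,
    csum K (cols K n (t + j)) 0 = csum K (cols K n t) j := by
  intro j
  induction j with
  | zero => intro _ t; rfl
  | succ j ih =>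
    intro hj t
    have h1 : t + (j + 1) = (t + 1) + j := by omega
    rw [h1, ih (by omega) (t + 1), s_shift K n t j (by omega)]

lemma tau_chain (K : ℕ) (n : ℕ → ℕ) (t : ℕ) :
    csum K (cols K n (t + (K + 1))) 0
      = ((n (t + 1) : ℝ) + 1) * csum K (cols K n t) 0 + csum K (cols K n t) (K + 1) := by
  have h1 : t + (K + 1) = (t + 1) + K := by omega
  rw [h1, s_mid K n K (le_refl K) (t + 1), sK_step]


/-! #### Regime lemmas -/

section Regime

variable (K : ℕ) (n : ℕ → ℕ) (T M : ℝ) (R₁ : ℕ)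

/-- If events (digits `≥ 1`) occur infinitely often and the anchor inequality holds at
events, then events occur within bounded gaps. -/
lemma exists_event_near (hT : 1 ≤ T)
    (hanchor : ∀ r, R₁ ≤ r → 1 ≤ n (r + 1) →
      csum K (cols K n r) 0 ≤ T * csum K (cols K n r) (K + 1))
    (hinf : ∀ u₀, ∃ u, u₀ ≤ u ∧ 1 ≤ n (u + 1))
    (r : ℕ) (hr : R₁ ≤ r) :
    ∃ r', r ≤ r' ∧ r' ≤ r + (K + 1) * (⌈T⌉₊ + 2) ∧ 1 ≤ n (r' + 1) := by
  obtain ⟨u, hu, hnu⟩ := hinf r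
  have hex : ∃ v, r ≤ v ∧ 1 ≤ n (v + 1) := ⟨u, hu, hnu⟩
  set r' := Nat.find hex with hr'
  obtain ⟨hrr', hev⟩ : r ≤ r' ∧ 1 ≤ n (r' + 1) := Nat.find_spec hex
  have hmin : ∀ v, r ≤ v → v < r' → n (v + 1) = 0 := by
    intro v hrv hvr'
    have := Nat.find_min hex hvr'
    omega
  refine ⟨r', hrr', ?_, hev⟩
  by_contra hcon
  push_neg at hcon
  set J := ⌈T⌉₊ + 1 with hJ
  -- σ is constant on [r, r']
  have hσc : ∀ v, r ≤ v → v ≤ r' → csum K (cols K n v) (K + 1) = csum K (cols K n r) (K + 1) := by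
    intro v hrv hvr'
    induction v with
    | zero =>
      have : r = 0 := by omega
      rw [this]
    | succ v ih =>
      rcases Nat.lt_or_ge r (v + 1) with h' | h'
      · rw [sig_step, hmin v (by omega) (by omega), Nat.cast_zero, zero_mul, zero_add]
        exact ih (by omega) (by omega)
      · have : r = v + 1 := by omega
        rw [this]
  -- τ grows along chains inside [r, r']
  have grow : ∀ (j : ℕ) (v : ℕ), r ≤ v → v + j * (K + 1) ≤ r' →
      (j : ℝ) * csum K (cols K n r) (K + 1) ≤ csum K (cols K n (v + j * (K + 1))) 0 := by
    intro j
    induction j with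
    | zero =>
      intro v _ _
      rw [Nat.cast_zero, zero_mul]
      exact csum_nonneg K (cols_nonneg K n _) 0
    | succ j ih =>
      intro v hrv hle
      have h1 : v + (j + 1) * (K + 1) = (v + j * (K + 1)) + (K + 1) := by ring
      set u := v + j * (K + 1) with hu'
      have hur : r ≤ u := by omega
      have hur' : u + (K + 1) ≤ r' := by omega
      rw [h1, tau_chain, hmin u hur (by omega), Nat.cast_zero, zero_add, one_mul,
        hσc u hur (by omega)]
      have := ih v hrv (by omega)
      push_cast
      linarith
  have hLJ : (K + 1) * (⌈T⌉₊ + 2) = J * (K + 1) + (K + 1) := by rw [hJ]; ring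
  rw [hLJ] at hcon
  have hJr : r' - J * (K + 1) + J * (K + 1) = r' := by omega
  have hvr : r ≤ r' - J * (K + 1) := by omega
  have hgrow := grow J (r' - J * (K + 1)) hvr (by omega)
  rw [hJr] at hgrow
  have hσ1 : (1:ℝ) ≤ csum K (cols K n r) (K + 1) := csum_cols_ge_one K n r (K + 1) (by omega)
  have hanch := hanchor r' (le_trans hr hrr') hev
  rw [hσc r' hrr' (le_refl _)] at hanch
  have hTJ : (J : ℝ) ≤ T := by
    by_contra hTJ
    push_neg at hTJ
    nlinarith
  have : T < (J : ℝ) := by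
    rw [hJ]
    push_cast
    have := Nat.le_ceil T
    linarith
  linarith

/-- Growth of `σ` across a window containing an event. -/
lemma sigma_grow (hT : 1 ≤ T)
    (hanchor : ∀ r, R₁ ≤ r → 1 ≤ n (r + 1) →
      csum K (cols K n r) 0 ≤ T * csum K (cols K n r) (K + 1))
    (habove : ∀ r, R₁ ≤ r → csum K (cols K n r) (K + 1) ≤ T * csum K (cols K n r) 0)
    (hinf : ∀ u₀, ∃ u, u₀ ≤ u ∧ 1 ≤ n (u + 1)) :
    ∀ u, R₁ ≤ u → (1 + 1 / T) * csum K (cols K n u) (K + 1)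
      ≤ csum K (cols K n (u + ((K + 1) * (⌈T⌉₊ + 2) + 1))) (K + 1) := by
  intro u hu
  set L := (K + 1) * (⌈T⌉₊ + 2) with hL
  obtain ⟨r', hur', hr'L, hev⟩ := exists_event_near K n T R₁ hT hanchor hinf u hu
  have hT0 : (0:ℝ) < T := by linarith
  have hτ1 : (1:ℝ) ≤ csum K (cols K n r') 0 := csum_cols_ge_one K n r' 0 (by omega)
  have hτσ : csum K (cols K n r') (K + 1) / T ≤ csum K (cols K n r') 0 := by
    rw [div_le_iff₀ hT0]
    have := habove r' (le_trans hu hur')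
    linarith [this]
  have hstep : (1 + 1 / T) * csum K (cols K n r') (K + 1)
      ≤ csum K (cols K n (r' + 1)) (K + 1) := by
    rw [sig_step]
    have hn1 : (1:ℝ) ≤ (n (r' + 1) : ℝ) := by exact_mod_cast hev
    have hτ0 : (0:ℝ) ≤ csum K (cols K n r') 0 := by linarith
    have : csum K (cols K n r') 0 ≤ (n (r' + 1) : ℝ) * csum K (cols K n r') 0 := by
      nlinarith
    have h2 : csum K (cols K n r') (K + 1) / T ≤ (n (r' + 1) : ℝ) * csum K (cols K n r') 0 := by
      linarith
    have hexp : (1 + 1 / T) * csum K (cols K n r') (K + 1)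
        = csum K (cols K n r') (K + 1) / T + csum K (cols K n r') (K + 1) := by
      field_simp
      ring
    linarith [hexp ▸ le_refl ((1 + 1 / T) * csum K (cols K n r') (K + 1)), h2]
  have hmono1 : csum K (cols K n u) (K + 1) ≤ csum K (cols K n r') (K + 1) :=
    sig_mono K n hur'
  have hmono2 : csum K (cols K n (r' + 1)) (K + 1)
      ≤ csum K (cols K n (u + (L + 1))) (K + 1) := sig_mono K n (by omega)
  have h1T : (0:ℝ) < 1 + 1 / T := by positivity
  nlinarith

lemma sigma_grow_pow (hT : 1 ≤ T)
    (hanchor : ∀ r, R₁ ≤ r → 1 ≤ n (r + 1) →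
      csum K (cols K n r) 0 ≤ T * csum K (cols K n r) (K + 1))
    (habove : ∀ r, R₁ ≤ r → csum K (cols K n r) (K + 1) ≤ T * csum K (cols K n r) 0)
    (hinf : ∀ u₀, ∃ u, u₀ ≤ u ∧ 1 ≤ n (u + 1)) :
    ∀ (j : ℕ) (u : ℕ), R₁ ≤ u → (1 + 1 / T) ^ j * csum K (cols K n u) (K + 1)
      ≤ csum K (cols K n (u + j * ((K + 1) * (⌈T⌉₊ + 2) + 1))) (K + 1) := by
  intro j
  induction j with
  | zero =>
    intro u hu
    simp
  | succ j ih =>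
    intro u hu
    set L1 := (K + 1) * (⌈T⌉₊ + 2) + 1 with hL1
    have h1 : u + (j + 1) * L1 = (u + j * L1) + L1 := by ring
    have h2 := sigma_grow K n T R₁ hT hanchor habove hinf (u + j * L1) (by omega)
    have h3 := ih u hu
    have h1T : (0:ℝ) < 1 + 1 / T := by positivity
    rw [h1]
    calc (1 + 1 / T) ^ (j + 1) * csum K (cols K n u) (K + 1)
        = (1 + 1 / T) * ((1 + 1 / T) ^ j * csum K (cols K n u) (K + 1)) := by ring
    _ ≤ (1 + 1 / T) * csum K (cols K n (u + j * L1)) (K + 1) :=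
        mul_le_mul_of_nonneg_left h3 h1T.le
    _ ≤ csum K (cols K n ((u + j * L1) + L1)) (K + 1) := h2

lemma sigma_unbounded (hT : 1 ≤ T)
    (hanchor : ∀ r, R₁ ≤ r → 1 ≤ n (r + 1) →
      csum K (cols K n r) 0 ≤ T * csum K (cols K n r) (K + 1))
    (habove : ∀ r, R₁ ≤ r → csum K (cols K n r) (K + 1) ≤ T * csum K (cols K n r) 0)
    (hinf : ∀ u₀, ∃ u, u₀ ≤ u ∧ 1 ≤ n (u + 1)) :
    ∀ B : ℝ, ∃ R₂, R₁ ≤ R₂ ∧ ∀ t, R₂ ≤ t → B ≤ csum K (cols K n t) (K + 1) := by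
  intro B
  have h1T : (1:ℝ) < 1 + 1 / T := by
    have : (0:ℝ) < 1 / T := by positivity
    linarith
  obtain ⟨j, hj⟩ := pow_unbounded_of_one_lt B h1T
  set L1 := (K + 1) * (⌈T⌉₊ + 2) + 1 with hL1
  refine ⟨R₁ + j * L1, by omega, ?_⟩
  intro t ht
  have h3 := sigma_grow_pow K n T R₁ hT hanchor habove hinf j R₁ (le_refl _)
  have hσ1 : (1:ℝ) ≤ csum K (cols K n R₁) (K + 1) := csum_cols_ge_one K n R₁ (K + 1) (by omega)
  have hmono : csum K (cols K n (R₁ + j * L1)) (K + 1) ≤ csum K (cols K n t) (K + 1) :=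
    sig_mono K n ht
  have hp : (0:ℝ) < (1 + 1/T) ^ j := by positivity
  nlinarith

lemma sigma_dom (hT : 1 ≤ T)
    (hanchor : ∀ r, R₁ ≤ r → 1 ≤ n (r + 1) →
      csum K (cols K n r) 0 ≤ T * csum K (cols K n r) (K + 1))
    (habove : ∀ r, R₁ ≤ r → csum K (cols K n r) (K + 1) ≤ T * csum K (cols K n r) 0)
    (hinf : ∀ u₀, ∃ u, u₀ ≤ u ∧ 1 ≤ n (u + 1)) :
    ∀ u t, R₁ ≤ u → u ≤ t → csum K (cols K n u) (K + 1)
      ≤ (T / (T + 1)) ^ ((t - u) / ((K + 1) * (⌈T⌉₊ + 2) + 1)) * csum K (cols K n t) (K + 1) := by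
  intro u t hu hut
  set L1 := (K + 1) * (⌈T⌉₊ + 2) + 1 with hL1
  set q := (t - u) / L1 with hq
  have hql : u + q * L1 ≤ t := by
    have h := Nat.div_mul_le_self (t - u) L1
    rw [hq]
    omega
  have h1 := sigma_grow_pow K n T R₁ hT hanchor habove hinf q u hu
  have h2 : csum K (cols K n (u + q * L1)) (K + 1) ≤ csum K (cols K n t) (K + 1) :=
    sig_mono K n hql
  have hT0 : (0:ℝ) < T := by linarith
  have hrel : (T / (T + 1)) = (1 + 1 / T)⁻¹ := by
    field_simp
  rw [hrel, inv_pow]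
  have hp : (0:ℝ) < (1 + 1/T) ^ q := by positivity
  rw [le_inv_mul_iff₀ hp]
  calc (1 + 1 / T) ^ q * csum K (cols K n u) (K + 1)
      ≤ csum K (cols K n (u + q * L1)) (K + 1) := h1
  _ ≤ csum K (cols K n t) (K + 1) := h2

end Regime


/-! #### Geometric sum packing -/

lemma geo_sum_le {ρ : ℝ} (h0 : 0 ≤ ρ) (h1 : ρ < 1) (N : ℕ) :
    ∑ j ∈ range N, ρ ^ j ≤ 1 / (1 - ρ) := by
  have h1ρ : (0:ℝ) < 1 - ρ := by linarith
  have key : ∀ N : ℕ, (1 - ρ) * ∑ j ∈ range N, ρ ^ j = 1 - ρ ^ N := by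
    intro N
    induction N with
    | zero => simp
    | succ N ih2 =>
      rw [Finset.sum_range_succ, pow_succ]
      nlinarith [ih2]
  have hρN : (0:ℝ) ≤ ρ ^ N := by positivity
  rw [le_div_iff₀ h1ρ, mul_comm]
  nlinarith [key N]

lemma geo_pack {ρ : ℝ} (h0 : 0 ≤ ρ) (h1 : ρ ≤ 1) (L : ℕ) (N : ℕ) :
    ∑ d ∈ range ((L + 1) * N), ρ ^ (d / (L + 1))
      = ((L:ℝ) + 1) * ∑ j ∈ range N, ρ ^ j := by
  induction N with
  | zero => simp
  | succ N ih =>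
    have hsplit : (L + 1) * (N + 1) = (L + 1) * N + (L + 1) := by ring
    rw [hsplit]
    rw [Finset.range_eq_Ico, ← Finset.sum_Ico_consecutive _
      (Nat.zero_le ((L + 1) * N)) (by omega : (L + 1) * N ≤ (L + 1) * N + (L + 1))]
    rw [← Finset.range_eq_Ico, ih]
    have hconst : ∀ d ∈ Finset.Ico ((L + 1) * N) ((L + 1) * N + (L + 1)),
        ρ ^ (d / (L + 1)) = ρ ^ N := by
      intro d hd
      rw [Finset.mem_Ico] at hd
      congr 1
      have hlo : N * (L + 1) ≤ d := by
        have : N * (L + 1) = (L + 1) * N := by ring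
        omega
      have hhi : d < (N + 1) * (L + 1) := by
        have : (N + 1) * (L + 1) = (L + 1) * N + (L + 1) := by ring
        omega
      exact Nat.div_eq_of_lt_le hlo hhi
    rw [Finset.sum_congr rfl hconst, Finset.sum_const, Nat.card_Ico]
    rw [Finset.sum_range_succ]
    have hcard : (L + 1) * N + (L + 1) - (L + 1) * N = L + 1 := by omega
    rw [hcard]
    push_cast
    ring

lemma geo_pack_le {ρ : ℝ} (h0 : 0 ≤ ρ) (h1 : ρ < 1) (L : ℕ) (N : ℕ) :
    ∑ d ∈ range N, ρ ^ (d / (L + 1)) ≤ ((L:ℝ) + 1) * (1 / (1 - ρ)) := by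
  have hsub : ∑ d ∈ range N, ρ ^ (d / (L + 1))
      ≤ ∑ d ∈ range ((L + 1) * N), ρ ^ (d / (L + 1)) := by
    apply Finset.sum_le_sum_of_subset_of_nonneg
    · apply Finset.range_subset_range.2
      nlinarith [Nat.zero_le L, Nat.zero_le N]
    · intro d _ _
      positivity
  calc ∑ d ∈ range N, ρ ^ (d / (L + 1))
      ≤ ∑ d ∈ range ((L + 1) * N), ρ ^ (d / (L + 1)) := hsub
  _ = ((L:ℝ) + 1) * ∑ j ∈ range N, ρ ^ j := geo_pack h0 h1.le L N
  _ ≤ ((L:ℝ) + 1) * (1 / (1 - ρ)) := by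
      apply mul_le_mul_of_nonneg_left (geo_sum_le h0 h1 N) (by positivity)

/-! #### Sum of `σ` values -/

lemma sum_sigma_le (K : ℕ) (n : ℕ → ℕ) (T : ℝ) (R₁ : ℕ) (hT : 1 ≤ T)
    (hanchor : ∀ r, R₁ ≤ r → 1 ≤ n (r + 1) →
      csum K (cols K n r) 0 ≤ T * csum K (cols K n r) (K + 1))
    (habove : ∀ r, R₁ ≤ r → csum K (cols K n r) (K + 1) ≤ T * csum K (cols K n r) 0)
    (hinf : ∀ u₀, ∃ u, u₀ ≤ u ∧ 1 ≤ n (u + 1)) :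
    ∀ t, R₁ ≤ t → ∑ u ∈ Finset.Ico R₁ t, csum K (cols K n u) (K + 1)
      ≤ (((K + 1) * (⌈T⌉₊ + 2) : ℕ) + 1 : ℝ) * (T + 1) * csum K (cols K n t) (K + 1) := by
  intro t ht
  set L : ℕ := (K + 1) * (⌈T⌉₊ + 2) with hL
  set ρ := T / (T + 1) with hρ
  have hρ0 : 0 ≤ ρ := by rw [hρ]; positivity
  have hρ1 : ρ < 1 := by
    rw [hρ, div_lt_one (by linarith)]
    linarith
  have hσt0 : 0 ≤ csum K (cols K n t) (K + 1) :=
    csum_nonneg K (cols_nonneg K n t) _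
  have hterm : ∀ u ∈ Finset.Ico R₁ t, csum K (cols K n u) (K + 1)
      ≤ ρ ^ ((t - u) / (L + 1)) * csum K (cols K n t) (K + 1) := by
    intro u hu
    rw [Finset.mem_Ico] at hu
    exact sigma_dom K n T R₁ hT hanchor habove hinf u t hu.1 hu.2.le
  have hre : 1 / (1 - ρ) = T + 1 := by
    rw [hρ]
    have : (1:ℝ) - T / (T + 1) = 1 / (T + 1) := by
      field_simp
      ring
    rw [this]
    field_simp
  calc ∑ u ∈ Finset.Ico R₁ t, csum K (cols K n u) (K + 1)
      ≤ ∑ u ∈ Finset.Ico R₁ t, ρ ^ ((t - u) / (L + 1)) * csum K (cols K n t) (K + 1) :=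
        Finset.sum_le_sum hterm
  _ = (∑ u ∈ Finset.Ico R₁ t, ρ ^ ((t - u) / (L + 1))) * csum K (cols K n t) (K + 1) := by
        rw [Finset.sum_mul]
  _ ≤ (((L:ℝ) + 1) * (T + 1)) * csum K (cols K n t) (K + 1) := by
        apply mul_le_mul_of_nonneg_right ?_ hσt0
        rw [Finset.sum_Ico_eq_sum_range]
        have step1 : ∀ d ∈ range (t - R₁),
            ρ ^ ((t - (R₁ + d)) / (L + 1)) ≤ ρ ^ ((t - R₁ - 1 - d) / (L + 1)) := by
          intro d hd
          rw [Finset.mem_range] at hd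
          apply pow_le_pow_of_le_one hρ0 hρ1.le
          apply Nat.div_le_div_right
          omega
        calc ∑ d ∈ range (t - R₁), ρ ^ ((t - (R₁ + d)) / (L + 1))
            ≤ ∑ d ∈ range (t - R₁), ρ ^ ((t - R₁ - 1 - d) / (L + 1)) :=
              Finset.sum_le_sum step1
        _ = ∑ d ∈ range (t - R₁), ρ ^ (d / (L + 1)) :=
              Finset.sum_range_reflect (fun d => ρ ^ (d / (L + 1))) (t - R₁)
        _ ≤ ((L:ℝ) + 1) * (1 / (1 - ρ)) := geo_pack_le hρ0 hρ1 L (t - R₁)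
        _ = ((L:ℝ) + 1) * (T + 1) := by rw [hre]
  _ = (((L:ℕ):ℝ) + 1) * (T + 1) * csum K (cols K n t) (K + 1) := by ring

/-! #### Comparability of `τ` and `σ` -/

lemma tau_pointwise (K : ℕ) (n : ℕ → ℕ) (T M : ℝ) (R₁ : ℕ) (hT : 1 ≤ T) (hM0 : 0 ≤ M)
    (hanchor : ∀ r, R₁ ≤ r → 1 ≤ n (r + 1) →
      csum K (cols K n r) 0 ≤ T * csum K (cols K n r) (K + 1))
    (hMb : ∀ r, R₁ ≤ r → (n (r + 1) : ℝ) ≤ M)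
    (u : ℕ) (hu : R₁ ≤ u) :
    csum K (cols K n (u + (K + 1))) 0
      ≤ csum K (cols K n u) 0 + ((M + 1) * T + 1) * csum K (cols K n u) (K + 1) := by
  rw [tau_chain]
  have hτ0 : 0 ≤ csum K (cols K n u) 0 := csum_nonneg K (cols_nonneg K n u) 0
  have hσ0 : 0 ≤ csum K (cols K n u) (K + 1) := csum_nonneg K (cols_nonneg K n u) _
  by_cases hev : 1 ≤ n (u + 1)
  · have h1 := hanchor u hu hev
    have h2 := hMb u hu
    have h3 : (0:ℝ) ≤ (n (u+1) : ℝ) := Nat.cast_nonneg _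
    nlinarith
  · have h0 : n (u + 1) = 0 := by omega
    rw [h0]
    push_cast
    nlinarith [mul_nonneg (mul_nonneg (by linarith : (0:ℝ) ≤ M + 1)
      (by linarith : (0:ℝ) ≤ T)) hσ0]

lemma tau_comp (K : ℕ) (n : ℕ → ℕ) (T M : ℝ) (R₁ : ℕ) (hT : 1 ≤ T) (hM0 : 0 ≤ M)
    (hanchor : ∀ r, R₁ ≤ r → 1 ≤ n (r + 1) →
      csum K (cols K n r) 0 ≤ T * csum K (cols K n r) (K + 1))
    (hMb : ∀ r, R₁ ≤ r → (n (r + 1) : ℝ) ≤ M) :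
    ∀ t, csum K (cols K n t) 0
      ≤ (∑ v ∈ range (R₁ + K + 2), csum K (cols K n v) 0)
        + ((M + 1) * T + 1) * ∑ u ∈ Finset.Ico R₁ t, csum K (cols K n u) (K + 1) := by
  set B₀ := ∑ v ∈ range (R₁ + K + 2), csum K (cols K n v) 0 with hB₀
  have hC8 : (0:ℝ) ≤ (M + 1) * T + 1 := by nlinarith
  have hIco_nonneg : ∀ s : Finset ℕ, 0 ≤ ∑ u ∈ s, csum K (cols K n u) (K + 1) :=
    fun s => Finset.sum_nonneg fun u _ => csum_nonneg K (cols_nonneg K n u) _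
  intro t
  induction t using Nat.strong_induction_on with
  | _ t ih =>
    by_cases hsmall : t < R₁ + K + 2
    · have hB : csum K (cols K n t) 0 ≤ B₀ := by
        rw [hB₀]
        exact Finset.single_le_sum
          (fun v _ => csum_nonneg K (cols_nonneg K n v) 0) (Finset.mem_range.2 hsmall)
      have := hIco_nonneg (Finset.Ico R₁ t)
      nlinarith
    · push_neg at hsmall
      set u := t - (K + 1) with hu'
      have hueq : t = u + (K + 1) := by omega
      have huR : R₁ ≤ u := by omega
      have hut : u < t := by omega
      have hpt := tau_pointwise K n T M R₁ hT hM0 hanchor hMb u huR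
      rw [← hueq] at hpt
      have hih := ih u hut
      have hincl : ∑ u' ∈ Finset.Ico R₁ u, csum K (cols K n u') (K + 1)
          + csum K (cols K n u) (K + 1)
          ≤ ∑ u' ∈ Finset.Ico R₁ t, csum K (cols K n u') (K + 1) := by
        rw [← Finset.sum_Ico_succ_top huR]
        apply Finset.sum_le_sum_of_subset_of_nonneg
        · apply Finset.Ico_subset_Ico (le_refl _) (by omega)
        · intro v _ _
          exact csum_nonneg K (cols_nonneg K n v) _
      nlinarith


/-! #### All column sums comparable to `σ` -/

lemma smid_comp (K : ℕ) (n : ℕ → ℕ) (M C₇ : ℝ) (R₂ : ℕ) (hM0 : 0 ≤ M) (hC7 : 1 ≤ C₇)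
    (hτσ : ∀ u, R₂ ≤ u → csum K (cols K n u) 0 ≤ C₇ * csum K (cols K n u) (K + 1))
    (hMb : ∀ r, R₂ ≤ r → (n (r + 1) : ℝ) ≤ M) :
    ∀ t, R₂ ≤ t → ∀ j, j < K + 2 →
      csum K (cols K n t) j ≤ (C₇ * (M * C₇ + 1) ^ (K + 1)) * csum K (cols K n t) (K + 1) := by
  have hbase : (1:ℝ) ≤ M * C₇ + 1 := by nlinarith
  have hpowK : (1:ℝ) ≤ (M * C₇ + 1) ^ (K + 1) := one_le_pow₀ hbase
  have hsig_step : ∀ u, R₂ ≤ u →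
      csum K (cols K n (u + 1)) (K + 1) ≤ (M * C₇ + 1) * csum K (cols K n u) (K + 1) := by
    intro u hu
    rw [sig_step]
    have h1 := hτσ u hu
    have h2 := hMb u hu
    have h3 : (0:ℝ) ≤ (n (u + 1) : ℝ) := Nat.cast_nonneg _
    have h4 : (0:ℝ) ≤ csum K (cols K n u) 0 := csum_nonneg K (cols_nonneg K n u) 0
    have h5 : (1:ℝ) ≤ csum K (cols K n u) (K + 1) := csum_cols_ge_one K n u (K + 1) (by omega)
    nlinarith
  have hsig_pow : ∀ (j : ℕ) (u : ℕ), R₂ ≤ u →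
      csum K (cols K n (u + j)) (K + 1) ≤ (M * C₇ + 1) ^ j * csum K (cols K n u) (K + 1) := by
    intro j
    induction j with
    | zero => intro u _; simp
    | succ j ih =>
      intro u hu
      have h1 : u + (j + 1) = (u + j) + 1 := by omega
      rw [h1]
      calc csum K (cols K n ((u + j) + 1)) (K + 1)
          ≤ (M * C₇ + 1) * csum K (cols K n (u + j)) (K + 1) := hsig_step (u + j) (by omega)
      _ ≤ (M * C₇ + 1) * ((M * C₇ + 1) ^ j * csum K (cols K n u) (K + 1)) :=
          mul_le_mul_of_nonneg_left (ih u hu) (by linarith)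
      _ = (M * C₇ + 1) ^ (j + 1) * csum K (cols K n u) (K + 1) := by ring
  intro t ht j hj
  have hσ0 : (0:ℝ) ≤ csum K (cols K n t) (K + 1) := csum_nonneg K (cols_nonneg K n t) _
  by_cases hjK : j ≤ K
  · have hmid : csum K (cols K n t) j = csum K (cols K n (t + j)) 0 :=
      (s_mid K n j hjK t).symm
    have h1 := hτσ (t + j) (by omega)
    have h2 := hsig_pow j t ht
    have hpow_le : (M * C₇ + 1) ^ j ≤ (M * C₇ + 1) ^ (K + 1) :=
      pow_le_pow_right₀ hbase (by omega)
    rw [hmid]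
    calc csum K (cols K n (t + j)) 0 ≤ C₇ * csum K (cols K n (t + j)) (K + 1) := h1
    _ ≤ C₇ * ((M * C₇ + 1) ^ j * csum K (cols K n t) (K + 1)) :=
        mul_le_mul_of_nonneg_left h2 (by linarith)
    _ ≤ C₇ * ((M * C₇ + 1) ^ (K + 1) * csum K (cols K n t) (K + 1)) := by
        apply mul_le_mul_of_nonneg_left ?_ (by linarith)
        exact mul_le_mul_of_nonneg_right hpow_le hσ0
    _ = (C₇ * (M * C₇ + 1) ^ (K + 1)) * csum K (cols K n t) (K + 1) := by ring
  · have hjL : j = K + 1 := by omega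
    rw [hjL]
    nth_rewrite 1 [← one_mul (csum K (cols K n t) (K + 1))]
    apply mul_le_mul_of_nonneg_right ?_ hσ0
    nlinarith

/-! #### The eventually-zero case -/

lemma evzero_width (K : ℕ) (n : ℕ → ℕ) (u₀ : ℕ) (h0 : ∀ u, u₀ ≤ u → n u = 0) :
    ∀ η : ℝ, 0 < η → ∀ R' : ℕ, ∃ r, R' ≤ r ∧
      dist (Vv K n r K) (Vv K n r (K + 1)) < η := by
  intro η hη R'
  -- the last column (and its sum) is constant from time u₀ on
  have hγ : ∀ t, u₀ ≤ t → ∀ i, cols K n t (K + 1) i = cols K n u₀ (K + 1) i := by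
    intro t ht
    induction t with
    | zero =>
      have : u₀ = 0 := by omega
      rw [this]
      intro i; rfl
    | succ t ih =>
      intro i
      rcases Nat.lt_or_ge u₀ (t + 1) with h' | h'
      · have hstep : cols K n (t + 1) (K + 1) i
            = (n (t + 1) : ℝ) * cols K n t 0 i + cols K n t (K + 1) i := by
          show cstep K (n (t + 1)) (cols K n t) (K + 1) i = _
          unfold cstep
          rw [if_neg (by omega : ¬ K + 1 < K), if_neg (by omega : ¬ K + 1 = K)]
        rw [hstep, h0 (t + 1) (by omega), Nat.cast_zero, zero_mul, zero_add]
        exact ih (by omega) i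
      · have : u₀ = t + 1 := by omega
        rw [this]
  have hσc : ∀ t, u₀ ≤ t →
      csum K (cols K n t) (K + 1) = csum K (cols K n u₀) (K + 1) := by
    intro t ht
    unfold csum
    exact Finset.sum_congr rfl fun i _ => hγ t ht i
  -- vector-level shift and period
  have hshift : ∀ t j, j < K → ∀ i, cols K n (t + 1) j i = cols K n t (j + 1) i := by
    intro t j hj i
    show cstep K (n (t + 1)) (cols K n t) j i = _
    unfold cstep
    rw [if_pos hj]
  have hmidvec : ∀ (j : ℕ), j ≤ K → ∀ t i,
      cols K n (t + j) 0 i = cols K n t j i := by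
    intro j
    induction j with
    | zero => intro _ t i; rfl
    | succ j ih =>
      intro hj t i
      have h1 : t + (j + 1) = (t + 1) + j := by omega
      rw [h1, ih (by omega) (t + 1) i, hshift t j (by omega) i]
  have hperiod : ∀ t, u₀ ≤ t → ∀ i,
      cols K n (t + (K + 1)) 0 i = cols K n t 0 i + cols K n u₀ (K + 1) i := by
    intro t ht i
    have h1 : t + (K + 1) = (t + 1) + K := by omega
    rw [h1, hmidvec K (le_refl K) (t + 1) i]
    have hstep : cols K n (t + 1) K i
        = ((n (t + 1) : ℝ) + 1) * cols K n t 0 i + cols K n t (K + 1) i := by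
      show cstep K (n (t + 1)) (cols K n t) K i = _
      unfold cstep
      rw [if_neg (by omega : ¬ K < K), if_pos rfl]
    rw [hstep, h0 (t + 1) (by omega), Nat.cast_zero, zero_add, one_mul, hγ t ht i]
  have hperiodj : ∀ (j : ℕ) (i : ℕ),
      cols K n (u₀ + j * (K + 1)) 0 i
        = cols K n u₀ 0 i + (j : ℝ) * cols K n u₀ (K + 1) i := by
    intro j
    induction j with
    | zero => intro i; simp
    | succ j ih =>
      intro i
      have h1 : u₀ + (j + 1) * (K + 1) = (u₀ + j * (K + 1)) + (K + 1) := by ring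
      rw [h1, hperiod (u₀ + j * (K + 1)) (by omega) i, ih i]
      push_cast
      ring
  have hτj : ∀ j : ℕ, csum K (cols K n (u₀ + j * (K + 1))) 0
      = csum K (cols K n u₀) 0 + (j : ℝ) * csum K (cols K n u₀) (K + 1) := by
    intro j
    unfold csum
    rw [Finset.sum_congr rfl fun i _ => hperiodj j i, Finset.sum_add_distrib, ← Finset.mul_sum]
  -- the fixed direction vector
  set w : ℕ → ℝ := fun i =>
    csum K (cols K n u₀) (K + 1) * cols K n u₀ 0 i
      - csum K (cols K n u₀) 0 * cols K n u₀ (K + 1) i with hw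
  set W : ℝ := ‖vec2E (K + 2) w‖ with hW
  have hW0 : 0 ≤ W := norm_nonneg _
  -- choose j large
  set j : ℕ := max (R' + 1) (⌈W / η⌉₊ + 1) with hj
  have hj1 : 1 ≤ j := by omega
  have hjW : W / η < (j : ℝ) := by
    calc W / η ≤ (⌈W / η⌉₊ : ℝ) := Nat.le_ceil _
    _ < (j : ℝ) := by
        have : ⌈W / η⌉₊ < j := by omega
        exact_mod_cast this
  set r : ℕ := u₀ + j * (K + 1) with hr
  have hσ1 : (1:ℝ) ≤ csum K (cols K n u₀) (K + 1) := csum_cols_ge_one K n u₀ (K + 1) (by omega)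
  have hτ0 : (0:ℝ) ≤ csum K (cols K n u₀) 0 := csum_nonneg K (cols_nonneg K n u₀) 0
  have hτr : csum K (cols K n r) 0
      = csum K (cols K n u₀) 0 + (j : ℝ) * csum K (cols K n u₀) (K + 1) := hτj j
  have hσr : csum K (cols K n r) (K + 1) = csum K (cols K n u₀) (K + 1) :=
    hσc r (by omega)
  have hτrj : (j : ℝ) ≤ csum K (cols K n r) 0 := by
    rw [hτr]
    nlinarith [Nat.cast_nonneg (α := ℝ) j]
  have hτrpos : (0:ℝ) < csum K (cols K n r) 0 := by
    have : (0:ℝ) < (j:ℝ) := by exact_mod_cast hj1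
    linarith
  -- distance between vertex 0 and the last vertex at time r
  have hdist0 : dist (Vv K n r 0) (Vv K n r (K + 1))
      = (csum K (cols K n r) 0 * csum K (cols K n u₀) (K + 1))⁻¹ * W := by
    rw [Vv_eq K n r 0 (by omega), Vv_eq K n r (K + 1) (by omega), dist_vec2E_eq]
    have hcoord : ∀ i, (csum K (cols K n r) 0)⁻¹ * cols K n r 0 i
        - (csum K (cols K n r) (K + 1))⁻¹ * cols K n r (K + 1) i
        = (csum K (cols K n r) 0 * csum K (cols K n u₀) (K + 1))⁻¹ * w i := by
      intro i
      rw [hσr, hγ r (by omega) i, hw]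
      dsimp only
      rw [hr, hperiodj j i, hτj j]
      set A := csum K (cols K n u₀) 0 with hA
      set S := csum K (cols K n u₀) (K + 1) with hS
      have hS0 : S ≠ 0 := by rw [hS]; linarith
      have hAS : A + (j:ℝ) * S ≠ 0 := by
        have : (1:ℝ) ≤ (j:ℝ) := by exact_mod_cast hj1
        rw [hA, hS]
        nlinarith
      field_simp
      ring
    calc ‖vec2E (K + 2) (fun i => (csum K (cols K n r) 0)⁻¹ * cols K n r 0 i
          - (csum K (cols K n r) (K + 1))⁻¹ * cols K n r (K + 1) i)‖
        = ‖vec2E (K + 2) (fun i =>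
            (csum K (cols K n r) 0 * csum K (cols K n u₀) (K + 1))⁻¹ * w i)‖ := by
          rw [vec2E_congr (K + 2) hcoord]
    _ = ‖(csum K (cols K n r) 0 * csum K (cols K n u₀) (K + 1))⁻¹ • vec2E (K + 2) w‖ := by
          rw [vec2E_smul]
    _ = (csum K (cols K n r) 0 * csum K (cols K n u₀) (K + 1))⁻¹ * W := by
          rw [norm_smul, Real.norm_eq_abs, abs_of_nonneg (by positivity), hW]
  -- conclude via the width recursion
  obtain ⟨f, hf0, hfle, hfeq⟩ := width_succ K n r
  have hRr : R' ≤ r + 1 := by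
    have h6 : j ≤ j * (K + 1) := Nat.le_mul_of_pos_right _ (by omega)
    omega
  refine ⟨r + 1, hRr, ?_⟩
  have hf1 : f ≤ 1 := by
    apply le_trans hfle
    rw [div_le_one (by
      have := csum_cols_ge_one K n r (K + 1) (by omega)
      linarith)]
    have := csum_cols_ge_one K n r (K + 1) (by omega)
    linarith
  have hbound : dist (Vv K n (r + 1) K) (Vv K n (r + 1) (K + 1))
      ≤ (csum K (cols K n r) 0 * csum K (cols K n u₀) (K + 1))⁻¹ * W := by
    rw [hfeq, hdist0]
    nth_rewrite 2 [← one_mul ((csum K (cols K n r) 0 * csum K (cols K n u₀) (K + 1))⁻¹ * W)]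
    apply mul_le_mul_of_nonneg_right hf1
    positivity
  have hfinal : (csum K (cols K n r) 0 * csum K (cols K n u₀) (K + 1))⁻¹ * W < η := by
    have h1 : (j:ℝ) ≤ csum K (cols K n r) 0 * csum K (cols K n u₀) (K + 1) := by
      nlinarith
    have hjpos : (0:ℝ) < (j:ℝ) := by exact_mod_cast hj1
    have h2 : (csum K (cols K n r) 0 * csum K (cols K n u₀) (K + 1))⁻¹ ≤ (j:ℝ)⁻¹ := by
      apply inv_anti₀ hjpos h1
    calc (csum K (cols K n r) 0 * csum K (cols K n u₀) (K + 1))⁻¹ * W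
        ≤ (j:ℝ)⁻¹ * W := mul_le_mul_of_nonneg_right h2 hW0
    _ < η := by
        rw [inv_mul_lt_iff₀ hjpos]
        rw [div_lt_iff₀ hη] at hjW
        linarith
  linarith


/-! #### Topological facts -/

lemma coord_continuous (k : ℕ) (i : Fin k) : Continuous (fun α : E k => α i) := by
  exact (continuous_apply i).comp (PiLp.continuous_ofLp (p := 2) (β := fun _ : Fin k => ℝ))

lemma proj_continuous (k : ℕ) (j : ℕ) (hj : j < k) :
    Continuous (fun α : E k => proj α j) := by
  have he : (fun α : E k => proj α j) = fun α : E k => α ⟨j, hj⟩ := by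
    funext α
    simp [proj, hj]
  rw [he]
  exact coord_continuous k ⟨j, hj⟩

lemma simplex_isClosed (k : ℕ) : IsClosed (simplex k) := by
  have h1 : simplex k = (⋂ i : Fin k, {α : E k | 0 ≤ α i}) ∩ {α : E k | ∑ i, α i = 1} := by
    ext α
    constructor
    · rintro ⟨h1, h2⟩
      exact ⟨Set.mem_iInter.2 fun i => h1 i, h2⟩
    · rintro ⟨h1, h2⟩
      exact ⟨fun i => Set.mem_iInter.1 h1 i, h2⟩
  rw [h1]
  apply IsClosed.inter
  · exact isClosed_iInter fun i => isClosed_le continuous_const (coord_continuous k i)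
  · exact isClosed_eq (continuous_finset_sum _ fun i _ => coord_continuous k i) continuous_const

lemma simplex_isCompact (k : ℕ) : IsCompact (simplex k) := by
  rw [Metric.isCompact_iff_isClosed_bounded]
  refine ⟨simplex_isClosed k, ?_⟩
  apply (Metric.isBounded_closedBall (x := (0 : E k)) (r := 1)).subset
  intro α hα
  rw [Metric.mem_closedBall, EuclideanSpace.dist_eq]
  have h1 : ∀ i : Fin k, α i ≤ 1 := by
    intro i
    rw [← hα.2]
    exact Finset.single_le_sum (fun j _ => hα.1 j) (Finset.mem_univ i)
  have key : ∑ i, dist (α i) ((0 : E k) i) ^ 2 ≤ 1 := by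
    have : ∀ i : Fin k, dist (α i) ((0 : E k) i) ^ 2 ≤ α i := by
      intro i
      have hz : (0 : E k) i = 0 := rfl
      rw [hz, Real.dist_eq, sub_zero, sq_abs]
      have := hα.1 i
      nlinarith [h1 i]
    calc ∑ i, dist (α i) ((0 : E k) i) ^ 2 ≤ ∑ i, α i := Finset.sum_le_sum fun i _ => this i
    _ = 1 := hα.2
  calc Real.sqrt (∑ i, dist (α i) ((0 : E k) i) ^ 2) ≤ Real.sqrt 1 :=
        Real.sqrt_le_sqrt key
  _ = 1 := Real.sqrt_one

lemma ups_continuousOn (K : ℕ) (n : ℕ → ℕ) (r : ℕ) :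
    ContinuousOn (Ups n r) (simplex (K + 2)) := by
  have hnum : ∀ i : Fin (K + 2), Continuous
      (fun α : E (K + 2) => numf K n (fun j => proj α j) r (i : ℕ)) := by
    intro i
    apply continuous_finset_sum
    intro j hj
    exact (proj_continuous (K + 2) j (Finset.mem_range.1 hj)).mul continuous_const
  have hden : Continuous (fun α : E (K + 2) => denf K n (fun j => proj α j) r) := by
    apply continuous_finset_sum
    intro j hj
    exact (proj_continuous (K + 2) j (Finset.mem_range.1 hj)).mul continuous_const
  have hden_ne : ∀ α ∈ simplex (K + 2), denf K n (fun j => proj α j) r ≠ 0 := by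
    intro α hα
    have := denf_pos K n (fun j => proj_nonneg hα j)
      (by rw [((mem_simplex_iff α).1 hα).2]; norm_num) r
    exact this.ne'
  have hg : ContinuousOn (fun α : E (K + 2) => mixE K n (fun j => proj α j) r)
      (simplex (K + 2)) := by
    unfold mixE vec2E
    apply Continuous.comp_continuousOn (PiLp.continuous_toLp (p := 2) (β := fun _ : Fin (K+2) => ℝ))
    rw [continuousOn_pi]
    intro i
    exact ((hden.continuousOn.inv₀ hden_ne).mul (hnum i).continuousOn)
  apply ContinuousOn.congr hg
  intro α hα
  exact ups_rep K n r α hα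

lemma anr_isCompact (K : ℕ) (n : ℕ → ℕ) (r : ℕ) : IsCompact (Anr (K + 2) n r) :=
  (simplex_isCompact (K + 2)).image_of_continuousOn (ups_continuousOn K n r)

lemma anr_nonempty (K : ℕ) (n : ℕ → ℕ) (r : ℕ) : (Anr (K + 2) n r).Nonempty :=
  ⟨Vv K n r 0, Vv_mem_Anr K n r 0 (by omega)⟩

lemma anr_antitone_succ (K : ℕ) (n : ℕ → ℕ) (r : ℕ) :
    Anr (K + 2) n (r + 1) ⊆ Anr (K + 2) n r := by
  rintro x ⟨α, hα, rfl⟩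
  exact ⟨Kinv (n (r + 1)) α, kinv_mem K (n (r + 1)) α hα, rfl⟩

lemma anr_antitone (K : ℕ) (n : ℕ → ℕ) {r r' : ℕ} (h : r ≤ r') :
    Anr (K + 2) n r' ⊆ Anr (K + 2) n r := by
  induction r' with
  | zero =>
    have : r = 0 := by omega
    rw [this]
  | succ r' ih =>
    rcases Nat.lt_or_ge r (r' + 1) with h' | h'
    · exact subset_trans (anr_antitone_succ K n r') (ih (by omega))
    · have : r = r' + 1 := by omega
      rw [this]

lemma fnr_subset_anr (K : ℕ) (n : ℕ → ℕ) (r : ℕ) :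
    Fnr (K + 2) n r ⊆ Anr (K + 2) n r :=
  Set.image_mono fun α hα => hα.1

lemma inter_anr_nonempty (K : ℕ) (n : ℕ → ℕ) : (⋂ s, Anr (K + 2) n s).Nonempty := by
  apply IsCompact.nonempty_iInter_of_sequence_nonempty_isCompact_isClosed
  · exact fun r => anr_antitone_succ K n r
  · exact fun r => anr_nonempty K n r
  · exact anr_isCompact K n 0
  · exact fun r => (anr_isCompact K n r).isClosed

lemma fnr_eventually_near (K : ℕ) (n : ℕ → ℕ) {η : ℝ} (hη : 0 < η) :
    ∃ R₃ : ℕ, ∀ r, R₃ ≤ r → ∀ x ∈ Fnr (K + 2) n r,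
      ∃ a ∈ ⋂ s, Anr (K + 2) n s, dist x a ≤ η := by
  set A := ⋂ s, Anr (K + 2) n s with hA
  set U := Metric.thickening η A with hU
  have hAU : A ⊆ U := by
    intro a ha
    rw [hU, Metric.mem_thickening_iff]
    exact ⟨a, ha, by simpa using hη⟩
  have hex : ∃ r₀, Anr (K + 2) n r₀ \ U = ∅ := by
    by_contra hcon
    push_neg at hcon
    have hne : ∀ r, (Anr (K + 2) n r \ U).Nonempty := hcon
    have hcompact : ∀ r, IsCompact (Anr (K + 2) n r \ U) := by
      intro r
      have : Anr (K + 2) n r \ U = Anr (K + 2) n r ∩ Uᶜ := Set.diff_eq _ _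
      rw [this]
      exact (anr_isCompact K n r).inter_right (Metric.isOpen_thickening).isClosed_compl
    have hnested : ∀ r, Anr (K + 2) n (r + 1) \ U ⊆ Anr (K + 2) n r \ U :=
      fun r => Set.diff_subset_diff_left (anr_antitone_succ K n r)
    obtain ⟨x, hx⟩ :=
      IsCompact.nonempty_iInter_of_sequence_nonempty_isCompact_isClosed
        (t := fun r => Anr (K + 2) n r \ U)
        hnested hne (hcompact 0) (fun r => (hcompact r).isClosed)
    rw [Set.mem_iInter] at hx
    have hxA : x ∈ A := by
      rw [hA, Set.mem_iInter]
      exact fun s => (hx s).1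
    exact (hx 0).2 (hAU hxA)
  obtain ⟨r₀, hr₀⟩ := hex
  refine ⟨r₀, fun r hr x hx => ?_⟩
  have hxAnr : x ∈ Anr (K + 2) n r₀ :=
    anr_antitone K n hr (fnr_subset_anr K n r hx)
  have hxU : x ∈ U := by
    by_contra hxu
    have : x ∈ Anr (K + 2) n r₀ \ U := ⟨hxAnr, hxu⟩
    rw [hr₀] at this
    exact this
  rw [hU, Metric.mem_thickening_iff] at hxU
  obtain ⟨a, haA, hd⟩ := hxU
  exact ⟨a, haA, hd.le⟩


end Stmt0Aux


set_option maxHeartbeats 2000000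

/-- for every `k ≥ 2`, `n ∈ ℕ^ℕ` and `ε > 0`, there are infinitely many `r`
with `d_H(F_{n,r}, ⋂_s A_{n,s}) < ε`. -/
theorem stmt0 (k : ℕ) (hk : 2 ≤ k) (n : ℕ → ℕ) (ε : ℝ) (hε : 0 < ε) :
    ∀ R : ℕ, ∃ r, R ≤ r ∧ Metric.hausdorffDist (Fnr k n r) (⋂ s, Anr k n s) < ε := by
  obtain ⟨K, rfl⟩ : ∃ K, k = K + 2 := ⟨k - 2, by omega⟩
  intro R
  by_contra hcon
  push_neg at hcon
  set ε' : ℝ := min ε 1 / 2 with hε'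
  have hε'pos : 0 < ε' := by
    rw [hε']
    have : 0 < min ε 1 := lt_min hε one_pos
    linarith
  have hε'le : ε' ≤ 1 / 2 := by
    rw [hε']
    have : min ε 1 ≤ 1 := min_le_right _ _
    linarith
  have hε'ltε : ε' < ε := by
    rw [hε']
    have : min ε 1 ≤ ε := min_le_left _ _
    linarith
  have hfail : ∀ r, R ≤ r →
      ε' ≤ Metric.hausdorffDist (Fnr (K + 2) n r) (⋂ s, Anr (K + 2) n s) :=
    fun r hr => le_trans hε'ltε.le (hcon r hr)
  set A := ⋂ s, Anr (K + 2) n s with hA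
  obtain ⟨R₃, hR₃⟩ := fnr_eventually_near K n (half_pos hε'pos)
  set R₁ := max R R₃ + 1 with hR₁
  have hbad : ∀ r, R₁ ≤ r → ∃ a ∈ A, ∀ y ∈ Fnr (K + 2) n r, ε' / 2 < dist a y := by
    intro r hr
    by_contra hno
    push_neg at hno
    have hdH : Metric.hausdorffDist (Fnr (K + 2) n r) A ≤ ε' / 2 := by
      apply Metric.hausdorffDist_le_of_mem_dist (by positivity)
      · intro x hx
        exact hR₃ r (by omega) x hx
      · intro a ha
        exact hno a ha
    have := hfail r (by omega)
    linarith
  have hsub_r : ∀ r, A ⊆ Anr (K + 2) n r := fun r => Set.iInter_subset _ r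
  have hWid : ∀ r, R₁ ≤ r → ε' / 2 < dist (Vv K n r K) (Vv K n r (K + 1)) := by
    intro r hr
    obtain ⟨a, haA, hfar⟩ := hbad r hr
    obtain ⟨y, hy, hd⟩ := tool_II K n r (hsub_r r haA)
    exact lt_of_lt_of_le (hfar y hy) hd
  have hQ : ∀ r, R₁ ≤ r → ε' / 2 < Real.sqrt 2 * (csum K (cols K n r) (K + 1)
      / ((n (r + 1) : ℝ) * csum K (cols K n r) 0 + csum K (cols K n r) (K + 1))) := by
    intro r hr
    obtain ⟨a, haA, hfar⟩ := hbad r hr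
    obtain ⟨y, hy, hd⟩ := tool_III K n r (hsub_r (r + 1) haA)
    exact lt_of_lt_of_le (hfar y hy) hd
  set T : ℝ := 8 / ε' with hT'
  have hTε : T * ε' = 8 := by
    rw [hT']
    field_simp
  have hT1 : 1 ≤ T := by
    rw [hT', le_div_iff₀ hε'pos]
    linarith
  have hsqrt2 : Real.sqrt 2 ≤ 2 := by
    nlinarith [Real.sq_sqrt (by norm_num : (0:ℝ) ≤ 2), Real.sqrt_nonneg 2]
  have hsqrt2' : 0 ≤ Real.sqrt 2 := Real.sqrt_nonneg 2
  -- derive the three regime inequalities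
  have hQ' : ∀ r, R₁ ≤ r → ε' / 2 * ((n (r + 1) : ℝ) * csum K (cols K n r) 0
      + csum K (cols K n r) (K + 1)) < 2 * csum K (cols K n r) (K + 1) := by
    intro r hr
    have h1 := hQ r hr
    set τ := csum K (cols K n r) 0
    set σ := csum K (cols K n r) (K + 1)
    have hτ1 : (1:ℝ) ≤ τ := csum_cols_ge_one K n r 0 (by omega)
    have hσ1 : (1:ℝ) ≤ σ := csum_cols_ge_one K n r (K + 1) (by omega)
    have hm0 : (0:ℝ) ≤ (n (r + 1) : ℝ) := Nat.cast_nonneg _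
    have hB : (0:ℝ) < (n (r + 1) : ℝ) * τ + σ := by nlinarith
    rw [mul_div_assoc'] at h1
    rw [lt_div_iff₀ hB] at h1
    have h2 : Real.sqrt 2 * σ ≤ 2 * σ := by nlinarith
    linarith
  have habove : ∀ r, R₁ ≤ r →
      csum K (cols K n r) (K + 1) ≤ T * csum K (cols K n r) 0 := by
    intro r hr
    obtain ⟨f, hf0, hfle, hfeq⟩ := width_succ K n r
    have h1 := hWid (r + 1) (by omega)
    rw [hfeq] at h1
    set τ := csum K (cols K n r) 0
    set σ := csum K (cols K n r) (K + 1)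
    have hτ1 : (1:ℝ) ≤ τ := csum_cols_ge_one K n r 0 (by omega)
    have hσ1 : (1:ℝ) ≤ σ := csum_cols_ge_one K n r (K + 1) (by omega)
    have hdle : dist (Vv K n r 0) (Vv K n r (K + 1)) ≤ 2 :=
      le_trans (dist_le_sqrt_two (Vv_mem_simplex K n r 0 (by omega))
        (Vv_mem_simplex K n r (K + 1) (by omega))) hsqrt2
    have h2 : f * dist (Vv K n r 0) (Vv K n r (K + 1)) ≤ (τ / (τ + σ)) * 2 :=
      mul_le_mul hfle hdle dist_nonneg (by positivity)
    have h3 : ε' / 2 < τ / (τ + σ) * 2 := lt_of_lt_of_le h1 h2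
    have hτσ : (0:ℝ) < τ + σ := by linarith
    rw [div_mul_eq_mul_div, lt_div_iff₀ hτσ] at h3
    -- ε'/2 (τ+σ) < 2τ  ⟹ ε' σ < 4 τ ⟹ σ ≤ (8/ε') τ
    nlinarith [hTε, hε'pos, mul_le_mul_of_nonneg_right hT1 (le_trans zero_le_one hτ1)]
  have hanchor : ∀ r, R₁ ≤ r → 1 ≤ n (r + 1) →
      csum K (cols K n r) 0 ≤ T * csum K (cols K n r) (K + 1) := by
    intro r hr hev
    have h1 := hQ' r hr
    set τ := csum K (cols K n r) 0
    set σ := csum K (cols K n r) (K + 1)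
    have hτ1 : (1:ℝ) ≤ τ := csum_cols_ge_one K n r 0 (by omega)
    have hσ1 : (1:ℝ) ≤ σ := csum_cols_ge_one K n r (K + 1) (by omega)
    have hm1 : (1:ℝ) ≤ (n (r + 1) : ℝ) := by exact_mod_cast hev
    -- ε'/2 (m τ + σ) < 2 σ and τ ≤ m τ ⟹ ε' τ < 4 σ ⟹ τ ≤ T σ
    have h2 : ε' / 2 * τ < 2 * σ := by nlinarith
    nlinarith [hTε, hε'pos, mul_le_mul_of_nonneg_right hT1 (le_trans zero_le_one hσ1)]
  set M : ℝ := T * T with hM'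
  have hM0 : (0:ℝ) ≤ M := by nlinarith
  have hMb : ∀ r, R₁ ≤ r → (n (r + 1) : ℝ) ≤ M := by
    intro r hr
    by_cases hev : 1 ≤ n (r + 1)
    · have h1 := hQ' r hr
      set τ := csum K (cols K n r) 0 with hτd
      set σ := csum K (cols K n r) (K + 1) with hσd
      have hτ1 : (1:ℝ) ≤ τ := csum_cols_ge_one K n r 0 (by omega)
      have hσ1 : (1:ℝ) ≤ σ := csum_cols_ge_one K n r (K + 1) (by omega)
      have hab := habove r hr
      rw [← hτd, ← hσd] at hab
      have hm0 : (0:ℝ) ≤ (n (r + 1) : ℝ) := Nat.cast_nonneg _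
      -- ε'/2 m τ < 2 σ ≤ 2 T τ ⟹  m ε' < 4 T ⟹ m ≤ T²
      have h2 : ε' / 2 * ((n (r + 1) : ℝ) * τ) < 2 * (T * τ) := by nlinarith
      have h3 : ε' / 2 * (n (r + 1) : ℝ) < 2 * T := by
        have hτpos : (0:ℝ) < τ := by linarith
        by_contra hge
        push_neg at hge
        have := mul_le_mul_of_nonneg_right hge hτpos.le
        nlinarith
      rw [hM']
      nlinarith [hTε, hε'pos]
    · have : n (r + 1) = 0 := by omega
      rw [this]
      simpa using hM0
  -- case split on eventual vanishing
  by_cases hez : ∃ u₀, ∀ u, u₀ ≤ u → n u = 0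
  · obtain ⟨u₀, hu₀⟩ := hez
    obtain ⟨r, hrR, hw⟩ := evzero_width K n u₀ hu₀ (ε' / 2) (by positivity) R₁
    have := hWid r hrR
    linarith
  · push_neg at hez
    have hinf : ∀ u₀, ∃ u, u₀ ≤ u ∧ 1 ≤ n (u + 1) := by
      intro u₀
      obtain ⟨u, hu, hne⟩ := hez (u₀ + 1)
      refine ⟨u - 1, by omega, ?_⟩
      have he : u - 1 + 1 = u := by omega
      rw [he]
      omega
    -- comparability constants
    obtain ⟨R₂, hR₂₁, hR₂⟩ := sigma_unbounded K n T R₁ hT1 hanchor habove hinf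
      (∑ v ∈ Finset.range (R₁ + K + 2), csum K (cols K n v) 0)
    set D : ℝ := ((((K + 1) * (⌈T⌉₊ + 2) : ℕ)) + 1 : ℝ) * (T + 1) with hD
    have hD0 : 0 ≤ D := by
      rw [hD]
      have h1 : (0:ℝ) ≤ (((K + 1) * (⌈T⌉₊ + 2) : ℕ) : ℝ) := Nat.cast_nonneg _
      nlinarith
    set C₈ : ℝ := (M + 1) * T + 1 with hC₈
    have hC₈0 : 0 ≤ C₈ := by rw [hC₈]; nlinarith
    set C₇ : ℝ := C₈ * D + 1 with hC₇
    have hC71 : 1 ≤ C₇ := by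
      rw [hC₇]
      nlinarith
    have hτσ : ∀ t, R₂ ≤ t →
        csum K (cols K n t) 0 ≤ C₇ * csum K (cols K n t) (K + 1) := by
      intro t ht
      have h1 := tau_comp K n T M R₁ hT1 hM0 hanchor hMb t
      have h2 := sum_sigma_le K n T R₁ hT1 hanchor habove hinf t (le_trans hR₂₁ ht)
      have h3 := hR₂ t ht
      rw [← hC₈] at h1
      rw [← hD] at h2
      have hσnn : 0 ≤ csum K (cols K n t) (K + 1) :=
        csum_nonneg K (cols_nonneg K n t) _
      rw [hC₇]
      nlinarith [mul_le_mul_of_nonneg_left h2 hC₈0]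
    set C₅ : ℝ := C₇ * (M * C₇ + 1) ^ (K + 1) with hC₅
    have hMC1 : (1:ℝ) ≤ M * C₇ + 1 := by nlinarith
    have hC51 : 1 ≤ C₅ := by
      rw [hC₅]
      have := one_le_pow₀ (n := K + 1) hMC1
      nlinarith
    have hsm := smid_comp K n M C₇ R₂ hM0 hC71 hτσ
      (fun r hr => hMb r (le_trans hR₂₁ hr))
    -- contraction
    set c : ℝ := 1 / ((M + 2) ^ (K + 2) * C₅) with hc
    have hMC2 : (1:ℝ) ≤ (M + 2) ^ (K + 2) * C₅ := by
      have h1 : (1:ℝ) ≤ (M + 2) ^ (K + 2) := one_le_pow₀ (by nlinarith)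
      nlinarith
    have hc0 : 0 < c := by
      rw [hc]
      have : (0:ℝ) < (M + 2) ^ (K + 2) * C₅ := by linarith
      positivity
    have hc1 : c ≤ 1 := by
      rw [hc, div_le_one (by linarith)]
      exact hMC2
    have hpw : ∀ i : ℕ, ∀ a, a < K + 2 → ∀ b, b < K + 2 →
        dist (Vv K n (R₂ + i * (K + 2)) a) (Vv K n (R₂ + i * (K + 2)) b)
          ≤ (1 - c) ^ i * Real.sqrt 2 := by
      intro i
      induction i with
      | zero =>
        intro a ha b hb
        simpa using dist_le_sqrt_two (Vv_mem_simplex K n R₂ a ha)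
          (Vv_mem_simplex K n R₂ b hb)
      | succ i ih =>
        intro a ha b hb
        have heq : R₂ + (i + 1) * (K + 2) = (R₂ + i * (K + 2)) + (K + 2) := by ring
        rw [heq]
        have hRt : R₂ ≤ R₂ + i * (K + 2) := Nat.le_add_right _ _
        have hstep := contract_step K n (R₂ + i * (K + 2)) M C₅ hM0 hC51
          (fun u hu => hMb u (le_trans hR₂₁ (le_trans hRt hu)))
          (fun j hj => hsm (R₂ + i * (K + 2)) hRt j hj)
          (mul_nonneg (pow_nonneg (by linarith : (0:ℝ) ≤ 1 - c) i) hsqrt2')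
          ih a ha b hb
        calc dist (Vv K n ((R₂ + i * (K + 2)) + (K + 2)) a)
              (Vv K n ((R₂ + i * (K + 2)) + (K + 2)) b)
            ≤ (1 - 1 / ((M + 2) ^ (K + 2) * C₅)) * ((1 - c) ^ i * Real.sqrt 2) := hstep
        _ = (1 - c) ^ (i + 1) * Real.sqrt 2 := by
            rw [← hc]
            ring
    have hlt1 : 1 - c < 1 := by linarith
    have h1c0 : (0:ℝ) ≤ 1 - c := by linarith
    obtain ⟨i, hi⟩ := exists_pow_lt_of_lt_one (show (0:ℝ) < ε' / 4 by linarith) hlt1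
    have hrbig : R₁ ≤ R₂ + i * (K + 2) := le_trans hR₂₁ (Nat.le_add_right _ _)
    have hfin := hWid (R₂ + i * (K + 2)) hrbig
    have hcontr := hpw i K (by omega) (K + 1) (by omega)
    have hsmall : (1 - c) ^ i * Real.sqrt 2 < ε' / 2 := by
      have h1 : (1 - c) ^ i * Real.sqrt 2 ≤ (1 - c) ^ i * 2 :=
        mul_le_mul_of_nonneg_left hsqrt2 (pow_nonneg h1c0 i)
      nlinarith
    linarith


end BetaDF
end

section
/- For every integer k ≥ 2, the map S : N → Σ is strictly order-preserving (m < n in N implies S(m) < S(n) in the lexicographic order on Σ) and continuous; consequently S is a homeomorphism from N onto its image S(N) ⊆ Σ. -/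
open Filter Topology
open scoped Classical

namespace BetaDF

/-- The metric topology on `N`, generated by the open balls of the metric `dN`. -/
noncomputable instance : TopologicalSpace NN :=
  TopologicalSpace.generateFrom {B | ∃ (m : NN) (ε : ℝ), B = {p : NN | dN p m < ε}}


/-! ### Auxiliary development for `stmt2` -/

section Aux

variable {k : ℕ}

/-- Agreement of two sequences on the first `t` entries. -/
def agreeUpTo (t : ℕ) (u v : Seq) : Prop := ∀ s, s < t → u s = v s

lemma lamWord_length_pos (k a i : ℕ) : 0 < (lamWord k a i).length := by
  unfold lamWord
  split_ifs <;> simp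

lemma lamWord_length_le (k a i : ℕ) : (lamWord k a i).length ≤ a + 2 := by
  unfold lamWord
  split_ifs <;> simp

lemma lamWord_head_pos (k a i : ℕ) (hk : 2 ≤ k) : 1 ≤ (lamWord k a i).getD 0 0 := by
  unfold lamWord
  split_ifs <;> simp <;> omega

lemma lamWord_head_lt (k a i : ℕ) (hk : 2 ≤ k) : (lamWord k a i).getD 0 0 < k := by
  unfold lamWord
  split_ifs with h1 h2 <;> simp <;> omega

lemma lamWord_top (k a : ℕ) (hk : 2 ≤ k) :
    lamWord k a (k - 1) = (k - 1) :: List.replicate a 0 := by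
  unfold lamWord
  rw [if_neg (by omega), if_neg (by omega)]

lemma lamWord_sub (k a : ℕ) (hk : 2 ≤ k) :
    lamWord k a (k - 2) = (k - 1) :: List.replicate (a + 1) 0 := by
  unfold lamWord
  rw [if_neg (by omega), if_pos (by omega)]

lemma lamWord_low (k a i : ℕ) (h : i + 2 < k) : lamWord k a i = [i + 1] := by
  unfold lamWord
  rw [if_pos h]

/-- The flattened word image of the first `t` entries of `w`. -/
def preL (k a : ℕ) (w : Seq) (t : ℕ) : List ℕ :=
  ((List.range t).map fun r => lamWord k a (w r)).flatten

lemma preL_zero (k a : ℕ) (w : Seq) : preL k a w 0 = [] := rfl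

lemma preL_succ (k a : ℕ) (w : Seq) (t : ℕ) :
    preL k a w (t + 1) = preL k a w t ++ lamWord k a (w t) := by
  unfold preL
  rw [List.range_succ, List.map_append, List.flatten_append]
  simp

lemma preL_len_ge (k a : ℕ) (w : Seq) (t : ℕ) : t ≤ (preL k a w t).length := by
  induction t with
  | zero => simp [preL_zero]
  | succ t ih =>
    rw [preL_succ, List.length_append]
    have := lamWord_length_pos k a (w t)
    omega

lemma preL_len_le (k a : ℕ) (w : Seq) (t : ℕ) : (preL k a w t).length ≤ t * (a + 2) := by
  induction t with
  | zero => simp [preL_zero]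
  | succ t ih =>
    rw [preL_succ, List.length_append]
    have := lamWord_length_le k a (w t)
    have : (t+1) * (a+2) = t * (a+2) + (a+2) := by ring
    omega

lemma preL_prefix (k a : ℕ) (w : Seq) {t t' : ℕ} (h : t ≤ t') :
    preL k a w t <+: preL k a w t' := by
  induction t' with
  | zero => rw [Nat.le_zero.mp h]
  | succ t' ih =>
    rcases Nat.lt_or_ge t (t' + 1) with h' | h'
    · have := ih (by omega)
      rw [preL_succ]
      exact this.trans (List.prefix_append _ _)
    · have : t = t' + 1 := by omega
      rw [this]

lemma lamSub_eq_preL (k a : ℕ) (w : Seq) {t m : ℕ} (h : m < (preL k a w t).length) :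
    lamSub k a w m = (preL k a w t).getD m 0 := by
  have hdef : lamSub k a w m = (preL k a w (m + 1)).getD m 0 := rfl
  rw [hdef]
  have hm : m < (preL k a w (m + 1)).length := by
    have := preL_len_ge k a w (m + 1); omega
  rcases Nat.le_total (m + 1) t with hle | hle
  · have hp := preL_prefix k a w hle
    rw [List.getD_eq_getElem _ _ hm, List.getD_eq_getElem _ _ h]
    exact hp.getElem hm
  · have hp := preL_prefix k a w hle
    rw [List.getD_eq_getElem _ _ hm, List.getD_eq_getElem _ _ h]
    exact (hp.getElem h).symm

lemma preL_congr (k a : ℕ) {t : ℕ} {u v : Seq} (h : agreeUpTo t u v) :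
    preL k a u t = preL k a v t := by
  unfold preL
  congr 1
  apply List.map_congr_left
  intro r hr
  rw [h r (List.mem_range.mp hr)]

lemma agree_lamSub (k a : ℕ) {t : ℕ} {u v : Seq} (h : agreeUpTo t u v) :
    agreeUpTo (preL k a u t).length (lamSub k a u) (lamSub k a v) := by
  intro m hm
  rw [lamSub_eq_preL k a u hm, preL_congr k a h,
    lamSub_eq_preL k a v (by rwa [← preL_congr k a h])]

lemma lamSub_getIn (k a : ℕ) (w : Seq) (t : ℕ) {q : ℕ} (hq : q < (lamWord k a (w t)).length) :
    lamSub k a w ((preL k a w t).length + q) = (lamWord k a (w t)).getD q 0 := by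
  have h : (preL k a w t).length + q < (preL k a w (t + 1)).length := by
    rw [preL_succ, List.length_append]; omega
  rw [lamSub_eq_preL k a w h, preL_succ,
    List.getD_append_right _ _ _ _ (by omega)]
  congr 1
  omega

lemma preL_len_lb (k a : ℕ) (w : Seq) (hk : 2 ≤ k) (h0 : w 0 = k - 1) {t : ℕ} (ht : 1 ≤ t) :
    t + a ≤ (preL k a w t).length := by
  induction t with
  | zero => omega
  | succ t ih =>
    rcases Nat.eq_or_lt_of_le ht with h1 | h1
    · have : t = 0 := by omega
      subst this
      have : preL k a w 1 = lamWord k a (w 0) := by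
        rw [show (1:ℕ) = 0 + 1 from rfl, preL_succ, preL_zero, List.nil_append]
      rw [this, h0, lamWord_top k a hk]
      simp
      omega
    · have := ih (by omega)
      rw [preL_succ, List.length_append]
      have := lamWord_length_pos k a (w t)
      omega

end Aux

/-- The key one-substitution step preserving the "first difference" invariant. -/
lemma stepLemma (k : ℕ) (hk : 2 ≤ k) (c : ℕ) {u v : Seq} {d i j : ℕ}
    (hd : 1 ≤ d) (h0 : u 0 = k - 1) (hag : agreeUpTo d u v)
    (hu : u d = i) (hv : v d = j) (hij : i < j) (hj : j < k) :
    ∃ d' i' j', 1 ≤ d' ∧ agreeUpTo d' (lamSub k c u) (lamSub k c v) ∧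
      lamSub k c u d' = i' ∧ lamSub k c v d' = j' ∧ i' < j' ∧ j' < k ∧
      d + c ≤ d' ∧ d' ≤ (d + 1) * (c + 2) ∧
      (k-1)*d + i + c + 1 ≤ (k-1)*d' + i' := by
  set L := (preL k c u d).length with hLdef
  have hpre : preL k c u d = preL k c v d := preL_congr k c hag
  have hLv : (preL k c v d).length = L := by rw [← hpre]
  have hL1 : d + c ≤ L := preL_len_lb k c u hk h0 hd
  have hLu : L ≤ d * (c + 2) := preL_len_le k c u d
  have hagL : agreeUpTo L (lamSub k c u) (lamSub k c v) := agree_lamSub k c hag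
  have hK : 1 ≤ k - 1 := by omega
  have hmul : (k-1) * (d + c) ≤ (k-1) * L := Nat.mul_le_mul_left _ hL1
  have hmul2 : c ≤ (k-1) * c := Nat.le_mul_of_pos_left c (by omega)
  by_cases hi : i + 2 < k
  · -- climb case
    have hu' : lamSub k c u L = i + 1 := by
      have := lamSub_getIn k c u d (q := 0) (lamWord_length_pos k c (u d))
      rw [Nat.add_zero] at this
      rw [this, hu, lamWord_low k c i hi]
      rfl
    refine ⟨L, i + 1, (lamWord k c (v d)).getD 0 0, by omega, hagL, hu', ?_, ?_, ?_, ?_, ?_, ?_⟩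
    · have := lamSub_getIn k c v d (q := 0) (lamWord_length_pos k c (v d))
      rw [Nat.add_zero, hLv] at this
      exact this
    · rw [hv]
      by_cases hj2 : j + 2 < k
      · rw [lamWord_low k c j hj2]; simpa using hij
      · have : lamWord k c j = (k-1) :: (if j + 2 = k then List.replicate (c+1) 0
            else List.replicate c 0) := by
          unfold lamWord
          rw [if_neg hj2]
          split_ifs <;> simp <;> omega
        rw [this]
        simp only [List.getD_cons_zero]
        omega
    · exact lamWord_head_lt k c (v d) hk
    · omega
    · calc L ≤ d * (c + 2) := hLu
        _ ≤ (d + 1) * (c + 2) := by nlinarith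
    · have : (k-1) * (d + c) = (k-1)*d + (k-1)*c := by ring
      omega
  · -- reset case: i = k-2, j = k-1
    have hik : i = k - 2 := by omega
    have hjk : j = k - 1 := by omega
    have hwu : lamWord k c (u d) = (k - 1) :: List.replicate (c + 1) 0 := by
      rw [hu, hik]; exact lamWord_sub k c hk
    have hwv : lamWord k c (v d) = (k - 1) :: List.replicate c 0 := by
      rw [hv, hjk]; exact lamWord_top k c hk
    have hag' : agreeUpTo (L + c + 1) (lamSub k c u) (lamSub k c v) := by
      intro s hs
      rcases Nat.lt_or_ge s L with h | h
      · exact hagL s h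
      · obtain ⟨q, rfl⟩ : ∃ q, s = L + q := ⟨s - L, by omega⟩
        have hq : q ≤ c := by omega
        have h1 := lamSub_getIn k c u d (q := q) (by rw [hwu]; simp; omega)
        have h2 := lamSub_getIn k c v d (q := q) (by rw [hwv]; simp; omega)
        rw [hLv] at h2
        rw [h1, h2, hwu, hwv]
        cases q with
        | zero => rfl
        | succ q' =>
          simp only [List.getD_cons_succ, List.getD_eq_getElem?_getD,
            List.getElem?_cons_succ, List.getElem?_replicate]
          rw [if_pos (by omega : q' < c + 1), if_pos (by omega : q' < c)]
    have hu' : lamSub k c u (L + (c + 1)) = 0 := by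
      have := lamSub_getIn k c u d (q := c + 1) (by rw [hwu]; simp)
      rw [this, hwu]
      simp [List.getD_cons_succ, List.getD_eq_getElem?_getD]
    have hlen1 : (preL k c v (d + 1)).length = L + c + 1 := by
      rw [preL_succ, List.length_append, hLv, hwv]
      simp
      omega
    have hv' : lamSub k c v (L + (c + 1)) =
        (lamWord k c (v (d + 1))).getD 0 0 := by
      have h5 := lamSub_getIn k c v (d + 1) (q := 0) (lamWord_length_pos k c (v (d+1)))
      rw [Nat.add_zero, hlen1] at h5
      have heq : L + (c + 1) = L + c + 1 := by omega
      rw [heq, h5]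
    refine ⟨L + (c + 1), 0, (lamWord k c (v (d+1))).getD 0 0, by omega, ?_, hu', hv',
      lamWord_head_pos k c (v (d+1)) hk, lamWord_head_lt k c (v (d+1)) hk, by omega, ?_, ?_⟩
    · intro s hs; exact hag' s (by omega)
    · calc L + (c + 1) ≤ d * (c + 2) + (c + 2) := by omega
        _ = (d + 1) * (c + 2) := by ring
    · have e1 : (k-1) * (L + (c+1)) = (k-1)*L + (k-1)*c + (k-1) := by ring
      have e2 : (k-1) * (d + c) = (k-1)*d + (k-1)*c := by ring
      omega



section Chain

/-- Concatenation of a finite word with an infinite sequence. -/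
def catL (L : List ℕ) (v : Seq) : Seq := fun m =>
  if m < L.length then L.getD m 0 else v (m - L.length)

lemma map_range_getD (L : List ℕ) :
    (List.range L.length).map (fun r => L.getD r 0) = L := by
  apply List.ext_getElem
  · simp
  · intro n h1 h2
    simp [List.getD_eq_getElem?_getD, List.getElem?_eq_getElem h2]

lemma preL_catL (k a : ℕ) (L : List ℕ) (v : Seq) :
    preL k a (catL L v) L.length = L.flatMap (lamWord k a) := by
  unfold preL
  rw [List.flatMap_def]
  congr 1
  have h1 : ∀ r ∈ List.range L.length,
      lamWord k a (catL L v r) = lamWord k a (L.getD r 0) := by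
    intro r hr
    rw [List.mem_range] at hr
    simp [catL, if_pos hr]
  rw [List.map_congr_left h1, show (fun r => lamWord k a (L.getD r 0)) =
    (lamWord k a) ∘ (fun r => L.getD r 0) from rfl, ← List.map_map, map_range_getD]

lemma preL_catL_add (k a : ℕ) (L : List ℕ) (v : Seq) (t : ℕ) :
    preL k a (catL L v) (L.length + t) = L.flatMap (lamWord k a) ++ preL k a v t := by
  induction t with
  | zero => rw [Nat.add_zero, preL_catL, preL_zero, List.append_nil]
  | succ t ih =>
    rw [show L.length + (t+1) = (L.length + t) + 1 from rfl, preL_succ, ih, preL_succ,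
      List.append_assoc]
    congr 3
    simp [catL]

lemma lamSub_catL (k a : ℕ) (L : List ℕ) (v : Seq) :
    lamSub k a (catL L v) = catL (L.flatMap (lamWord k a)) (lamSub k a v) := by
  funext m
  by_cases hm : m < (L.flatMap (lamWord k a)).length
  · have h1 : m < (preL k a (catL L v) L.length).length := by rw [preL_catL]; exact hm
    rw [lamSub_eq_preL k a _ h1, preL_catL, catL, if_pos hm]
  · push_neg at hm
    obtain ⟨q, rfl⟩ : ∃ q, m = (L.flatMap (lamWord k a)).length + q :=
      ⟨m - (L.flatMap (lamWord k a)).length, by omega⟩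
    have hq : q < (preL k a v (q+1)).length := by have := preL_len_ge k a v (q+1); omega
    have h1 : (L.flatMap (lamWord k a)).length + q
        < (preL k a (catL L v) (L.length + (q+1))).length := by
      rw [preL_catL_add, List.length_append]; omega
    rw [lamSub_eq_preL k a _ h1, preL_catL_add,
      List.getD_append_right _ _ _ _ (by omega), catL, if_neg (by omega)]
    have h6 : (L.flatMap (lamWord k a)).length + q - (L.flatMap (lamWord k a)).length = q := by
      omega
    rw [h6, lamSub_eq_preL k a v hq]

/-- Word-level version of `lamChain`. -/
def CL (k : ℕ) (g : ℕ → ℕ) : ℕ → List ℕ → List ℕ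
  | 0, L => L.flatMap (lamWord k (g 0))
  | r + 1, L => CL k g r (L.flatMap (lamWord k (g (r + 1))))

lemma lamChain_catL (k : ℕ) (g : ℕ → ℕ) (r : ℕ) (L : List ℕ) (v : Seq) :
    lamChain k g r (catL L v) = catL (CL k g r L) (lamChain k g r v) := by
  induction r generalizing L v with
  | zero => exact lamSub_catL k (g 0) L v
  | succ r ih =>
    show lamChain k g r (lamSub k (g (r+1)) (catL L v)) = _
    rw [lamSub_catL, ih]
    rfl

lemma CL_append (k : ℕ) (g : ℕ → ℕ) (r : ℕ) (L1 L2 : List ℕ) :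
    CL k g r (L1 ++ L2) = CL k g r L1 ++ CL k g r L2 := by
  induction r generalizing L1 L2 with
  | zero => exact List.flatMap_append ..
  | succ r ih =>
    show CL k g r ((L1 ++ L2).flatMap _) = _
    rw [List.flatMap_append, ih]
    rfl

lemma flatMap_len_ge (k a : ℕ) (L : List ℕ) : L.length ≤ (L.flatMap (lamWord k a)).length := by
  induction L with
  | nil => simp
  | cons x t ih =>
    rw [List.flatMap_cons, List.length_append, List.length_cons]
    have := lamWord_length_pos k a x
    omega

lemma CL_len_ge (k : ℕ) (g : ℕ → ℕ) (r : ℕ) (L : List ℕ) : L.length ≤ (CL k g r L).length := by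
  induction r generalizing L with
  | zero => exact flatMap_len_ge ..
  | succ r ih => exact le_trans (flatMap_len_ge ..) (ih _)

/-- The word `Λ_{g_0 … g_r}(k-1)`. -/
def WrW (k : ℕ) (g : ℕ → ℕ) (r : ℕ) : List ℕ := CL k g r [k - 1]

lemma WrW_len_pos (k : ℕ) (g : ℕ → ℕ) (r : ℕ) : 0 < (WrW k g r).length := by
  have := CL_len_ge k g r [k - 1]
  simp [WrW] at this; exact this

lemma topSeq_cat (k : ℕ) : topSeq k = catL [k - 1] (topSeq k) := by
  funext m
  cases m with
  | zero => simp [catL, topSeq]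
  | succ m => simp [catL, topSeq]

lemma qr_cat (k : ℕ) (g : ℕ → ℕ) (r : ℕ) :
    lamChain k g r (topSeq k) = catL (WrW k g r) (lamChain k g r (topSeq k)) := by
  conv_lhs => rw [topSeq_cat, lamChain_catL]
  rfl

lemma qr_getD (k : ℕ) (g : ℕ → ℕ) (r : ℕ) {j : ℕ} (hj : j < (WrW k g r).length) :
    lamChain k g r (topSeq k) j = (WrW k g r).getD j 0 := by
  conv_lhs => rw [qr_cat]
  simp [catL, if_pos hj]

lemma qr_shiftW (k : ℕ) (g : ℕ → ℕ) (r s : ℕ) :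
    lamChain k g r (topSeq k) ((WrW k g r).length + s) = lamChain k g r (topSeq k) s := by
  conv_lhs => rw [qr_cat]
  simp [catL, if_neg (by omega : ¬ (WrW k g r).length + s < (WrW k g r).length)]

lemma qr_mod (k : ℕ) (g : ℕ → ℕ) (r j : ℕ) :
    lamChain k g r (topSeq k) j = (WrW k g r).getD (j % (WrW k g r).length) 0 := by
  induction j using Nat.strong_induction_on with
  | _ j ih =>
    rcases Nat.lt_or_ge j (WrW k g r).length with h | h
    · rw [qr_getD k g r h, Nat.mod_eq_of_lt h]
    · obtain ⟨s, rfl⟩ : ∃ s, j = (WrW k g r).length + s :=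
        ⟨j - (WrW k g r).length, by omega⟩
      have hpos := WrW_len_pos k g r
      rw [qr_shiftW, ih s (by omega), Nat.add_mod_left]

lemma WrW_prefix (k : ℕ) (g : ℕ → ℕ) (r : ℕ) (hk : 2 ≤ k) :
    WrW k g r <+: WrW k g (r + 1) := by
  show WrW k g r <+: CL k g r ([k-1].flatMap (lamWord k (g (r+1))))
  have : [k-1].flatMap (lamWord k (g (r+1))) = [k-1] ++ List.replicate (g (r+1)) 0 := by
    simp [lamWord_top k _ hk]
  rw [this, CL_append]
  exact List.prefix_append _ _

lemma WrW_prefix_le (k : ℕ) (g : ℕ → ℕ) {r r' : ℕ} (h : r ≤ r') (hk : 2 ≤ k) :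
    WrW k g r <+: WrW k g r' := by
  induction r' with
  | zero => rw [Nat.le_zero.mp h]
  | succ r' ih =>
    rcases Nat.lt_or_ge r (r' + 1) with h' | h'
    · exact (ih (by omega)).trans (WrW_prefix k g r' hk)
    · have : r = r' + 1 := by omega
      rw [this]

lemma mono_bounded_stab (f : ℕ → ℕ) (hf : Monotone f) (B : ℕ) (hB : ∀ n, f n ≤ B) :
    ∃ N, ∀ n, N ≤ n → f n = f N := by
  by_contra hc
  push_neg at hc
  have key : ∀ s, ∃ n, s + f 0 ≤ f n := by
    intro s
    induction s with
    | zero => exact ⟨0, by omega⟩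
    | succ s ih =>
      obtain ⟨n, hn⟩ := ih
      obtain ⟨n', hn', hne⟩ := hc n
      have := hf hn'
      have : f n < f n' := by omega
      exact ⟨n', by omega⟩
  obtain ⟨n, hn⟩ := key (B + 1)
  have := hB n
  omega

lemma qr_stab (k : ℕ) (g : ℕ → ℕ) (hk : 2 ≤ k) (j : ℕ) :
    ∃ r0, ∀ r, r0 ≤ r → lamChain k g r (topSeq k) j = lamChain k g r0 (topSeq k) j := by
  by_cases hb : ∃ r0, j < (WrW k g r0).length
  · obtain ⟨r0, hr0⟩ := hb
    refine ⟨r0, fun r hr => ?_⟩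
    have hp := WrW_prefix_le k g hr hk
    have hj' : j < (WrW k g r).length := lt_of_lt_of_le hr0 hp.length_le
    rw [qr_getD k g r hj', qr_getD k g r0 hr0,
      List.getD_eq_getElem _ _ hj', List.getD_eq_getElem _ _ hr0]
    exact (hp.getElem hr0).symm
  · push_neg at hb
    have hmono : Monotone fun r => (WrW k g r).length := by
      apply monotone_nat_of_le_succ
      intro r
      exact (WrW_prefix k g r hk).length_le
    obtain ⟨N, hN⟩ := mono_bounded_stab _ hmono j hb
    refine ⟨N, fun r hr => ?_⟩
    have heq : WrW k g r = WrW k g N := by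
      have hp := WrW_prefix_le k g hr hk
      exact (List.IsPrefix.eq_of_length hp (by rw [hN r hr])).symm
    rw [qr_mod, qr_mod, heq]

lemma conv_lamChain (k : ℕ) (g : ℕ → ℕ) (hk : 2 ≤ k) :
    Tendsto (fun r => lamChain k g r (topSeq k)) atTop (𝓝 (Sseq k g)) := by
  have hex : ∃ w : Seq, Tendsto (fun r => lamChain k g r (topSeq k)) atTop (𝓝 w) := by
    refine ⟨fun j => lamChain k g (Classical.choose (qr_stab k g hk j)) (topSeq k) j, ?_⟩
    rw [tendsto_pi_nhds]
    intro j
    apply Tendsto.congr' _ tendsto_const_nhds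
    filter_upwards [eventually_ge_atTop (Classical.choose (qr_stab k g hk j))] with r hr
    exact (Classical.choose_spec (qr_stab k g hk j) r hr).symm
  obtain ⟨w, hw⟩ := hex
  have : Sseq k g = w := hw.limUnder_eq
  rw [this]
  exact hw

lemma lamSub_continuous (k a : ℕ) : Continuous (lamSub k a) := by
  rw [continuous_pi_iff]
  intro m
  have key : ∀ w w' : Seq, (∀ s, s < m + 1 → w s = w' s) →
      lamSub k a w m = lamSub k a w' m := by
    intro w w' h
    have hlen : m < (preL k a w (m+1)).length := by have := preL_len_ge k a w (m+1); omega
    exact agree_lamSub k a h m hlen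
  let G : (Fin (m+1) → ℕ) → ℕ :=
    fun gg => lamSub k a (fun s => if h : s < m + 1 then gg ⟨s, h⟩ else 0) m
  have hfact : (fun w : Seq => lamSub k a w m) = G ∘ (fun w (i : Fin (m+1)) => w i) := by
    funext w
    exact key w _ (fun s hs => by simp [dif_pos hs]; intro h; omega)
  rw [hfact]
  exact (continuous_of_discreteTopology).comp (continuous_pi fun i => continuous_apply _)

lemma lamChain_shift (k : ℕ) (g : ℕ → ℕ) (r : ℕ) (w : Seq) :
    lamChain k g (r + 1) w = lamSub k (g 0) (lamChain k (fun s => g (s + 1)) r w) := by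
  induction r generalizing w with
  | zero => rfl
  | succ r ih =>
    show lamChain k g (r+1) (lamSub k (g (r+2)) w) = _
    rw [ih]
    rfl

lemma Sseq_rec (k : ℕ) (g : ℕ → ℕ) (hk : 2 ≤ k) :
    Sseq k g = lamSub k (g 0) (Sseq k (fun s => g (s + 1))) := by
  have h1 := conv_lamChain k g hk
  have h2 := conv_lamChain k (fun s => g (s + 1)) hk
  have h3 : Tendsto (fun r => lamSub k (g 0) (lamChain k (fun s => g (s+1)) r (topSeq k)))
      atTop (𝓝 (lamSub k (g 0) (Sseq k (fun s => g (s + 1))))) :=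
    ((lamSub_continuous k (g 0)).tendsto _).comp h2
  have h4 : (fun r => lamSub k (g 0) (lamChain k (fun s => g (s+1)) r (topSeq k)))
      = fun r => lamChain k g (r + 1) (topSeq k) := by
    funext r
    exact (lamChain_shift k g r (topSeq k)).symm
  rw [h4] at h3
  have h5 : Tendsto (fun r => lamChain k g (r + 1) (topSeq k)) atTop (𝓝 (Sseq k g)) :=
    (tendsto_add_atTop_iff_nat 1).mpr h1
  exact tendsto_nhds_unique h5 h3

lemma lamSub_first (k a : ℕ) (hk : 2 ≤ k) (w : Seq) (hw : w 0 = k - 1) :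
    lamSub k a w 0 = k - 1 := by
  have := lamSub_getIn k a w 0 (q := 0) (lamWord_length_pos k a (w 0))
  rw [show (preL k a w 0).length + 0 = 0 from rfl] at this
  rw [this, hw, lamWord_top k a hk]
  rfl

lemma lamChain_first (k : ℕ) (g : ℕ → ℕ) (hk : 2 ≤ k) (r : ℕ) (w : Seq) (hw : w 0 = k - 1) :
    lamChain k g r w 0 = k - 1 := by
  induction r generalizing w with
  | zero => exact lamSub_first k (g 0) hk w hw
  | succ r ih =>
    show lamChain k g r (lamSub k (g (r+1)) w) 0 = k - 1
    exact ih _ (lamSub_first k _ hk w hw)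

lemma Sseq_first (k : ℕ) (g : ℕ → ℕ) (hk : 2 ≤ k) : Sseq k g 0 = k - 1 := by
  have h1 := (tendsto_pi_nhds.mp (conv_lamChain k g hk)) 0
  have h2 : (fun r => lamChain k g r (topSeq k) 0) = fun _ => k - 1 := by
    funext r
    exact lamChain_first k g hk r (topSeq k) rfl
  rw [h2] at h1
  exact tendsto_nhds_unique h1 tendsto_const_nhds

end Chain


section NNlevel

/-- The shift on `N`. -/
def nnshift (m : NN) : NN := ⟨fun r => m.1 (r + 1), fun r h => m.2 (r + 1) h⟩

lemma nn_top_propagate (m : NN) {r s : ℕ} (hrs : r ≤ s) (h : m.1 r = ⊤) : m.1 s = ⊤ := by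
  induction s with
  | zero => rwa [Nat.le_zero.mp hrs] at h
  | succ s ih =>
    rcases Nat.lt_or_ge r (s + 1) with h' | h'
    · exact m.2 s (ih (by omega))
    · rwa [show r = s + 1 by omega] at h

lemma SN_top (k : ℕ) (m : NN) (h0 : m.1 0 = ⊤) : SN k m = baseSeq k := by
  have hex : ∃ R, m.1 R = ⊤ := ⟨0, h0⟩
  rw [SN, dif_pos hex, (Nat.find_eq_zero hex).2 h0]
  rfl

lemma SN_rec (k : ℕ) (hk : 2 ≤ k) (m : NN) (h0 : m.1 0 ≠ ⊤) :
    SN k m = lamSub k (m.1 0).toNat (SN k (nnshift m)) := by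
  by_cases hex : ∃ R, m.1 R = ⊤
  · have hR : Nat.find hex ≠ 0 := fun h => h0 ((Nat.find_eq_zero hex).1 h)
    obtain ⟨R', hR'⟩ : ∃ R', Nat.find hex = R' + 1 := ⟨Nat.find hex - 1, by omega⟩
    have hex' : ∃ R, (nnshift m).1 R = ⊤ := by
      refine ⟨R', ?_⟩
      show m.1 (R' + 1) = ⊤
      rw [← hR']
      exact Nat.find_spec hex
    have hfind' : Nat.find hex' = R' := by
      rw [Nat.find_eq_iff]
      constructor
      · show m.1 (R' + 1) = ⊤
        rw [← hR']; exact Nat.find_spec hex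
      · intro n hn hc
        have := Nat.find_min hex (m := n + 1) (by omega) hc
        exact this
    have e1 : SN k m =
        lamList k ((List.range (R' + 1)).map fun r => (m.1 r).toNat) (baseSeq k) := by
      rw [SN, dif_pos hex, hR']
    have e2 : SN k (nnshift m) =
        lamList k ((List.range R').map fun r => (m.1 (r + 1)).toNat) (baseSeq k) := by
      rw [SN, dif_pos hex', hfind']
      rfl
    rw [e1, e2, List.range_succ_eq_map, List.map_cons, List.map_map]
    rfl
  · have hex' : ¬ ∃ R, (nnshift m).1 R = ⊤ := fun ⟨R, h⟩ => hex ⟨R + 1, h⟩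
    rw [SN, dif_neg hex, SN, dif_neg hex']
    exact Sseq_rec k _ hk

lemma lamList_first (k : ℕ) (hk : 2 ≤ k) (l : List ℕ) (w : Seq) (hw : w 0 = k - 1) :
    lamList k l w 0 = k - 1 := by
  induction l with
  | nil => exact hw
  | cons a t ih => exact lamSub_first k a hk _ ih

lemma SN_first (k : ℕ) (hk : 2 ≤ k) (m : NN) : SN k m 0 = k - 1 := by
  by_cases hex : ∃ R, m.1 R = ⊤
  · rw [SN, dif_pos hex]
    exact lamList_first k hk _ _ (by simp [baseSeq])
  · rw [SN, dif_neg hex]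
    exact Sseq_first k _ hk

end NNlevel


section Key

lemma replicate_cons_getD_zero (x : ℕ) (c : ℕ) :
    ((x :: List.replicate c 0).getD 0 0) = x := rfl

lemma replicate_cons_getD_succ (x c q : ℕ) (h : q < c) :
    ((x :: List.replicate c 0).getD (q + 1) 0) = 0 := by
  rw [List.getD_cons_succ]
  simp only [List.getD_eq_getElem?_getD, List.getElem?_replicate]
  rw [if_pos h]
  rfl

/-- The main quantitative lemma: controlled first difference of `SN`-values. -/
lemma keyLemma (k : ℕ) (hk : 2 ≤ k) :
    ∀ r (m n : NN), (∀ s, s < r → m.1 s = n.1 s) → n.1 r < m.1 r →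
    ∃ d i j, 1 ≤ d ∧ agreeUpTo d (SN k m) (SN k n) ∧ SN k m d = i ∧ SN k n d = j ∧
      i < j ∧ j < k ∧
      1 + r + (min (∑ s ∈ Finset.range (r+1), m.1 s)
          (∑ s ∈ Finset.range (r+1), n.1 s)).toNat ≤ (k-1)*d + i ∧
      d ≤ (r + (min (∑ s ∈ Finset.range (r+1), m.1 s)
          (∑ s ∈ Finset.range (r+1), n.1 s)).toNat + 1) *
        (r + (min (∑ s ∈ Finset.range (r+1), m.1 s)
          (∑ s ∈ Finset.range (r+1), n.1 s)).toNat + 2) ^ r := by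
  intro r
  induction r with
  | zero =>
    intro m n hag hlt
    have hn0 : n.1 0 ≠ ⊤ := hlt.ne_top
    set b := (n.1 0).toNat with hbdef
    have hb : (b : ℕ∞) = n.1 0 := ENat.coe_toNat hn0
    have hmin : min (∑ s ∈ Finset.range 1, m.1 s) (∑ s ∈ Finset.range 1, n.1 s)
        = n.1 0 := by
      rw [Finset.sum_range_one, Finset.sum_range_one]
      exact min_eq_right hlt.le
    have hSN : SN k n = lamSub k b (SN k (nnshift n)) := SN_rec k hk n hn0
    set w := SN k (nnshift n) with hwdef
    have hw0 : w 0 = k - 1 := SN_first k hk _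
    have hword : lamWord k b (w 0) = (k - 1) :: List.replicate b 0 := by
      rw [hw0, lamWord_top k b hk]
    have hpre1 : (preL k b w 1).length = b + 1 := by
      rw [show (1:ℕ) = 0 + 1 from rfl, preL_succ, preL_zero, List.nil_append, hword]
      simp
    -- values of SN n
    have hval : ∀ q, q ≤ b → SN k n q = ((k-1) :: List.replicate b 0).getD q 0 := by
      intro q hq
      have h7 := lamSub_getIn k b w 0 (q := q) (by rw [hword]; simp; omega)
      rw [preL_zero] at h7
      simp only [List.length_nil, Nat.zero_add] at h7
      rw [hSN, h7, hword]
    have hvalb1 : SN k n (b + 1) = (lamWord k b (w 1)).getD 0 0 := by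
      have := lamSub_getIn k b w 1 (q := 0) (lamWord_length_pos k b (w 1))
      rw [Nat.add_zero, hpre1] at this
      rw [hSN, this]
    set j0 := (lamWord k b (w 1)).getD 0 0 with hj0
    have hj0pos : 1 ≤ j0 := lamWord_head_pos k b (w 1) hk
    have hj0lt : j0 < k := lamWord_head_lt k b (w 1) hk
    -- values of SN m
    have hvalm : (∀ q, q ≤ b → SN k m q = ((k-1) :: List.replicate b 0).getD q 0)
        ∧ SN k m (b + 1) = 0 := by
      by_cases hm0 : m.1 0 = ⊤
      · rw [SN_top k m hm0]
        constructor
        · intro q hq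
          cases q with
          | zero => rfl
          | succ q' =>
            rw [replicate_cons_getD_succ (k-1) b q' (by omega)]
            simp [baseSeq]
        · simp [baseSeq]
      · have hrec := SN_rec k hk m hm0
        set A := (m.1 0).toNat with hAdef
        have hbA : b < A := by
          have h1 : (b : ℕ∞) < (A : ℕ∞) := by
            rw [hb, ENat.coe_toNat hm0]
            exact hlt
          exact_mod_cast h1
        set u := SN k (nnshift m) with hudef
        have hu0 : u 0 = k - 1 := SN_first k hk _
        have hwordu : lamWord k A (u 0) = (k - 1) :: List.replicate A 0 := by
          rw [hu0, lamWord_top k A hk]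
        have hvalu : ∀ q, q ≤ A → SN k m q = ((k-1) :: List.replicate A 0).getD q 0 := by
          intro q hq
          have h7 := lamSub_getIn k A u 0 (q := q) (by rw [hwordu]; simp; omega)
          rw [preL_zero] at h7
          simp only [List.length_nil, Nat.zero_add] at h7
          rw [hrec, h7, hwordu]
        constructor
        · intro q hq
          rw [hvalu q (by omega)]
          cases q with
          | zero => rfl
          | succ q' =>
            rw [replicate_cons_getD_succ (k-1) A q' (by omega),
              replicate_cons_getD_succ (k-1) b q' (by omega)]
        · rw [hvalu (b+1) (by omega), replicate_cons_getD_succ (k-1) A b (by omega)]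
    refine ⟨b + 1, 0, j0, by omega, ?_, hvalm.2, hvalb1, by omega, hj0lt, ?_, ?_⟩
    · intro s hs
      rw [hvalm.1 s (by omega), hval s (by omega)]
    · rw [hmin, ← hb]
      have h1 : b + 1 ≤ (k-1) * (b+1) := Nat.le_mul_of_pos_left _ (by omega)
      simp only [ENat.toNat_coe]
      omega
    · rw [hmin, ← hb]
      simp only [ENat.toNat_coe, pow_zero, Nat.zero_add, mul_one]
      omega
  | succ r ih =>
    intro m n hag hlt
    have hag0 := hag 0 (by omega)
    have hc0 : m.1 0 ≠ ⊤ := by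
      intro h
      have h1 : m.1 (r+1) = ⊤ :=
        nn_top_propagate m (r := 0) (s := r+1) (by omega) h
      have h2 : n.1 (r+1) = ⊤ :=
        nn_top_propagate n (r := 0) (s := r+1) (by omega) (by rw [← hag0]; exact h)
      rw [h1, h2] at hlt
      exact lt_irrefl _ hlt
    set c := (m.1 0).toNat with hcdef
    have hrecm : SN k m = lamSub k c (SN k (nnshift m)) := SN_rec k hk m hc0
    have hrecn : SN k n = lamSub k c (SN k (nnshift n)) := by
      have := SN_rec k hk n (by rw [← hag0]; exact hc0)
      rw [this, ← hag0]
    obtain ⟨d, i, j, hd, hagd, hmi, hnj, hij, hjk, hlow, hup⟩ :=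
      ih (nnshift m) (nnshift n) (fun s hs => hag (s+1) (by omega)) hlt
    obtain ⟨d', i', j', hd', hagd', hmi', hnj', hij', hjk', hge', hle', hpot'⟩ :=
      stepLemma k hk c hd (SN_first k hk (nnshift m)) hagd hmi hnj hij hjk
    -- sum bookkeeping
    have hfin : ∀ s, s ≤ r + 1 → n.1 s ≠ ⊤ := by
      intro s hs h
      exact hlt.ne_top (nn_top_propagate n (r := s) (s := r+1) hs h)
    have hsum_ne : (∑ s ∈ Finset.range (r+1), (nnshift n).1 s) ≠ ⊤ := by
      apply WithTop.sum_ne_top.mpr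
      intro s hs
      exact hfin (s+1) (by have := Finset.mem_range.mp hs; omega)
    set Mσ := min (∑ s ∈ Finset.range (r+1), (nnshift m).1 s)
        (∑ s ∈ Finset.range (r+1), (nnshift n).1 s) with hMσ
    have hMσ_ne : Mσ ≠ ⊤ := by
      intro h
      have h2 := min_le_right (∑ s ∈ Finset.range (r+1), (nnshift m).1 s)
        (∑ s ∈ Finset.range (r+1), (nnshift n).1 s)
      rw [← hMσ, h] at h2
      exact hsum_ne (top_le_iff.mp h2)
    have hsum_split : ∀ p : NN, ∑ s ∈ Finset.range (r+2), p.1 s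
        = p.1 0 + ∑ s ∈ Finset.range (r+1), (nnshift p).1 s := by
      intro p
      rw [Finset.sum_range_succ' (fun s => p.1 s) (r+1)]
      rw [add_comm]
      rfl
    have hmin_split : min (∑ s ∈ Finset.range (r+2), m.1 s)
        (∑ s ∈ Finset.range (r+2), n.1 s) = m.1 0 + Mσ := by
      rw [hsum_split m, hsum_split n, ← hag0, min_add_add_left]
    have htoNat : (min (∑ s ∈ Finset.range (r+2), m.1 s)
        (∑ s ∈ Finset.range (r+2), n.1 s)).toNat = c + Mσ.toNat := by
      rw [hmin_split, ENat.toNat_add hc0 hMσ_ne]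
    refine ⟨d', i', j', hd', ?_, ?_, ?_, hij', hjk', ?_, ?_⟩
    · rw [hrecm, hrecn]; exact hagd'
    · rw [hrecm]; exact hmi'
    · rw [hrecn]; exact hnj'
    · rw [htoNat]
      set P := (k-1)*d with hP
      set P' := (k-1)*d' with hP'
      omega
    · rw [htoNat]
      set Y := r + Mσ.toNat with hY
      have h1 : d' ≤ (d + 1) * (c + 2) := hle'
      have h2 : (d + 1) * (c + 2) ≤ ((Y+1)*(Y+2)^r + 1) * (c + 2) :=
        Nat.mul_le_mul_right _ (by omega)
      have h3 : (Y+1)*(Y+2)^r + 1 ≤ (Y+2)^(r+1) := by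
        have hpos : 1 ≤ (Y+2)^r := Nat.one_le_pow _ _ (by omega)
        calc (Y+1)*(Y+2)^r + 1 ≤ (Y+1)*(Y+2)^r + (Y+2)^r := by omega
          _ = (Y+2)*(Y+2)^r := by ring
          _ = (Y+2)^(r+1) := by ring
      have h4 : (Y+2)^(r+1) * (c+2) ≤ (Y+c+3)^(r+1) * (Y+c+2) :=
        Nat.mul_le_mul (Nat.pow_le_pow_left (by omega) _) (by omega)
      have hgoal : (r + 1 + (c + Mσ.toNat) + 1) * (r + 1 + (c + Mσ.toNat) + 2) ^ (r+1)
          = (Y+c+2) * (Y+c+3)^(r+1) := by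
        rw [hY]; ring_nf
      rw [hgoal]
      calc d' ≤ (d + 1) * (c + 2) := h1
        _ ≤ ((Y+1)*(Y+2)^r + 1) * (c + 2) := h2
        _ ≤ (Y+2)^(r+1) * (c+2) := Nat.mul_le_mul_right _ h3
        _ ≤ (Y+c+3)^(r+1) * (Y+c+2) := h4
        _ = (Y+c+2) * (Y+c+3)^(r+1) := by ring

end Key


section Metric

lemma ne_ex (p q : NN) (h : p ≠ q) : ∃ r, p.1 r ≠ q.1 r := by
  by_contra hc
  push_neg at hc
  exact h (Subtype.ext (funext hc))

/-- The quantity `X(p,q)` from the definition of the metric. -/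
noncomputable def Xn (p q : NN) (hex : ∃ r, p.1 r ≠ q.1 r) : ℕ :=
  Nat.find hex + (min (∑ s ∈ Finset.range (Nat.find hex + 1), p.1 s)
    (∑ s ∈ Finset.range (Nat.find hex + 1), q.1 s)).toNat

lemma dN_eq (p q : NN) (h : p ≠ q) (hex : ∃ r, p.1 r ≠ q.1 r) :
    dN p q = 2 ^ (-(Xn p q hex : ℤ)) := by
  rw [dN, dif_neg h]
  rw [Xn]
  push_cast
  rfl

lemma dN_self (p : NN) : dN p p = 0 := by rw [dN, dif_pos rfl]

lemma dN_nonneg (p q : NN) : 0 ≤ dN p q := by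
  rw [dN]
  split_ifs
  · exact le_refl 0
  · positivity

lemma find_agree (p q : NN) (hex : ∃ r, p.1 r ≠ q.1 r) :
    ∀ s, s < Nat.find hex → p.1 s = q.1 s :=
  fun s hs => not_not.mp (Nat.find_min hex hs)

lemma zpow_lt_exp {m n : ℤ} (h : (2:ℝ)^m < 2^n) : m < n := by
  by_contra hc
  push_neg at hc
  exact absurd (zpow_le_zpow_right₀ one_le_two hc) (not_le.mpr h)

lemma min_ne_top_dn (p q : NN) (hex : ∃ r, p.1 r ≠ q.1 r) :
    min (∑ s ∈ Finset.range (Nat.find hex + 1), p.1 s)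
      (∑ s ∈ Finset.range (Nat.find hex + 1), q.1 s) ≠ ⊤ := by
  have hspec : p.1 (Nat.find hex) ≠ q.1 (Nat.find hex) := Nat.find_spec hex
  by_cases hp : ∀ s ∈ Finset.range (Nat.find hex + 1), p.1 s ≠ ⊤
  · have hps : (∑ s ∈ Finset.range (Nat.find hex + 1), p.1 s) ≠ ⊤ :=
      WithTop.sum_ne_top.mpr hp
    intro h
    have h2 := min_le_left (∑ s ∈ Finset.range (Nat.find hex + 1), p.1 s)
      (∑ s ∈ Finset.range (Nat.find hex + 1), q.1 s)
    rw [h] at h2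
    exact hps (top_le_iff.mp h2)
  · push_neg at hp
    obtain ⟨s0, hs0mem, hs0⟩ := hp
    have hpr : p.1 (Nat.find hex) = ⊤ :=
      nn_top_propagate p (by have := Finset.mem_range.mp hs0mem; omega) hs0
    have hqr : q.1 (Nat.find hex) ≠ ⊤ := fun h => hspec (hpr.trans h.symm)
    have hq : ∀ s ∈ Finset.range (Nat.find hex + 1), q.1 s ≠ ⊤ := by
      intro s hs h
      exact hqr (nn_top_propagate q (by have := Finset.mem_range.mp hs; omega) h)
    have hqs : (∑ s ∈ Finset.range (Nat.find hex + 1), q.1 s) ≠ ⊤ :=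
      WithTop.sum_ne_top.mpr hq
    intro h
    have h2 := min_le_right (∑ s ∈ Finset.range (Nat.find hex + 1), p.1 s)
      (∑ s ∈ Finset.range (Nat.find hex + 1), q.1 s)
    rw [h] at h2
    exact hqs (top_le_iff.mp h2)

lemma X_ge (a b c : NN) (hab : ∃ r, a.1 r ≠ b.1 r) (hbc : ∃ r, b.1 r ≠ c.1 r)
    (hac : ∃ r, a.1 r ≠ c.1 r) :
    Xn a b hab ≤ Xn a c hac ∨ Xn b c hbc ≤ Xn a c hac := by
  rcases lt_trichotomy (Nat.find hab) (Nat.find hbc) with h | h | h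
  · left
    have hr3 : Nat.find hac = Nat.find hab := by
      rw [Nat.find_eq_iff]
      constructor
      · have h1 : b.1 (Nat.find hab) = c.1 (Nat.find hab) := find_agree b c hbc _ h
        have h2 : a.1 (Nat.find hab) ≠ b.1 (Nat.find hab) := Nat.find_spec hab
        rw [← h1]
        exact h2
      · intro n hn
        rw [not_not, find_agree a b hab n hn, find_agree b c hbc n (by omega)]
    have hsum : ∑ s ∈ Finset.range (Nat.find hab + 1), c.1 s
        = ∑ s ∈ Finset.range (Nat.find hab + 1), b.1 s := by
      apply Finset.sum_congr rfl
      intro s hs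
      exact (find_agree b c hbc s (by have := Finset.mem_range.mp hs; omega)).symm
    rw [Xn, Xn, hr3, hsum]
  · have hr3 : Nat.find hab ≤ Nat.find hac := by
      rw [Nat.le_find_iff]
      intro n hn
      rw [not_not, find_agree a b hab n hn, find_agree b c hbc n (by omega)]
    have hsub : Finset.range (Nat.find hab + 1) ⊆ Finset.range (Nat.find hac + 1) :=
      Finset.range_subset_range.mpr (by omega)
    have hmono : min (∑ s ∈ Finset.range (Nat.find hab + 1), a.1 s)
          (∑ s ∈ Finset.range (Nat.find hab + 1), c.1 s)
        ≤ min (∑ s ∈ Finset.range (Nat.find hac + 1), a.1 s)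
          (∑ s ∈ Finset.range (Nat.find hac + 1), c.1 s) :=
      min_le_min (Finset.sum_le_sum_of_subset hsub) (Finset.sum_le_sum_of_subset hsub)
    have hfin := min_ne_top_dn a c hac
    rcases min_cases (∑ s ∈ Finset.range (Nat.find hab + 1), a.1 s)
        (∑ s ∈ Finset.range (Nat.find hab + 1), c.1 s) with ⟨heq, _⟩ | ⟨heq, _⟩
    · left
      have hch : min (∑ s ∈ Finset.range (Nat.find hab + 1), a.1 s)
            (∑ s ∈ Finset.range (Nat.find hab + 1), b.1 s)
          ≤ min (∑ s ∈ Finset.range (Nat.find hac + 1), a.1 s)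
            (∑ s ∈ Finset.range (Nat.find hac + 1), c.1 s) := by
        refine le_trans ?_ hmono
        rw [heq]
        exact min_le_left _ _
      have := ENat.toNat_le_toNat hch hfin
      rw [Xn, Xn]
      omega
    · right
      have hch : min (∑ s ∈ Finset.range (Nat.find hbc + 1), b.1 s)
            (∑ s ∈ Finset.range (Nat.find hbc + 1), c.1 s)
          ≤ min (∑ s ∈ Finset.range (Nat.find hac + 1), a.1 s)
            (∑ s ∈ Finset.range (Nat.find hac + 1), c.1 s) := by
        refine le_trans ?_ hmono
        rw [heq, ← h]
        exact min_le_right _ _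
      have := ENat.toNat_le_toNat hch hfin
      rw [Xn, Xn]
      omega

  · right
    have hr3 : Nat.find hac = Nat.find hbc := by
      rw [Nat.find_eq_iff]
      constructor
      · have h1 : a.1 (Nat.find hbc) = b.1 (Nat.find hbc) := find_agree a b hab _ h
        have h2 : b.1 (Nat.find hbc) ≠ c.1 (Nat.find hbc) := Nat.find_spec hbc
        rw [h1]
        exact h2
      · intro n hn
        rw [not_not, find_agree a b hab n (by omega), find_agree b c hbc n hn]
    have hsum : ∑ s ∈ Finset.range (Nat.find hbc + 1), a.1 s
        = ∑ s ∈ Finset.range (Nat.find hbc + 1), b.1 s := by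
      apply Finset.sum_congr rfl
      intro s hs
      exact find_agree a b hab s (by have := Finset.mem_range.mp hs; omega)
    rw [Xn, Xn, hr3, hsum]
lemma dN_ultra (a b c : NN) : dN a c ≤ max (dN a b) (dN b c) := by
  by_cases hac : a = c
  · subst hac
    rw [dN_self]
    exact le_max_of_le_left (dN_nonneg a b)
  by_cases hab : a = b
  · rw [← hab]
    exact le_max_right _ _
  by_cases hbc : b = c
  · rw [hbc]
    exact le_max_left _ _
  have hexab := ne_ex a b hab
  have hexbc := ne_ex b c hbc
  have hexac := ne_ex a c hac
  rcases X_ge a b c hexab hexbc hexac with h | h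
  · refine le_max_of_le_left ?_
    rw [dN_eq a c hac hexac, dN_eq a b hab hexab]
    exact zpow_le_zpow_right₀ one_le_two (by exact_mod_cast neg_le_neg (by exact_mod_cast h))
  · refine le_max_of_le_right ?_
    rw [dN_eq a c hac hexac, dN_eq b c hbc hexbc]
    exact zpow_le_zpow_right₀ one_le_two (by exact_mod_cast neg_le_neg (by exact_mod_cast h))

end Metric


section Assembly

lemma sn_mono (k : ℕ) (hk : 2 ≤ k) (m n : NN) (h : nnLt m n) :
    seqLt (SN k m) (SN k n) := by
  obtain ⟨r, hag, hlt⟩ := h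
  obtain ⟨d, i, j, _, hagd, hmi, hnj, hij, _, _, _⟩ := keyLemma k hk r m n hag hlt
  exact ⟨d, hagd, by rw [hmi, hnj]; exact hij⟩

lemma key_fd (k : ℕ) (hk : 2 ≤ k) (p q : NN) (h : p ≠ q) :
    ∃ d, (∀ s, s < d → SN k p s = SN k q s) ∧ SN k p d ≠ SN k q d ∧
      1 + Xn p q (ne_ex p q h) ≤ (k-1)*d + (k-2) ∧
      d ≤ (Xn p q (ne_ex p q h) + 1) * (Xn p q (ne_ex p q h) + 2)
        ^ (Nat.find (ne_ex p q h)) := by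
  have hex := ne_ex p q h
  have hag := find_agree p q hex
  have hne : p.1 (Nat.find hex) ≠ q.1 (Nat.find hex) := Nat.find_spec hex
  have hXn : Xn p q hex = Nat.find hex +
      (min (∑ s ∈ Finset.range (Nat.find hex + 1), p.1 s)
        (∑ s ∈ Finset.range (Nat.find hex + 1), q.1 s)).toNat := rfl
  rcases lt_or_gt_of_ne hne with hlt | hlt
  · -- p.1 r < q.1 r : apply keyLemma with (q, p)
    obtain ⟨d, i, j, _, hagd, hqi, hpj, hij, hjk, hlow, hup⟩ :=
      keyLemma k hk (Nat.find hex) q p (fun s hs => (hag s hs).symm) hlt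
    refine ⟨d, fun s hs => (hagd s hs).symm, ?_, ?_, ?_⟩
    · rw [hpj, hqi]; omega
    · rw [hXn, min_comm]
      have : i ≤ k - 2 := by omega
      omega
    · rw [hXn, min_comm]
      exact hup
  · obtain ⟨d, i, j, _, hagd, hpi, hqj, hij, hjk, hlow, hup⟩ :=
      keyLemma k hk (Nat.find hex) p q hag hlt
    refine ⟨d, hagd, ?_, ?_, ?_⟩
    · rw [hpi, hqj]; omega
    · rw [hXn]
      have : i ≤ k - 2 := by omega
      omega
    · rw [hXn]
      exact hup

lemma sn_inj (k : ℕ) (hk : 2 ≤ k) : Function.Injective (SN k) := by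
  intro p q h
  by_contra hne
  obtain ⟨d, _, hd, _, _⟩ := key_fd k hk p q hne
  exact hd (congrFun h d)

lemma cont_aux (k : ℕ) (hk : 2 ≤ k) (m : NN) (J : ℕ) :
    ∃ ε : ℝ, 0 < ε ∧ ∀ p : NN, dN p m < ε → ∀ s, s < J → SN k p s = SN k m s := by
  refine ⟨2 ^ (-(((k-1)*J + k : ℕ) : ℤ)), by positivity, ?_⟩
  intro p hp s hs
  by_cases hpm : p = m
  · rw [hpm]
  have hex := ne_ex p m hpm
  rw [dN_eq p m hpm hex] at hp
  have hX : ((k-1)*J + k : ℕ) < Xn p m hex := by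
    have h2 := zpow_lt_exp hp
    have h3 : (((k-1)*J + k : ℕ) : ℤ) < ((Xn p m hex : ℕ) : ℤ) := by omega
    exact_mod_cast h3
  obtain ⟨d, hagree, _, hlow, _⟩ := key_fd k hk p m hpm
  have hJd : J < d := by
    apply Nat.lt_of_mul_lt_mul_left (a := k - 1)
    have h4 : (k-1)*J + k < Xn p m hex := hX
    omega
  exact hagree s (by omega)

lemma ball_isOpen (m : NN) (ε : ℝ) : IsOpen {p : NN | dN p m < ε} :=
  TopologicalSpace.GenerateOpen.basic _ ⟨m, ε, rfl⟩

lemma sn_cont (k : ℕ) (hk : 2 ≤ k) : Continuous (SN k) := by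
  rw [continuous_pi_iff]
  intro s0
  rw [continuous_def]
  intro V hV
  have hcover : (fun p : NN => SN k p s0) ⁻¹' V = ⋃ (m : NN)
      (_ : m ∈ (fun p : NN => SN k p s0) ⁻¹' V),
      {p : NN | dN p m < Classical.choose (cont_aux k hk m (s0+1))} := by
    ext p
    simp only [Set.mem_iUnion, Set.mem_setOf_eq, Set.mem_preimage]
    constructor
    · intro hp
      exact ⟨p, hp, by rw [dN_self]; exact (Classical.choose_spec (cont_aux k hk p (s0+1))).1⟩
    · rintro ⟨m, hm, hball⟩
      have := (Classical.choose_spec (cont_aux k hk m (s0+1))).2 p hball s0 (by omega)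
      rwa [this]
  rw [hcover]
  exact isOpen_iUnion fun m => isOpen_iUnion fun _ => ball_isOpen _ _

lemma inv_aux (k : ℕ) (hk : 2 ≤ k) (p0 : NN) (ε : ℝ) (hε : 0 < ε) :
    ∃ J, ∀ q : NN, (∀ s, s < J → SN k q s = SN k p0 s) → dN q p0 < ε := by
  obtain ⟨B, hB⟩ : ∃ B : ℕ, (2:ℝ)^(-(B:ℤ)) < ε := by
    obtain ⟨n, hn⟩ := exists_pow_lt_of_lt_one hε (by norm_num : (1/2:ℝ) < 1)
    refine ⟨n, ?_⟩
    have : ((2:ℝ)^(-(n:ℤ))) = (1/2)^n := by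
      rw [one_div, inv_pow, ← zpow_natCast, ← zpow_neg]
    rwa [this]
  refine ⟨(B+1)*(B+2)^B + 1, ?_⟩
  intro q hagree
  by_cases hq : q = p0
  · rw [hq, dN_self]; exact hε
  have hex := ne_ex q p0 hq
  rcases le_or_gt B (Xn q p0 hex) with hY | hY
  · rw [dN_eq q p0 hq hex]
    refine lt_of_le_of_lt ?_ hB
    apply zpow_le_zpow_right₀ one_le_two
    have : (B:ℤ) ≤ (Xn q p0 hex : ℤ) := by exact_mod_cast hY
    omega
  · exfalso
    obtain ⟨d, _, hd, _, hup⟩ := key_fd k hk q p0 hq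
    have hrY : Nat.find (ne_ex q p0 hq) ≤ Xn q p0 (ne_ex q p0 hq) :=
      Nat.le_add_right _ _
    have hYY : Xn q p0 (ne_ex q p0 hq) = Xn q p0 hex := rfl
    have hdb : d ≤ (B+1)*(B+2)^B := by
      refine le_trans hup (Nat.mul_le_mul ?_ ?_)
      · rw [hYY]; omega
      · calc (Xn q p0 (ne_ex q p0 hq) + 2) ^ (Nat.find (ne_ex q p0 hq))
            ≤ (B+2) ^ (Nat.find (ne_ex q p0 hq)) :=
              Nat.pow_le_pow_left (by rw [hYY]; omega) _
          _ ≤ (B+2)^B := Nat.pow_le_pow_right (by omega) (by rw [hYY] at hrY; omega)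
    exact hd (hagree d (by omega))

lemma cyl_isOpen (n : ℕ) (v : Seq) : IsOpen {w : Seq | ∀ s, s < n → w s = v s} := by
  have heq : {w : Seq | ∀ s, s < n → w s = v s}
      = ⋂ (s : Fin n), {w : Seq | w s.1 = v s.1} := by
    ext w
    simp only [Set.mem_iInter, Set.mem_setOf_eq]
    constructor
    · intro h s
      exact h s.1 s.2
    · intro h s hs
      exact h ⟨s, hs⟩
  rw [heq]
  refine isOpen_iInter_of_finite fun s => ?_
  have h2 : {w : Seq | w s.1 = v s.1} = (fun w : Seq => w s.1) ⁻¹' {v s.1} := rfl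
  rw [h2]
  exact (continuous_apply s.1).isOpen_preimage _ (isOpen_discrete _)

end Assembly

/-- `S : N → Σ` is strictly order-preserving and continuous, and is a
homeomorphism onto its image. -/
theorem stmt2 (k : ℕ) (hk : 2 ≤ k) :
    (∀ m n : NN, nnLt m n → seqLt (SN k m) (SN k n)) ∧
    Continuous (SN k) ∧
    ∃ e : NN ≃ₜ Set.range (SN k), ∀ m, (e m : Seq) = SN k m := by
  have hinj : Function.Injective (SN k) := sn_inj k hk
  refine ⟨fun m n h => sn_mono k hk m n h, sn_cont k hk, ?_⟩
  let e0 : NN ≃ Set.range (SN k) := Equiv.ofInjective (SN k) hinj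
  have hval : ∀ y : Set.range (SN k), SN k (e0.symm y) = (y : Seq) :=
    fun y => congrArg Subtype.val (e0.apply_symm_apply y)
  have hcont1 : Continuous (fun m : NN => (e0 m : Set.range (SN k))) := by
    have heq : (fun m : NN => e0 m)
        = fun m => (⟨SN k m, Set.mem_range_self m⟩ : Set.range (SN k)) := rfl
    rw [heq]
    exact (sn_cont k hk).subtype_mk _
  have hcont2 : Continuous (e0.symm : Set.range (SN k) → NN) := by
    apply continuous_generateFrom_iff.mpr
    rintro B ⟨m0, ε, rfl⟩
    have hJ : ∀ y : Set.range (SN k),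
        y ∈ ((fun y : Set.range (SN k) => e0.symm y) ⁻¹' {p : NN | dN p m0 < ε}) →
        ∃ J, ∀ q : NN, (∀ s, s < J → SN k q s = SN k (e0.symm y) s) →
          dN q (e0.symm y) < ε - dN (e0.symm y) m0 := by
      intro y hy
      exact inv_aux k hk (e0.symm y) _ (sub_pos.mpr (by simpa using hy))
    choose J hJspec using hJ
    have hSeq : ((fun y : Set.range (SN k) => e0.symm y) ⁻¹' {p : NN | dN p m0 < ε})
        = Subtype.val ⁻¹' (⋃ (y : Set.range (SN k))
            (hy : y ∈ ((fun y : Set.range (SN k) => e0.symm y) ⁻¹' {p : NN | dN p m0 < ε})),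
            {w : Seq | ∀ s, s < J y hy → w s = (y : Seq) s}) := by
      ext y
      simp only [Set.mem_preimage, Set.mem_iUnion, Set.mem_setOf_eq]
      constructor
      · intro hy
        exact ⟨y, hy, fun s _ => rfl⟩
      · rintro ⟨y0, hy0, hcyl⟩
        have hd : dN (e0.symm y) (e0.symm y0) < ε - dN (e0.symm y0) m0 := by
          apply hJspec y0 hy0 (e0.symm y)
          intro s hs
          rw [congrFun (hval y) s, congrFun (hval y0) s]
          exact hcyl s hs
        have hult := dN_ultra (e0.symm y) (e0.symm y0) m0
        have h0 := dN_nonneg (e0.symm y0) m0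
        show dN (e0.symm y) m0 < ε
        have hmax : max (dN (e0.symm y) (e0.symm y0)) (dN (e0.symm y0) m0) < ε :=
          max_lt (by linarith) (by simpa using hy0)
        exact lt_of_le_of_lt hult hmax
    rw [hSeq]
    exact (isOpen_iUnion fun y => isOpen_iUnion fun hy =>
      cyl_isOpen _ _).preimage continuous_subtype_val
  exact ⟨⟨e0, hcont1, hcont2⟩, fun m => rfl⟩

end BetaDF
end
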